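/- arXiv:1911.08887 — 4 statements merged into one kernel-verified Lean document; each statement's English description precedes it below -/
import Mathlib

section
/- For all γ ∈ (0,1] and all integers k ≥ 2, t ≥ 1, ℓ ≥ 1 there exists m₀ ∈ ℕ such that for every m ≥ m₀ there exists n₀ ∈ ℕ with the following property. Let n ≥ n₀ with ℓ ∣ n, let G be an (n,k,γ)-graph, let 𝒫 be a partition of V(G) into sets of size ℓ, and let 𝒫₀ ⊆ 𝒫 with |𝒫₀| = t. If 𝒫′ ⊆ 𝒫 \ 𝒫₀ of size m is chosen uniformly at random, then with probability at least 1 − e^{−√m}, the induced subgraph G[⋃(𝒫₀ ∪ 𝒫′)] has minimum codegree at least (1/2 + γ/2)·ℓ(m+t). -/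
open scoped Classical

lemma count_supersets {α : Type*} [DecidableEq α] (Q T : Finset α) (r : ℕ)
    (hT : T ⊆ Q) (hr : T.card ≤ r) :
    (((Q.powersetCard r).filter (fun R => T ⊆ R)).card : ℕ)
      = (Q.card - T.card).choose (r - T.card) := by
  rw [← Finset.card_sdiff_of_subset hT, ← Finset.card_powersetCard (r - T.card) (Q \ T)]
  apply Finset.card_bij' (fun R _ => R \ T) (fun R _ => R ∪ T)
  · intro R hR
    simp only [Finset.mem_filter, Finset.mem_powersetCard] at hR
    simp only [Finset.mem_powersetCard]
    exact ⟨Finset.sdiff_subset_sdiff hR.1.1 le_rfl,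
      by rw [Finset.card_sdiff_of_subset hR.2, hR.1.2]⟩
  · intro R hR
    simp only [Finset.mem_powersetCard] at hR
    have hdisj : Disjoint R T := Finset.disjoint_of_subset_left hR.1 Finset.sdiff_disjoint
    simp only [Finset.mem_filter, Finset.mem_powersetCard]
    refine ⟨⟨Finset.union_subset (hR.1.trans Finset.sdiff_subset) hT, ?_⟩,
      Finset.subset_union_right⟩
    rw [Finset.card_union_of_disjoint hdisj, hR.2]
    omega
  · intro R hR
    simp only [Finset.mem_filter] at hR
    exact Finset.sdiff_union_of_subset hR.2
  · intro R hR
    simp only [Finset.mem_powersetCard] at hR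
    have hdisj : Disjoint R T := Finset.disjoint_of_subset_left hR.1 Finset.sdiff_disjoint
    exact Finset.union_sdiff_cancel_right hdisj

lemma choose_ratio : ∀ (s N r : ℕ), s ≤ r → r ≤ N → 0 < N →
    ((N - s).choose (r - s) : ℝ) ≤ (N.choose r : ℝ) * ((r : ℝ) / N) ^ s := by
  intro s
  induction s with
  | zero => intro N r _ _ _; simp
  | succ s ih =>
    intro N r hsr hrN hN
    have hr1 : 1 ≤ r := le_trans (Nat.succ_le_succ (Nat.zero_le s)) hsr
    have hN1 : 1 ≤ N := le_trans hr1 hrN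
    have hnat : N * (N-1).choose (r-1) = N.choose r * r := by
      have := Nat.add_one_mul_choose_eq (N-1) (r-1)
      simp only [Nat.succ_eq_add_one, Nat.sub_add_cancel hN1, Nat.sub_add_cancel hr1] at this
      exact this
    have key : (N : ℝ) * ((N-1).choose (r-1) : ℝ) = (N.choose r : ℝ) * (r : ℝ) := by
      exact_mod_cast congrArg (Nat.cast (R := ℝ)) hnat
    have h1 : N - (s+1) = (N-1) - s := by omega
    have h2 : r - (s+1) = (r-1) - s := by omega
    rw [h1, h2]
    rcases Nat.eq_zero_or_pos s with hs | hs
    · subst hs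
      simp only [Nat.sub_zero, pow_one]
      have : ((N-1).choose (r-1) : ℝ) = (N.choose r : ℝ) * r / N := by
        field_simp at key ⊢; linarith [key]
      rw [this]; ring_nf; rfl
    · have hr2 : 2 ≤ r := by omega
      have hN2 : 2 ≤ N := by omega
      have hih := ih (N-1) (r-1) (by omega) (by omega) (by omega)
      have hmono : ((r-1 : ℕ) : ℝ) / ((N-1 : ℕ) : ℝ) ≤ (r : ℝ) / N := by
        rw [div_le_div_iff₀ (by push_cast; norm_num; omega) (by positivity)]
        push_cast [Nat.cast_sub (by omega : 1 ≤ r), Nat.cast_sub hN1]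
        have : (r:ℝ) ≤ N := Nat.cast_le.mpr hrN
        nlinarith
      have hnn : (0:ℝ) ≤ ((r-1 : ℕ) : ℝ) / ((N-1 : ℕ) : ℝ) := by positivity
      calc ((( N-1) - s).choose ((r-1) - s) : ℝ)
          ≤ ((N-1).choose (r-1) : ℝ) * (((r-1:ℕ):ℝ) / ((N-1:ℕ):ℝ)) ^ s := hih
        _ ≤ ((N-1).choose (r-1) : ℝ) * ((r:ℝ)/N) ^ s := by
            apply mul_le_mul_of_nonneg_left (pow_le_pow_left₀ hnn hmono s) (by positivity)
        _ = ((N.choose r : ℝ) * (r:ℝ)/N) * ((r:ℝ)/N) ^ s := by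
            have h3 : ((N-1).choose (r-1) : ℝ) = (N.choose r : ℝ) * (r:ℝ)/N := by
              field_simp
              linarith [key]
            rw [h3]
        _ = (N.choose r : ℝ) * ((r:ℝ)/N) ^ (s+1) := by ring

open Finset Real

lemma exp_interp {x M : ℝ} (hx0 : 0 ≤ x) (hx1 : x ≤ 1) :
    Real.exp (x * M) ≤ 1 + x * (Real.exp M - 1) := by
  have h := convexOn_exp.2 (Set.mem_univ (0:ℝ)) (Set.mem_univ M)
    (by linarith : (0:ℝ) ≤ 1 - x) hx0 (by ring)
  simp only [smul_eq_mul, mul_zero, zero_add, Real.exp_zero] at h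
  calc Real.exp (x * M) ≤ (1-x) * 1 + x * Real.exp M := h
    _ = 1 + x * (Real.exp M - 1) := by ring

lemma chernoff_count {α : Type*} [DecidableEq α] (Q : Finset α) (r : ℕ) (hr : r ≤ Q.card)
    (d : α → ℝ) (L β lam : ℝ) (hL : 0 < L)
    (hd0 : ∀ a ∈ Q, 0 ≤ d a) (hdL : ∀ a ∈ Q, d a ≤ L)
    (hβ0 : 0 ≤ β) (hsum : ∑ a ∈ Q, d a ≤ β * L * Q.card) (hlam : 0 ≤ lam) :
    ∑ R ∈ Q.powersetCard r, Real.exp (lam * ∑ a ∈ R, d a)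
      ≤ (Q.card.choose r : ℝ) * Real.exp (β * r * (Real.exp (lam * L) - 1)) := by
  set N := Q.card with hN
  rcases Nat.eq_zero_or_pos N with hN0 | hNpos
  · have hQ : Q = ∅ := Finset.card_eq_zero.mp hN0
    have hr0 : r = 0 := by omega
    subst hQ hr0
    simp
  set c : ℝ := Real.exp (lam * L) - 1 with hc
  have hc0 : 0 ≤ c := sub_nonneg.2 (Real.one_le_exp (by positivity))
  set y : α → ℝ := fun a => d a / L with hy
  have hy0 : ∀ a ∈ Q, 0 ≤ y a := fun a ha => div_nonneg (hd0 a ha) hL.le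
  have hy1 : ∀ a ∈ Q, y a ≤ 1 := fun a ha => (div_le_one hL).2 (hdL a ha)
  -- step 1: pointwise bound
  have step1 : ∀ R ∈ Q.powersetCard r, Real.exp (lam * ∑ a ∈ R, d a)
      ≤ ∏ a ∈ R, (1 + c * y a) := by
    intro R hR
    have hRQ : R ⊆ Q := (Finset.mem_powersetCard.1 hR).1
    rw [Finset.mul_sum, Real.exp_sum]
    apply Finset.prod_le_prod (fun a _ => (Real.exp_pos _).le)
    intro a ha
    have := exp_interp (hy0 a (hRQ ha)) (hy1 a (hRQ ha)) (M := lam * L)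
    calc Real.exp (lam * d a) = Real.exp (y a * (lam * L)) := by
          rw [hy]; congr 1; field_simp
      _ ≤ 1 + y a * (Real.exp (lam*L) - 1) := this
      _ = 1 + c * y a := by rw [hc]; ring
  -- step 2: expand products and swap sums
  have step2 : ∑ R ∈ Q.powersetCard r, ∏ a ∈ R, (1 + c * y a)
      = ∑ T ∈ Q.powerset, (∏ a ∈ T, (c * y a)) *
          (((Q.powersetCard r).filter (fun R => T ⊆ R)).card : ℝ) := by
    have expand : ∀ R ∈ Q.powersetCard r, ∏ a ∈ R, (1 + c * y a)
        = ∑ T ∈ Q.powerset, (if T ⊆ R then ∏ a ∈ T, (c * y a) else 0) := by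
      intro R hR
      have hRQ : R ⊆ Q := (Finset.mem_powersetCard.1 hR).1
      have : ∏ a ∈ R, (c * y a + 1) = ∑ T ∈ R.powerset, (∏ a ∈ T, (c * y a)) * ∏ a ∈ R \ T, 1 :=
        Finset.prod_add _ _ R
      simp only [Finset.prod_const_one, mul_one] at this
      have hfil : Q.powerset.filter (fun T => T ⊆ R) = R.powerset := by
        ext T
        simp only [Finset.mem_filter, Finset.mem_powerset]
        exact ⟨fun h => h.2, fun h => ⟨h.trans hRQ, h⟩⟩
      calc ∏ a ∈ R, (1 + c * y a) = ∏ a ∈ R, (c * y a + 1) := by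
            apply Finset.prod_congr rfl; intros; ring
        _ = ∑ T ∈ R.powerset, ∏ a ∈ T, (c * y a) := this
        _ = ∑ T ∈ Q.powerset.filter (fun T => T ⊆ R), ∏ a ∈ T, (c * y a) := by rw [hfil]
        _ = ∑ T ∈ Q.powerset, (if T ⊆ R then ∏ a ∈ T, (c * y a) else 0) := by
            rw [Finset.sum_filter]
    calc ∑ R ∈ Q.powersetCard r, ∏ a ∈ R, (1 + c * y a)
        = ∑ R ∈ Q.powersetCard r, ∑ T ∈ Q.powerset,
            (if T ⊆ R then ∏ a ∈ T, (c * y a) else 0) := Finset.sum_congr rfl expand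
      _ = ∑ T ∈ Q.powerset, ∑ R ∈ Q.powersetCard r,
            (if T ⊆ R then ∏ a ∈ T, (c * y a) else 0) := Finset.sum_comm
      _ = ∑ T ∈ Q.powerset, (∏ a ∈ T, (c * y a)) *
            (((Q.powersetCard r).filter (fun R => T ⊆ R)).card : ℝ) := by
          apply Finset.sum_congr rfl
          intro T _
          rw [← Finset.sum_filter, Finset.sum_const, nsmul_eq_mul, mul_comm]
  -- step 3 : bound the superset counts
  have wnn : ∀ T ∈ Q.powerset, 0 ≤ ∏ a ∈ T, (c * y a) := by
    intro T hT
    exact Finset.prod_nonneg fun a ha => mul_nonneg hc0 (hy0 a (Finset.mem_powerset.1 hT ha))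
  have step3 : ∑ T ∈ Q.powerset, (∏ a ∈ T, (c * y a)) *
        (((Q.powersetCard r).filter (fun R => T ⊆ R)).card : ℝ)
      ≤ (N.choose r : ℝ) * ∑ T ∈ Q.powerset, ∏ a ∈ T, ((r:ℝ)/N * (c * y a)) := by
    rw [Finset.mul_sum]
    apply Finset.sum_le_sum
    intro T hT
    have hTQ : T ⊆ Q := Finset.mem_powerset.1 hT
    have hprodeq : ∏ a ∈ T, ((r:ℝ)/N * (c * y a))
        = ((r:ℝ)/N) ^ T.card * ∏ a ∈ T, (c * y a) := by
      rw [Finset.prod_mul_distrib, Finset.prod_const]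
    rw [hprodeq]
    rcases le_or_gt T.card r with hTr | hTr
    · rw [count_supersets Q T r hTQ hTr]
      calc (∏ a ∈ T, (c * y a)) * (((Q.card - T.card).choose (r - T.card) : ℕ) : ℝ)
          ≤ (∏ a ∈ T, (c * y a)) * ((N.choose r : ℝ) * ((r:ℝ)/N) ^ T.card) := by
            apply mul_le_mul_of_nonneg_left _ (wnn T hT)
            exact choose_ratio T.card N r hTr hr hNpos
        _ = (N.choose r : ℝ) * (((r:ℝ)/N) ^ T.card * ∏ a ∈ T, (c * y a)) := by ring
    · have hemp : ((Q.powersetCard r).filter (fun R => T ⊆ R)) = ∅ := by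
        apply Finset.filter_false_of_mem
        intro R hR hTR
        have := Finset.card_le_card hTR
        rw [(Finset.mem_powersetCard.1 hR).2] at this
        omega
      rw [hemp]
      simp only [Finset.card_empty, Nat.cast_zero, mul_zero]
      exact mul_nonneg (by positivity) (mul_nonneg (by positivity) (wnn T hT))
  -- step 4 : final product bound
  have step4 : ∑ T ∈ Q.powerset, ∏ a ∈ T, ((r:ℝ)/N * (c * y a))
      ≤ Real.exp (β * r * c) := by
    have hprod : ∑ T ∈ Q.powerset, ∏ a ∈ T, ((r:ℝ)/N * (c * y a))
        = ∏ a ∈ Q, (1 + (r:ℝ)/N * (c * y a)) := by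
      have := Finset.prod_add (fun a => (r:ℝ)/N * (c * y a)) (fun _ => (1:ℝ)) Q
      simp only [Finset.prod_const_one, mul_one] at this
      rw [show ∏ a ∈ Q, (1 + (r:ℝ)/N * (c * y a)) = ∏ a ∈ Q, ((r:ℝ)/N * (c * y a) + 1) from
        Finset.prod_congr rfl (by intros; ring), this]
    rw [hprod]
    have h1 : ∏ a ∈ Q, (1 + (r:ℝ)/N * (c * y a)) ≤ ∏ a ∈ Q, Real.exp ((r:ℝ)/N * (c * y a)) := by
      apply Finset.prod_le_prod
      · intro a ha
        have : 0 ≤ (r:ℝ)/N * (c * y a) :=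
          mul_nonneg (by positivity) (mul_nonneg hc0 (hy0 a ha))
        linarith
      · intro a ha
        have := Real.add_one_le_exp ((r:ℝ)/N * (c * y a))
        linarith
    have h2 : ∏ a ∈ Q, Real.exp ((r:ℝ)/N * (c * y a)) = Real.exp (∑ a ∈ Q, (r:ℝ)/N * (c * y a)) :=
      (Real.exp_sum _ _).symm
    have h3 : ∑ a ∈ Q, (r:ℝ)/N * (c * y a) ≤ β * r * c := by
      have hys : ∑ a ∈ Q, y a ≤ β * N := by
        have : ∑ a ∈ Q, y a = (∑ a ∈ Q, d a) / L := by
          rw [Finset.sum_div]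
        rw [this, div_le_iff₀ hL]
        calc ∑ a ∈ Q, d a ≤ β * L * N := hsum
          _ = β * (N:ℝ) * L := by ring
      calc ∑ a ∈ Q, (r:ℝ)/N * (c * y a) = (r:ℝ)/N * c * ∑ a ∈ Q, y a := by
            rw [Finset.mul_sum]; apply Finset.sum_congr rfl; intros; ring
        _ ≤ (r:ℝ)/N * c * (β * N) := by
            apply mul_le_mul_of_nonneg_left hys (by positivity)
        _ = β * r * c * ((N:ℝ)/N) := by ring
        _ = β * r * c := by
            rw [div_self (by exact_mod_cast hNpos.ne' : (N:ℝ) ≠ 0), mul_one]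
    calc ∏ a ∈ Q, (1 + (r:ℝ)/N * (c * y a)) ≤ ∏ a ∈ Q, Real.exp ((r:ℝ)/N * (c * y a)) := h1
      _ = Real.exp (∑ a ∈ Q, (r:ℝ)/N * (c * y a)) := h2
      _ ≤ Real.exp (β * r * c) := Real.exp_le_exp.2 h3
  calc ∑ R ∈ Q.powersetCard r, Real.exp (lam * ∑ a ∈ R, d a)
      ≤ ∑ R ∈ Q.powersetCard r, ∏ a ∈ R, (1 + c * y a) := Finset.sum_le_sum step1
    _ = ∑ T ∈ Q.powerset, (∏ a ∈ T, (c * y a)) *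
          (((Q.powersetCard r).filter (fun R => T ⊆ R)).card : ℝ) := step2
    _ ≤ (N.choose r : ℝ) * ∑ T ∈ Q.powerset, ∏ a ∈ T, ((r:ℝ)/N * (c * y a)) := step3
    _ ≤ (N.choose r : ℝ) * Real.exp (β * r * c) := by
        apply mul_le_mul_of_nonneg_left step4 (by positivity)

lemma rate_pos {β τ : ℝ} (hβ : 0 < β) (hβτ : β < τ) :
    0 < τ * Real.log (τ / β) - τ + β := by
  have hτ : 0 < τ := hβ.trans hβτ
  have h1 : Real.log (β / τ) < β / τ - 1 :=
    Real.log_lt_sub_one_of_pos (by positivity) (by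
      intro h
      have : β = τ := by field_simp at h; linarith
      linarith)
  have h2 : Real.log (β / τ) = - Real.log (τ / β) := by
    rw [← Real.log_inv]
    congr 1
    field_simp
  rw [h2] at h1
  have h3 : τ * (β / τ - 1) = β - τ := by field_simp
  nlinarith

lemma tail_count {α : Type*} [DecidableEq α] (Q : Finset α) (r : ℕ) (hr : r ≤ Q.card)
    (d : α → ℝ) (L β τ : ℝ) (hL : 0 < L)
    (hd0 : ∀ a ∈ Q, 0 ≤ d a) (hdL : ∀ a ∈ Q, d a ≤ L)
    (hβ : 0 < β) (hβτ : β < τ)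
    (hsum : ∑ a ∈ Q, d a ≤ β * L * Q.card) :
    ((((Q.powersetCard r).filter (fun R => τ * L * r ≤ ∑ a ∈ R, d a)).card : ℝ))
      ≤ (Q.card.choose r : ℝ) *
          Real.exp (-(r:ℝ) * (τ * Real.log (τ / β) - τ + β)) := by
  have hτ : 0 < τ := hβ.trans hβτ
  set lam : ℝ := Real.log (τ / β) / L with hlam
  have hlog : 0 < Real.log (τ / β) := Real.log_pos (by rw [lt_div_iff₀ hβ] at *; linarith)
  have hlam0 : 0 ≤ lam := by positivity
  have hexpL : Real.exp (lam * L) = τ / β := by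
    rw [hlam, div_mul_cancel₀ _ hL.ne', Real.exp_log (by positivity)]
  have key := chernoff_count Q r hr d L β lam hL hd0 hdL hβ.le hsum hlam0
  have hfl : ∀ R ∈ (Q.powersetCard r).filter (fun R => τ * L * r ≤ ∑ a ∈ R, d a),
      Real.exp (lam * (τ * L * r)) ≤ Real.exp (lam * ∑ a ∈ R, d a) := by
    intro R hR
    exact Real.exp_le_exp.2 (mul_le_mul_of_nonneg_left (Finset.mem_filter.1 hR).2 hlam0)
  have hcardbound : (((Q.powersetCard r).filter (fun R => τ * L * r ≤ ∑ a ∈ R, d a)).card : ℝ)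
      * Real.exp (lam * (τ * L * r))
      ≤ ∑ R ∈ Q.powersetCard r, Real.exp (lam * ∑ a ∈ R, d a) := by
    calc (((Q.powersetCard r).filter (fun R => τ * L * r ≤ ∑ a ∈ R, d a)).card : ℝ)
        * Real.exp (lam * (τ * L * r))
        = ∑ _R ∈ (Q.powersetCard r).filter (fun R => τ * L * r ≤ ∑ a ∈ R, d a),
            Real.exp (lam * (τ * L * r)) := by rw [Finset.sum_const, nsmul_eq_mul]
      _ ≤ ∑ R ∈ (Q.powersetCard r).filter (fun R => τ * L * r ≤ ∑ a ∈ R, d a),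
            Real.exp (lam * ∑ a ∈ R, d a) := Finset.sum_le_sum hfl
      _ ≤ ∑ R ∈ Q.powersetCard r, Real.exp (lam * ∑ a ∈ R, d a) :=
          Finset.sum_le_sum_of_subset_of_nonneg (Finset.filter_subset _ _)
            (fun _ _ _ => (Real.exp_pos _).le)
  have hfinal : (((Q.powersetCard r).filter (fun R => τ * L * r ≤ ∑ a ∈ R, d a)).card : ℝ)
      ≤ (Q.card.choose r : ℝ) * Real.exp (β * r * (Real.exp (lam*L) - 1))
        / Real.exp (lam * (τ * L * r)) := by
    rw [le_div_iff₀ (Real.exp_pos _)]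
    exact hcardbound.trans key
  refine hfinal.trans (le_of_eq ?_)
  rw [mul_div_assoc, ← Real.exp_sub, hexpL]
  congr 1
  have h5 : lam * (τ * L * r) = τ * (r:ℝ) * Real.log (τ / β) := by
    rw [hlam]; field_simp
  rw [h5]
  have h6 : β * (r:ℝ) * (τ / β - 1) = (r:ℝ) * (τ - β) := by
    field_simp
  rw [h6]
  ring

def NSet {n : ℕ} (E : Finset (Finset (Fin n))) (S : Finset (Fin n)) : Finset (Fin n) :=
  Finset.univ.filter (fun v => v ∉ S ∧ insert v S ∈ E)

lemma mem_NSet {n : ℕ} {E : Finset (Finset (Fin n))} {S : Finset (Fin n)} {v : Fin n} :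
    v ∈ NSet E S ↔ v ∉ S ∧ insert v S ∈ E := by
  simp [NSet]

lemma filter_subset_image_NS {n : ℕ} (E : Finset (Finset (Fin n))) (k : ℕ) (hk : 1 ≤ k)
    (hE : ∀ e ∈ E, e.card = k) (S : Finset (Fin n)) (hS : S.card = k - 1) :
    E.filter (fun e => S ⊆ e) ⊆ (NSet E S).image (fun v => insert v S) := by
  intro e he
  rw [Finset.mem_filter] at he
  obtain ⟨heE, hSe⟩ := he
  have hcard : (e \ S).card = 1 := by
    rw [Finset.card_sdiff_of_subset hSe, hE e heE, hS]; omega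
  obtain ⟨v, hv⟩ := Finset.card_eq_one.1 hcard
  have hvmem : v ∈ e \ S := by rw [hv]; exact Finset.mem_singleton_self v
  have hvS : v ∉ S := (Finset.mem_sdiff.1 hvmem).2
  have hins : insert v S = e := by
    have h1 : S ∪ e \ S = e := Finset.union_sdiff_of_subset hSe
    rw [hv] at h1
    rw [Finset.insert_eq, Finset.union_comm]
    exact h1
  exact Finset.mem_image.2 ⟨v, mem_NSet.2 ⟨hvS, hins ▸ heE⟩, hins⟩

lemma deg_le_NS {n : ℕ} (E : Finset (Finset (Fin n))) (k : ℕ) (hk : 1 ≤ k)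
    (hE : ∀ e ∈ E, e.card = k) (S : Finset (Fin n)) (hS : S.card = k - 1) :
    (E.filter (fun e => S ⊆ e)).card ≤ (NSet E S).card :=
  (Finset.card_le_card (filter_subset_image_NS E k hk hE S hS)).trans Finset.card_image_le

lemma sqrt_succ_le (m : ℕ) : Real.sqrt ((m:ℝ)+1) ≤ Real.sqrt m + 1 := by
  have h1 : ((m:ℝ)+1) ≤ (Real.sqrt m + 1)^2 := by
    have := Real.sq_sqrt (by positivity : (0:ℝ) ≤ (m:ℝ))
    nlinarith [Real.sqrt_nonneg (m:ℝ)]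
  calc Real.sqrt ((m:ℝ)+1) ≤ Real.sqrt ((Real.sqrt m + 1)^2) := Real.sqrt_le_sqrt h1
    _ = Real.sqrt m + 1 := Real.sqrt_sq (by positivity)

lemma log_le_two_sqrt (m : ℕ) : Real.log ((m:ℝ)+1) ≤ 2 * Real.sqrt m := by
  have h0 : (0:ℝ) < (m:ℝ)+1 := by positivity
  have h1 : Real.log (Real.sqrt ((m:ℝ)+1)) ≤ Real.sqrt ((m:ℝ)+1) - 1 :=
    Real.log_le_sub_one_of_pos (Real.sqrt_pos.2 h0)
  have h2 : Real.log (Real.sqrt ((m:ℝ)+1)) = Real.log ((m:ℝ)+1) / 2 :=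
    Real.log_sqrt h0.le
  have h3 := sqrt_succ_le m
  linarith

lemma final_numeric (k : ℕ) (hk : 1 ≤ k) (Kc h : ℝ) (hKc : 1 ≤ Kc) (hh : 0 < h) (m : ℕ)
    (hm1 : (2*(2*(k:ℝ)+1)/h)^2 ≤ (m:ℝ)) (hm2 : 2*(Real.log Kc + (k:ℝ)*h)/h ≤ (m:ℝ)) :
    Kc * ((m:ℝ)+1)^k * Real.exp (-((m:ℝ)-(k:ℝ))*h) ≤ Real.exp (-Real.sqrt m) := by
  have hKc0 : 0 < Kc := by linarith
  have hm0 : (0:ℝ) ≤ (m:ℝ) := by positivity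
  have hsq : Real.sqrt ((2*(2*(k:ℝ)+1)/h)^2) ≤ Real.sqrt m := Real.sqrt_le_sqrt hm1
  have hsq2 : 2*(2*(k:ℝ)+1)/h ≤ Real.sqrt m := by
    rwa [Real.sqrt_sq (by positivity)] at hsq
  have hsm : Real.sqrt m * Real.sqrt m = (m:ℝ) := Real.mul_self_sqrt hm0
  have hlogm := log_le_two_sqrt m
  -- key : log Kc + k * log (m+1) + sqrt m ≤ (m - k) * h
  have key : Real.log Kc + (k:ℝ) * Real.log ((m:ℝ)+1) + Real.sqrt m ≤ ((m:ℝ)-(k:ℝ))*h := by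
    have hA : (2*(k:ℝ)+1) * Real.sqrt m ≤ (h/2) * (m:ℝ) := by
      have := mul_le_mul_of_nonneg_right hsq2 (Real.sqrt_nonneg (m:ℝ))
      rw [hsm] at this
      calc (2*(k:ℝ)+1) * Real.sqrt m = (h/2) * ((2*(2*(k:ℝ)+1)/h) * Real.sqrt m) := by
            field_simp
        _ ≤ (h/2) * (m:ℝ) := by
            apply mul_le_mul_of_nonneg_left _ (by positivity)
            linarith
    have hB : Real.log Kc + (k:ℝ)*h ≤ (h/2) * (m:ℝ) := by
      calc Real.log Kc + (k:ℝ)*h = (h/2) * (2*(Real.log Kc + (k:ℝ)*h)/h) := by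
            field_simp
        _ ≤ (h/2) * (m:ℝ) := mul_le_mul_of_nonneg_left hm2 (by positivity)
    have hC : (k:ℝ) * Real.log ((m:ℝ)+1) ≤ (k:ℝ) * (2 * Real.sqrt m) :=
      mul_le_mul_of_nonneg_left hlogm (by positivity)
    nlinarith
  have lhs_eq : Kc * ((m:ℝ)+1)^k * Real.exp (-((m:ℝ)-(k:ℝ))*h)
      = Real.exp (Real.log Kc + (k:ℝ) * Real.log ((m:ℝ)+1) - ((m:ℝ)-(k:ℝ))*h) := by
    rw [show Real.log Kc + (k:ℝ) * Real.log ((m:ℝ)+1) - ((m:ℝ)-(k:ℝ))*h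
        = Real.log Kc + ((k:ℝ) * Real.log ((m:ℝ)+1) + (-((m:ℝ)-(k:ℝ))*h)) by ring]
    rw [Real.exp_add, Real.exp_add, Real.exp_log hKc0, mul_assoc]
    congr 1
    congr 1
    rw [← Real.log_pow, Real.exp_log (by positivity)]
  rw [lhs_eq]
  apply Real.exp_le_exp.2
  linarith
set_option maxHeartbeats 2000000 in
/-- Proposition 2.4 (random sets of partition classes inherit the Dirac condition).
The random `m`-subset `𝒫'` of `𝒫 \ 𝒫₀` is chosen uniformly, so "with probability at
least `1 − e^{−√m}`" is expressed by counting the good `m`-subsets among all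
`m`-subsets of `𝒫 \ 𝒫₀`. -/
theorem stmt_3 :
    ∀ γ : ℝ, 0 < γ → γ ≤ 1 →
    ∀ k t l : ℕ, 2 ≤ k → 1 ≤ t → 1 ≤ l →
    ∃ m₀ : ℕ, ∀ m : ℕ, m₀ ≤ m →
    ∃ n₀ : ℕ, ∀ n : ℕ, n₀ ≤ n → l ∣ n →
    ∀ E : Finset (Finset (Fin n)),
      -- G is a k-graph
      (∀ e ∈ E, e.card = k) →
      -- G is an (n,k,γ)-graph
      (∀ S : Finset (Fin n), S.card = k - 1 →
        (1/2 + γ) * (n : ℝ) ≤ ((E.filter (fun e => S ⊆ e)).card : ℝ)) →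
    -- 𝒫 is a partition of V(G) into sets of size l
    ∀ P : Finset (Finset (Fin n)),
      (∀ A ∈ P, A.card = l) →
      (P : Set (Finset (Fin n))).PairwiseDisjoint id →
      P.biUnion id = Finset.univ →
    -- 𝒫₀ ⊆ 𝒫 with |𝒫₀| = t
    ∀ P₀ : Finset (Finset (Fin n)), P₀ ⊆ P → P₀.card = t →
      -- at least a (1 − e^{−√m})-fraction of the m-subsets 𝒫' of 𝒫 \ 𝒫₀ are such that
      -- G[⋃(𝒫₀ ∪ 𝒫')] has minimum codegree at least (1/2 + γ/2)·l·(m+t)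
      (1 - Real.exp (-Real.sqrt m)) * ((((P \ P₀).powersetCard m).card : ℝ)) ≤
        (((((P \ P₀).powersetCard m)).filter (fun P' =>
            ∀ S : Finset (Fin n), S ⊆ (P₀ ∪ P').biUnion id → S.card = k - 1 →
              (1/2 + γ/2) * ((l : ℝ) * ((m : ℝ) + (t : ℝ))) ≤
                ((E.filter (fun e => S ⊆ e ∧ e ⊆ (P₀ ∪ P').biUnion id)).card : ℝ))).card : ℝ) := by
  intro γ hγ0 hγ1 k t l hk ht hl
  rcases le_or_gt (1/2 : ℝ) γ with hγhalf | hγhalf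
  · -- degenerate case : hypotheses are contradictory for n ≥ k
    refine ⟨1, fun m _ => ⟨k, fun n hn _ E hE hdeg P _ _ _ P₀ _ _ => ?_⟩⟩
    exfalso
    have hncard : k - 1 ≤ (Finset.univ : Finset (Fin n)).card := by
      rw [Finset.card_univ, Fintype.card_fin]; omega
    obtain ⟨S, _, hScard⟩ := Finset.exists_subset_card_eq hncard
    have h1 := hdeg S hScard
    have h2 : (E.filter (fun e => S ⊆ e)).card ≤ n - 1 := by
      have hd := deg_le_NS E k (by omega) hE S hScard
      have hsub : NSet E S ⊆ Finset.univ \ S := by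
        intro v hv
        exact Finset.mem_sdiff.2 ⟨Finset.mem_univ v, (mem_NSet.1 hv).1⟩
      have hcd : (Finset.univ \ S).card = n - (k-1) := by
        rw [Finset.card_sdiff_of_subset (Finset.subset_univ S), hScard, Finset.card_univ,
          Fintype.card_fin]
      have := (hd.trans (Finset.card_le_card hsub)).trans (le_of_eq hcd)
      omega
    have h3 : ((E.filter (fun e => S ⊆ e)).card : ℝ) ≤ (n:ℝ) - 1 := by
      have hn1 : 1 ≤ n := by omega
      calc ((E.filter (fun e => S ⊆ e)).card : ℝ) ≤ ((n - 1 : ℕ) : ℝ) := by exact_mod_cast h2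
        _ = (n:ℝ) - 1 := by push_cast [Nat.cast_sub hn1]; ring
    have hnpos : (1:ℝ) ≤ (n:ℝ) := by exact_mod_cast (by omega : 1 ≤ n)
    nlinarith
  · -- main case : γ < 1/2
    set β : ℝ := 1/2 - 7*γ/8 with hβdef
    set τ : ℝ := 1/2 - 5*γ/8 with hτdef
    have hβ0 : 0 < β := by rw [hβdef]; linarith
    have hβτ : β < τ := by rw [hβdef, hτdef]; linarith
    have hτ1 : τ < 1 := by rw [hτdef]; linarith
    set hrate : ℝ := τ * Real.log (τ / β) - τ + β with hratedef
    have hrate0 : 0 < hrate := rate_pos hβ0 hβτ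
    set Kc : ℝ := (k:ℝ) * ((l*(t+k) : ℕ):ℝ)^k with hKcdef
    have hKc1 : 1 ≤ Kc := by
      rw [hKcdef]
      have h1 : (1:ℝ) ≤ (k:ℝ) := by exact_mod_cast (by omega : 1 ≤ k)
      have h2 : (1:ℝ) ≤ ((l*(t+k) : ℕ):ℝ) := by
        have : 1 ≤ l*(t+k) := Nat.one_le_iff_ne_zero.2 (by positivity)
        exact_mod_cast this
      calc (1:ℝ) = 1 * 1 := by ring
        _ ≤ (k:ℝ) * ((l*(t+k) : ℕ):ℝ)^k := by
            apply mul_le_mul h1 (one_le_pow₀ h2) zero_le_one (by positivity)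
    refine ⟨max (max (Nat.ceil ((2*(2*(k:ℝ)+1)/hrate)^2))
        (Nat.ceil (2*(Real.log Kc + (k:ℝ)*hrate)/hrate)))
        (max (k+1) (Nat.ceil (8*((k:ℝ)+(t:ℝ))/γ))), fun m hm => ?_⟩
    refine ⟨l * (t + m + Nat.ceil (8*((k:ℝ)+(t:ℝ))/γ) + k + 1),
        fun n hn hdvd E hE hdeg P hPl hPdisj hPuniv P₀ hP₀P hP₀card => ?_⟩
    -- unpack the bound on m
    have hm1 : (2*(2*(k:ℝ)+1)/hrate)^2 ≤ (m:ℝ) := by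
      have := (le_max_left _ _).trans ((le_max_left _ _).trans hm)
      exact_mod_cast (Nat.ceil_le.1 this)
    have hm2 : 2*(Real.log Kc + (k:ℝ)*hrate)/hrate ≤ (m:ℝ) := by
      have := (le_max_right _ _).trans ((le_max_left _ _).trans hm)
      exact_mod_cast (Nat.ceil_le.1 this)
    have hmk : k + 1 ≤ m := (le_max_left _ _).trans ((le_max_right _ _).trans hm)
    have hmγ : 8*((k:ℝ)+(t:ℝ))/γ ≤ (m:ℝ) := by
      have := (le_max_right _ _).trans ((le_max_right _ _).trans hm)
      exact_mod_cast (Nat.ceil_le.1 this)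
    -- basic structure of the partition
    have hPcard : P.card * l = n := by
      have h1 : (P.biUnion id).card = ∑ A ∈ P, A.card := by
        apply Finset.card_biUnion
        intro A hA B hB hAB
        exact hPdisj hA hB hAB
      rw [hPuniv] at h1
      rw [Finset.card_univ, Fintype.card_fin] at h1
      rw [Finset.sum_congr rfl hPl, Finset.sum_const, smul_eq_mul] at h1
      omega
    set Q : Finset (Finset (Fin n)) := P \ P₀ with hQdef
    set N : ℕ := Q.card with hNdef
    have hQP : Q ⊆ P := Finset.sdiff_subset
    have htP : t ≤ P.card := hP₀card ▸ Finset.card_le_card hP₀P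
    have hNcard : N = P.card - t := by rw [hNdef, hQdef, Finset.card_sdiff_of_subset hP₀P, hP₀card]
    have hPN : P.card = N + t := by omega
    have hPbig : t + m + Nat.ceil (8*((k:ℝ)+(t:ℝ))/γ) + k + 1 ≤ P.card := by
      have : l * (t + m + Nat.ceil (8*((k:ℝ)+(t:ℝ))/γ) + k + 1) ≤ P.card * l := by omega
      nlinarith [this, hl]
    have hNm : m ≤ N := by omega
    have hNγ : 8*((k:ℝ)+(t:ℝ))/γ ≤ (N:ℝ) := by
      have h1 : Nat.ceil (8*((k:ℝ)+(t:ℝ))/γ) ≤ N := by omega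
      calc 8*((k:ℝ)+(t:ℝ))/γ ≤ (Nat.ceil (8*((k:ℝ)+(t:ℝ))/γ) : ℝ) := Nat.le_ceil _
        _ ≤ (N:ℝ) := by exact_mod_cast h1
    have hnlNt : (n:ℝ) = (l:ℝ) * ((N:ℝ) + (t:ℝ)) := by
      have : (N + t) * l = n := by rw [← hPN]; exact hPcard
      push_cast [← this]; ring
    have hl0 : (0:ℝ) < (l:ℝ) := by exact_mod_cast hl
    -- the tail bound for each (j, F, S)
    have hTail : ∀ j ∈ Finset.range k, ∀ F ∈ Q.powersetCard j,
        ∀ S ∈ ((P₀ ∪ F).biUnion id).powersetCard (k-1),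
        ((((Q \ F).powersetCard (m - j)).filter (fun R =>
            τ * (l:ℝ) * ((m - j : ℕ):ℝ) ≤
              ∑ A ∈ R, ((l:ℝ) - (((NSet E S) ∩ A).card : ℝ)))).card : ℝ)
          ≤ ((N - j).choose (m - j) : ℝ) * Real.exp (-((m - j : ℕ):ℝ) * hrate) := by
      intro j hj F hF S hS
      obtain ⟨hFQ, hFcard⟩ := Finset.mem_powersetCard.1 hF
      obtain ⟨hSU, hScard⟩ := Finset.mem_powersetCard.1 hS
      have hjk : j < k := Finset.mem_range.1 hj
      have hjm : j ≤ m := by omega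
      have hjN : j ≤ N := by omega
      have hQFcard : (Q \ F).card = N - j := by
        rw [Finset.card_sdiff_of_subset hFQ, hFcard, ← hNdef]
      have hsubP : P₀ ∪ F ⊆ P := Finset.union_subset hP₀P (hFQ.trans hQP)
      have hdisjP0F : Disjoint P₀ F :=
        Finset.disjoint_of_subset_right hFQ Finset.sdiff_disjoint.symm
      have hcardP0F : (P₀ ∪ F).card = t + j := by
        rw [Finset.card_union_of_disjoint hdisjP0F, hP₀card, hFcard]
      -- the degree of S
      have hNS : (1/2+γ)*(n:ℝ) ≤ ((NSet E S).card : ℝ) :=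
        (hdeg S hScard).trans (by exact_mod_cast deg_le_NS E k (by omega) hE S hScard)
      -- the neighbourhood is covered by the classes
      have hcov : ((NSet E S).card : ℝ) ≤ ∑ A ∈ P, (((NSet E S) ∩ A).card : ℝ) := by
        have h1 : NSet E S ⊆ P.biUnion (fun A => (NSet E S) ∩ A) := by
          intro v hv
          have h2 : v ∈ P.biUnion id := by rw [hPuniv]; exact Finset.mem_univ v
          obtain ⟨A, hA, hvA⟩ := Finset.mem_biUnion.1 h2
          exact Finset.mem_biUnion.2 ⟨A, hA, Finset.mem_inter.2 ⟨hv, hvA⟩⟩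
        have h3 := (Finset.card_le_card h1).trans Finset.card_biUnion_le
        exact_mod_cast h3
      have hsplitsum : ∑ A ∈ Q \ F, (((NSet E S) ∩ A).card : ℝ)
          + ∑ A ∈ P₀ ∪ F, (((NSet E S) ∩ A).card : ℝ)
          = ∑ A ∈ P, (((NSet E S) ∩ A).card : ℝ) := by
        have hPQF : P \ (P₀ ∪ F) = Q \ F := by
          rw [hQdef]
          ext A
          simp only [Finset.mem_sdiff, Finset.mem_union]
          tauto
        rw [← hPQF]
        exact Finset.sum_sdiff hsubP
      have hP0Fsum : ∑ A ∈ P₀ ∪ F, (((NSet E S) ∩ A).card : ℝ) ≤ (l:ℝ) * ((t:ℝ)+(j:ℝ)) := by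
        calc ∑ A ∈ P₀ ∪ F, (((NSet E S) ∩ A).card : ℝ) ≤ ∑ A ∈ P₀ ∪ F, (l:ℝ) := by
              apply Finset.sum_le_sum
              intro A hA
              have h4 : ((NSet E S) ∩ A).card ≤ l :=
                (Finset.card_le_card Finset.inter_subset_right).trans
                  (le_of_eq (hPl A (hsubP hA)))
              exact_mod_cast h4
          _ = (l:ℝ) * ((t:ℝ)+(j:ℝ)) := by
              rw [Finset.sum_const, hcardP0F, nsmul_eq_mul]; push_cast; ring
      have hxlarge : (1/2+γ)*(n:ℝ) - (l:ℝ) * ((t:ℝ)+(j:ℝ))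
          ≤ ∑ A ∈ Q \ F, (((NSet E S) ∩ A).card : ℝ) := by
        linarith [hNS.trans hcov, hsplitsum, hP0Fsum]
      -- apply the tail bound
      have happ := tail_count (Q \ F) (m - j)
        (by rw [hQFcard]; omega)
        (fun A => (l:ℝ) - (((NSet E S) ∩ A).card : ℝ)) (l:ℝ) β τ hl0
        (fun A hA => by
          have h1 : ((NSet E S) ∩ A).card ≤ l :=
            (Finset.card_le_card Finset.inter_subset_right).trans
              (le_of_eq (hPl A (hQP (Finset.mem_sdiff.1 hA).1)))
          have h2 : (((NSet E S) ∩ A).card : ℝ) ≤ (l:ℝ) := by exact_mod_cast h1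
          show (0:ℝ) ≤ (l:ℝ) - (((NSet E S) ∩ A).card : ℝ)
          linarith)
        (fun A hA => by
          have h3 : (0:ℝ) ≤ (((NSet E S) ∩ A).card : ℝ) := Nat.cast_nonneg _
          show (l:ℝ) - (((NSet E S) ∩ A).card : ℝ) ≤ (l:ℝ)
          linarith)
        hβ0 hβτ ?_
      · rw [hQFcard, ← hratedef] at happ
        exact happ
      · -- the sum of deficiencies is small
        have hsumdef : ∑ A ∈ Q \ F, ((l:ℝ) - (((NSet E S) ∩ A).card : ℝ))
            = (l:ℝ) * (((Q \ F).card : ℕ):ℝ) - ∑ A ∈ Q \ F, (((NSet E S) ∩ A).card : ℝ) := by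
          rw [Finset.sum_sub_distrib, Finset.sum_const, nsmul_eq_mul]; ring
        rw [hsumdef, hQFcard]
        have hNjcast : ((N - j : ℕ):ℝ) = (N:ℝ) - (j:ℝ) := by
          push_cast [Nat.cast_sub hjN]; ring
        rw [hNjcast]
        have hγN : 8*((k:ℝ)+(t:ℝ)) ≤ γ*(N:ℝ) := by
          rw [div_le_iff₀ hγ0] at hNγ
          linarith
        have hjr : (j:ℝ) ≤ (k:ℝ) - 1 := by
          have : (j:ℝ) ≤ ((k - 1 : ℕ):ℝ) := by exact_mod_cast (by omega : j ≤ k - 1)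
          have hkc : ((k - 1 : ℕ):ℝ) = (k:ℝ) - 1 := by
            push_cast [Nat.cast_sub (by omega : 1 ≤ k)]; ring
          linarith [hkc ▸ this]
        have htr : (1:ℝ) ≤ (t:ℝ) := by exact_mod_cast ht
        have hkr : (2:ℝ) ≤ (k:ℝ) := by exact_mod_cast hk
        have hγt : 0 ≤ γ * (t:ℝ) := mul_nonneg hγ0.le (Nat.cast_nonneg t)
        have hγj : 0 ≤ γ * (j:ℝ) := mul_nonneg hγ0.le (Nat.cast_nonneg j)
        have hinner : (1/2+7*γ/8)*((N:ℝ)-(j:ℝ))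
            - ((1/2+γ)*((N:ℝ)+(t:ℝ)) - ((l:ℝ)/(l:ℝ))*((t:ℝ)+(j:ℝ))) ≤ 0 := by
          rw [div_self hl0.ne']
          linarith [hγN, hjr, htr, hkr, hγt, hγj]
        have hscaled := mul_le_mul_of_nonneg_left hinner hl0.le
        rw [div_self hl0.ne'] at hinner
        rw [hnlNt] at hxlarge
        rw [hβdef]
        nlinarith [hxlarge, hinner, hl0, mul_le_mul_of_nonneg_left hinner hl0.le]
      
    -- the covering of the bad event
    have hcover : (Q.powersetCard m).filter (fun P' =>
          ¬ (∀ S : Finset (Fin n), S ⊆ (P₀ ∪ P').biUnion id → S.card = k - 1 →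
              (1/2 + γ/2) * ((l : ℝ) * ((m : ℝ) + (t : ℝ))) ≤
                ((E.filter (fun e => S ⊆ e ∧ e ⊆ (P₀ ∪ P').biUnion id)).card : ℝ))) ⊆
        (Finset.range k).biUnion (fun j => (Q.powersetCard j).biUnion (fun F =>
          (((P₀ ∪ F).biUnion id).powersetCard (k-1)).biUnion (fun S =>
            (((Q \ F).powersetCard (m - j)).filter (fun R =>
                τ * (l:ℝ) * ((m - j : ℕ):ℝ) ≤
                  ∑ A ∈ R, ((l:ℝ) - (((NSet E S) ∩ A).card : ℝ)))).image (fun R => F ∪ R)))) := by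
      intro P' hP'
      obtain ⟨hP'mem, hbadP'⟩ := Finset.mem_filter.1 hP'
      obtain ⟨hP'sub, hP'card⟩ := Finset.mem_powersetCard.1 hP'mem
      push_neg at hbadP'
      obtain ⟨S, hSU, hScard, hSdef⟩ := hbadP'
      have hSne : S.Nonempty := Finset.card_pos.1 (by rw [hScard]; omega)
      obtain ⟨v₀, hv₀S⟩ := hSne
      set F := P'.filter (fun A => (A ∩ S).Nonempty) with hFdef
      have hFP' : F ⊆ P' := Finset.filter_subset _ _
      have hFQ : F ⊆ Q := hFP'.trans hP'sub
      have hjcard : F.card ≤ k - 1 := by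
        rw [← hScard]
        apply Finset.card_le_card_of_injOn
          (fun A => if h : (A ∩ S).Nonempty then (A ∩ S).min' h else v₀)
        · intro A hA
          have h : (A ∩ S).Nonempty := (Finset.mem_filter.1 hA).2
          simp only [dif_pos h]
          exact Finset.mem_inter.1 ((A ∩ S).min'_mem h) |>.2
        · intro A hA B hB hfe
          by_contra hAB
          have hAF : A ∈ F := hA
          have hBF : B ∈ F := hB
          have hAne : (A ∩ S).Nonempty := (Finset.mem_filter.1 hAF).2
          have hBne : (B ∩ S).Nonempty := (Finset.mem_filter.1 hBF).2
          simp only [dif_pos hAne, dif_pos hBne] at hfe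
          have hdisj : Disjoint A B :=
            hPdisj (hQP (hFQ hAF)) (hQP (hFQ hBF)) hAB
          have h1 : (A ∩ S).min' hAne ∈ A := (Finset.mem_inter.1 ((A ∩ S).min'_mem hAne)).1
          have h2 : (B ∩ S).min' hBne ∈ B := (Finset.mem_inter.1 ((B ∩ S).min'_mem hBne)).1
          rw [hfe] at h1
          exact Finset.disjoint_left.1 hdisj h1 h2
      have hjm : F.card ≤ m := by omega
      set R := P' \ F with hRdef
      have hRmem : R ∈ (Q \ F).powersetCard (m - F.card) :=
        Finset.mem_powersetCard.2 ⟨Finset.sdiff_subset_sdiff hP'sub le_rfl,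
          by rw [hRdef, Finset.card_sdiff_of_subset hFP', hP'card]⟩
      have hFR : F ∪ R = P' := Finset.union_sdiff_of_subset hFP'
      -- the sum bound
      have hdisjR : ∀ A ∈ R, ∀ B ∈ R, A ≠ B →
          Disjoint ((NSet E S) ∩ A) ((NSet E S) ∩ B) := by
        intro A hA B hB hAB
        have hAP : A ∈ P := hQP (Finset.mem_sdiff.1 ((Finset.mem_powersetCard.1 hRmem).1 hA)).1
        have hBP : B ∈ P := hQP (Finset.mem_sdiff.1 ((Finset.mem_powersetCard.1 hRmem).1 hB)).1
        exact (hPdisj hAP hBP hAB).mono Finset.inter_subset_right Finset.inter_subset_right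
      have hWcard : ∑ A ∈ R, ((NSet E S) ∩ A).card
          = (R.biUnion (fun A => (NSet E S) ∩ A)).card := (Finset.card_biUnion hdisjR).symm
      have himsub : (R.biUnion (fun A => (NSet E S) ∩ A)).image (fun v => insert v S)
          ⊆ E.filter (fun e => S ⊆ e ∧ e ⊆ (P₀ ∪ P').biUnion id) := by
        intro u hu
        obtain ⟨v, hvW, rfl⟩ := Finset.mem_image.1 hu
        obtain ⟨A, hAR, hvA⟩ := Finset.mem_biUnion.1 hvW
        obtain ⟨hvNS, hvA'⟩ := Finset.mem_inter.1 hvA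
        obtain ⟨hvS, hvE⟩ := mem_NSet.1 hvNS
        refine Finset.mem_filter.2 ⟨hvE, Finset.subset_insert _ _, ?_⟩
        intro w hw
        rcases Finset.mem_insert.1 hw with hwv | hwS
        · subst hwv
          exact Finset.mem_biUnion.2
            ⟨A, Finset.mem_union_right _ (Finset.mem_sdiff.1 hAR).1, hvA'⟩
        · exact hSU hwS
      have hinjW : Set.InjOn (fun v => insert v S)
          ↑(R.biUnion (fun A => (NSet E S) ∩ A)) := by
        intro v hv w hw he
        have hvS : v ∉ S := by
          obtain ⟨A, _, hvA⟩ := Finset.mem_biUnion.1 hv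
          exact (mem_NSet.1 (Finset.mem_inter.1 hvA).1).1
        have hwS : w ∉ S := by
          obtain ⟨A, _, hwA⟩ := Finset.mem_biUnion.1 hw
          exact (mem_NSet.1 (Finset.mem_inter.1 hwA).1).1
        have he' : insert v S = insert w S := he
        have hvmem : v ∈ insert w S := by rw [← he']; exact Finset.mem_insert_self v S
        rcases Finset.mem_insert.1 hvmem with h | h
        · exact h
        · exact absurd h hvS
      have hX : ∑ A ∈ R, (((NSet E S) ∩ A).card : ℝ)
          ≤ ((E.filter (fun e => S ⊆ e ∧ e ⊆ (P₀ ∪ P').biUnion id)).card : ℝ) := by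
        have h1 : ((R.biUnion (fun A => (NSet E S) ∩ A)).image (fun v => insert v S)).card
            = (R.biUnion (fun A => (NSet E S) ∩ A)).card :=
          Finset.card_image_of_injOn hinjW
        have h2 := Finset.card_le_card himsub
        rw [h1] at h2
        have h3 : ∑ A ∈ R, ((NSet E S) ∩ A).card
            ≤ (E.filter (fun e => S ⊆ e ∧ e ⊆ (P₀ ∪ P').biUnion id)).card := by
          rw [hWcard]; exact h2
        exact_mod_cast h3
      -- numeric inequality
      have hRcard : R.card = m - F.card := (Finset.mem_powersetCard.1 hRmem).2
      have hmjcast : ((m - F.card : ℕ):ℝ) = (m:ℝ) - (F.card:ℝ) := by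
        push_cast [Nat.cast_sub hjm]; ring
      have hjr : (F.card:ℝ) ≤ (k:ℝ) - 1 := by
        have h5 : (F.card:ℝ) ≤ ((k - 1 : ℕ):ℝ) := by exact_mod_cast hjcard
        have hkc : ((k - 1 : ℕ):ℝ) = (k:ℝ) - 1 := by
          push_cast [Nat.cast_sub (by omega : 1 ≤ k)]; ring
        linarith [hkc ▸ h5]
      have htr : (1:ℝ) ≤ (t:ℝ) := by exact_mod_cast ht
      have hkr : (2:ℝ) ≤ (k:ℝ) := by exact_mod_cast hk
      have hγm : 8*((k:ℝ)+(t:ℝ)) ≤ γ*(m:ℝ) := by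
        rw [div_le_iff₀ hγ0] at hmγ
        linarith
      have hγj : γ*(F.card:ℝ) ≤ (F.card:ℝ) :=
        mul_le_of_le_one_left (Nat.cast_nonneg _) hγ1
      have hγt : γ*(t:ℝ) ≤ (t:ℝ) := mul_le_of_le_one_left (Nat.cast_nonneg _) hγ1
      have hinner : (1/2+γ/2)*((m:ℝ)+(t:ℝ)) ≤ (1/2+5*γ/8)*((m:ℝ)-(F.card:ℝ)) := by
        nlinarith [hγm, hjr, htr, hkr, hγj, hγt, hγ0.le,
          mul_le_mul_of_nonneg_left hjr hγ0.le]
      have hbadR : τ * (l:ℝ) * ((m - F.card : ℕ):ℝ)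
          ≤ ∑ A ∈ R, ((l:ℝ) - (((NSet E S) ∩ A).card : ℝ)) := by
        have hsumR : ∑ A ∈ R, ((l:ℝ) - (((NSet E S) ∩ A).card : ℝ))
            = (l:ℝ) * ((m - F.card : ℕ):ℝ) - ∑ A ∈ R, (((NSet E S) ∩ A).card : ℝ) := by
          rw [Finset.sum_sub_distrib, Finset.sum_const, hRcard, nsmul_eq_mul]; ring
        rw [hsumR, hmjcast, hτdef]
        have hscaled := mul_le_mul_of_nonneg_left hinner hl0.le
        linarith [hX.trans_lt hSdef, hscaled]
      -- assemble the membership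
      apply Finset.mem_biUnion.2
      refine ⟨F.card, Finset.mem_range.2 (by omega), ?_⟩
      apply Finset.mem_biUnion.2
      refine ⟨F, Finset.mem_powersetCard.2 ⟨hFQ, rfl⟩, ?_⟩
      apply Finset.mem_biUnion.2
      refine ⟨S, Finset.mem_powersetCard.2 ⟨?_, hScard⟩, ?_⟩
      · intro v hv
        obtain ⟨A, hA, hvA⟩ := Finset.mem_biUnion.1 (hSU hv)
        rcases Finset.mem_union.1 hA with hA0 | hA'
        · exact Finset.mem_biUnion.2 ⟨A, Finset.mem_union_left _ hA0, hvA⟩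
        · have hAF : A ∈ F := Finset.mem_filter.2 ⟨hA', ⟨v, Finset.mem_inter.2 ⟨hvA, hv⟩⟩⟩
          exact Finset.mem_biUnion.2 ⟨A, Finset.mem_union_right _ hAF, hvA⟩
      · exact Finset.mem_image.2 ⟨R, Finset.mem_filter.2 ⟨hRmem, hbadR⟩, hFR⟩
    -- counting the S's
    have hScount : ∀ j ∈ Finset.range k, ∀ F ∈ Q.powersetCard j,
        (((P₀ ∪ F).biUnion id).powersetCard (k-1)).card = (l*(t+j)).choose (k-1) := by
      intro j hj F hF
      obtain ⟨hFQ, hFcard⟩ := Finset.mem_powersetCard.1 hF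
      have hsubP : P₀ ∪ F ⊆ P := Finset.union_subset hP₀P (hFQ.trans hQP)
      have hdisj : Disjoint P₀ F :=
        Finset.disjoint_of_subset_right hFQ Finset.sdiff_disjoint.symm
      have hcardU : (P₀ ∪ F).card = t + j := by
        rw [Finset.card_union_of_disjoint hdisj, hP₀card, hFcard]
      have hbu : ((P₀ ∪ F).biUnion id).card = l*(t+j) := by
        rw [Finset.card_biUnion (fun A hA B hB hAB => hPdisj (hsubP hA) (hsubP hB) hAB)]
        simp only [id]
        rw [Finset.sum_congr rfl (fun A hA => hPl A (hsubP hA)), Finset.sum_const, hcardU,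
          smul_eq_mul, mul_comm]
      rw [Finset.card_powersetCard, hbu]
    -- the main bound on the number of bad sets
    have hbad : (((Q.powersetCard m).filter (fun P' =>
          ¬ (∀ S : Finset (Fin n), S ⊆ (P₀ ∪ P').biUnion id → S.card = k - 1 →
              (1/2 + γ/2) * ((l : ℝ) * ((m : ℝ) + (t : ℝ))) ≤
                ((E.filter (fun e => S ⊆ e ∧ e ⊆ (P₀ ∪ P').biUnion id)).card : ℝ)))).card : ℝ)
        ≤ Real.exp (-Real.sqrt m) * ((Q.powersetCard m).card : ℝ) := by
      have hnat : ((Q.powersetCard m).filter (fun P' =>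
          ¬ (∀ S : Finset (Fin n), S ⊆ (P₀ ∪ P').biUnion id → S.card = k - 1 →
              (1/2 + γ/2) * ((l : ℝ) * ((m : ℝ) + (t : ℝ))) ≤
                ((E.filter (fun e => S ⊆ e ∧ e ⊆ (P₀ ∪ P').biUnion id)).card : ℝ)))).card
          ≤ ∑ j ∈ Finset.range k, ∑ F ∈ Q.powersetCard j,
              ∑ S ∈ ((P₀ ∪ F).biUnion id).powersetCard (k-1),
              ((((Q \ F).powersetCard (m - j)).filter (fun R =>
                  τ * (l:ℝ) * ((m - j : ℕ):ℝ) ≤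
                    ∑ A ∈ R, ((l:ℝ) - (((NSet E S) ∩ A).card : ℝ)))).card) := by
        refine (Finset.card_le_card hcover).trans ?_
        refine Finset.card_biUnion_le.trans (Finset.sum_le_sum fun j _ => ?_)
        refine Finset.card_biUnion_le.trans (Finset.sum_le_sum fun F _ => ?_)
        refine Finset.card_biUnion_le.trans (Finset.sum_le_sum fun S _ => ?_)
        exact Finset.card_image_le
      have hperj : ∀ j ∈ Finset.range k,
          ∑ F ∈ Q.powersetCard j, ∑ S ∈ ((P₀ ∪ F).biUnion id).powersetCard (k-1),
            (((N - j).choose (m - j) : ℝ) * Real.exp (-((m - j : ℕ):ℝ) * hrate))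
          ≤ (N.choose m : ℝ) *
              (((m:ℝ)+1)^k * (((l*(t+k):ℕ):ℝ)^k * Real.exp (-((m:ℝ)-(k:ℝ))*hrate))) := by
        intro j hj
        have hjk : j ≤ k - 1 := by have := Finset.mem_range.1 hj; omega
        have hjm : j ≤ m := by omega
        have hinner : ∀ F ∈ Q.powersetCard j,
            ∑ S ∈ ((P₀ ∪ F).biUnion id).powersetCard (k-1),
              (((N - j).choose (m - j) : ℝ) * Real.exp (-((m - j : ℕ):ℝ) * hrate))
            = ((l*(t+j)).choose (k-1) : ℝ) *
                (((N - j).choose (m - j) : ℝ) * Real.exp (-((m - j : ℕ):ℝ) * hrate)) := by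
          intro F hF
          rw [Finset.sum_const, hScount j hj F hF, nsmul_eq_mul]
        rw [Finset.sum_congr rfl hinner, Finset.sum_const, Finset.card_powersetCard,
          nsmul_eq_mul, ← hNdef]
        have f1 : (N.choose j : ℝ) * ((N-j).choose (m-j) : ℝ)
            = (N.choose m : ℝ) * (m.choose j : ℝ) := by
          exact_mod_cast congrArg (Nat.cast (R:=ℝ)) (Nat.choose_mul (n := N) hjm).symm
        have f2 : (m.choose j : ℝ) ≤ ((m:ℝ)+1)^k := by
          calc (m.choose j : ℝ) ≤ ((m^j : ℕ):ℝ) := by exact_mod_cast Nat.choose_le_pow m j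
            _ = ((m:ℝ))^j := by push_cast; ring
            _ ≤ ((m:ℝ)+1)^j := by
                apply pow_le_pow_left₀ (by positivity) (by linarith) j
            _ ≤ ((m:ℝ)+1)^k := by
                have h0 : (0:ℝ) ≤ (m:ℝ) := Nat.cast_nonneg m
                apply pow_le_pow_right₀ (by linarith) (by omega)
        have f3 : ((l*(t+j)).choose (k-1) : ℝ) ≤ ((l*(t+k):ℕ):ℝ)^k := by
          have g1 : (l*(t+j)).choose (k-1) ≤ (l*(t+j))^(k-1) := Nat.choose_le_pow _ _
          have g2 : (l*(t+j))^(k-1) ≤ (l*(t+k))^(k-1) :=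
            Nat.pow_le_pow_left (Nat.mul_le_mul le_rfl (by omega)) _
          have g3 : (l*(t+k))^(k-1) ≤ (l*(t+k))^k :=
            Nat.pow_le_pow_right (Nat.one_le_iff_ne_zero.2 (by positivity)) (by omega)
          calc ((l*(t+j)).choose (k-1) : ℝ) ≤ (((l*(t+k))^k : ℕ):ℝ) := by
                exact_mod_cast (g1.trans g2).trans g3
            _ = ((l*(t+k):ℕ):ℝ)^k := by push_cast; ring
        have f4 : Real.exp (-((m - j : ℕ):ℝ) * hrate) ≤ Real.exp (-((m:ℝ)-(k:ℝ))*hrate) := by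
          apply Real.exp_le_exp.2
          have hc : ((m - j : ℕ):ℝ) = (m:ℝ) - (j:ℝ) := by
            push_cast [Nat.cast_sub hjm]; ring
          rw [hc]
          have hjk' : (j:ℝ) ≤ (k:ℝ) := by exact_mod_cast (by omega : j ≤ k)
          nlinarith [hrate0.le]
        have hch0 : (0:ℝ) ≤ (N.choose m : ℝ) := by positivity
        calc (N.choose j : ℝ) * (((l*(t+j)).choose (k-1) : ℝ) *
              (((N - j).choose (m - j) : ℝ) * Real.exp (-((m - j : ℕ):ℝ) * hrate)))
            = ((N.choose j : ℝ) * ((N-j).choose (m-j) : ℝ)) *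
              (((l*(t+j)).choose (k-1) : ℝ) * Real.exp (-((m - j : ℕ):ℝ) * hrate)) := by ring
          _ = (N.choose m : ℝ) * ((m.choose j : ℝ) *
              (((l*(t+j)).choose (k-1) : ℝ) * Real.exp (-((m - j : ℕ):ℝ) * hrate))) := by
              rw [f1]; ring
          _ ≤ (N.choose m : ℝ) *
              (((m:ℝ)+1)^k * (((l*(t+k):ℕ):ℝ)^k * Real.exp (-((m:ℝ)-(k:ℝ))*hrate))) := by
              apply mul_le_mul_of_nonneg_left _ hch0
              apply mul_le_mul f2 (mul_le_mul f3 f4 (Real.exp_pos _).le (by positivity))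
                (by positivity) (by positivity)
      calc (((Q.powersetCard m).filter (fun P' =>
          ¬ (∀ S : Finset (Fin n), S ⊆ (P₀ ∪ P').biUnion id → S.card = k - 1 →
              (1/2 + γ/2) * ((l : ℝ) * ((m : ℝ) + (t : ℝ))) ≤
                ((E.filter (fun e => S ⊆ e ∧ e ⊆ (P₀ ∪ P').biUnion id)).card : ℝ)))).card : ℝ)
          ≤ ((∑ j ∈ Finset.range k, ∑ F ∈ Q.powersetCard j,
              ∑ S ∈ ((P₀ ∪ F).biUnion id).powersetCard (k-1),
              ((((Q \ F).powersetCard (m - j)).filter (fun R =>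
                  τ * (l:ℝ) * ((m - j : ℕ):ℝ) ≤
                    ∑ A ∈ R, ((l:ℝ) - (((NSet E S) ∩ A).card : ℝ)))).card) : ℕ) : ℝ) := by
            exact Nat.cast_le.mpr hnat
        _ = ∑ j ∈ Finset.range k, ∑ F ∈ Q.powersetCard j,
              ∑ S ∈ ((P₀ ∪ F).biUnion id).powersetCard (k-1),
              (((((Q \ F).powersetCard (m - j)).filter (fun R =>
                  τ * (l:ℝ) * ((m - j : ℕ):ℝ) ≤
                    ∑ A ∈ R, ((l:ℝ) - (((NSet E S) ∩ A).card : ℝ)))).card : ℕ) : ℝ) := by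
            push_cast; ring
        _ ≤ ∑ j ∈ Finset.range k, ∑ F ∈ Q.powersetCard j,
              ∑ S ∈ ((P₀ ∪ F).biUnion id).powersetCard (k-1),
              (((N - j).choose (m - j) : ℝ) * Real.exp (-((m - j : ℕ):ℝ) * hrate)) := by
            refine Finset.sum_le_sum fun j hj => Finset.sum_le_sum fun F hF =>
              Finset.sum_le_sum fun S hS => ?_
            exact hTail j hj F hF S hS
        _ ≤ ∑ _j ∈ Finset.range k, (N.choose m : ℝ) *
              (((m:ℝ)+1)^k * (((l*(t+k):ℕ):ℝ)^k * Real.exp (-((m:ℝ)-(k:ℝ))*hrate))) :=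
            Finset.sum_le_sum hperj
        _ = (N.choose m : ℝ) *
              (Kc * ((m:ℝ)+1)^k * Real.exp (-((m:ℝ)-(k:ℝ))*hrate)) := by
            rw [Finset.sum_const, Finset.card_range, nsmul_eq_mul, hKcdef]; ring
        _ ≤ (N.choose m : ℝ) * Real.exp (-Real.sqrt m) := by
            apply mul_le_mul_of_nonneg_left
              (final_numeric k (by omega) Kc hrate hKc1 hrate0 m hm1 hm2) (by positivity)
        _ = Real.exp (-Real.sqrt m) * ((Q.powersetCard m).card : ℝ) := by
            rw [Finset.card_powersetCard, ← hNdef]; ring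
    -- conclusion
    have hsplit := Finset.card_filter_add_card_filter_not
      (s := Q.powersetCard m) (fun P' =>
        ∀ S : Finset (Fin n), S ⊆ (P₀ ∪ P').biUnion id → S.card = k - 1 →
          (1/2 + γ/2) * ((l : ℝ) * ((m : ℝ) + (t : ℝ))) ≤
            ((E.filter (fun e => S ⊆ e ∧ e ⊆ (P₀ ∪ P').biUnion id)).card : ℝ))
    have hsplit' : ((((Q.powersetCard m).filter (fun P' =>
        ∀ S : Finset (Fin n), S ⊆ (P₀ ∪ P').biUnion id → S.card = k - 1 →
          (1/2 + γ/2) * ((l : ℝ) * ((m : ℝ) + (t : ℝ))) ≤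
            ((E.filter (fun e => S ⊆ e ∧ e ⊆ (P₀ ∪ P').biUnion id)).card : ℝ))).card : ℝ))
        + (((Q.powersetCard m).filter (fun P' =>
          ¬ (∀ S : Finset (Fin n), S ⊆ (P₀ ∪ P').biUnion id → S.card = k - 1 →
              (1/2 + γ/2) * ((l : ℝ) * ((m : ℝ) + (t : ℝ))) ≤
                ((E.filter (fun e => S ⊆ e ∧ e ⊆ (P₀ ∪ P').biUnion id)).card : ℝ)))).card : ℝ)
        = ((Q.powersetCard m).card : ℝ) := by exact_mod_cast congrArg (Nat.cast (R := ℝ)) hsplit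
    have hεnn : (0:ℝ) ≤ Real.exp (-Real.sqrt m) := (Real.exp_pos _).le
    linarith [hbad, hsplit']
end

section
/- For every integer k ≥ 2 and every constant γ > 0 there exist C > 0 and n₀ ∈ ℕ such that for all n ≥ n₀, every (n,k,γ)-graph G admits a C-normal perfect fractional matching. -/
open scoped Classical



open Finset

namespace Stmt7Aux

noncomputable def extV {α : Type} [DecidableEq α] (V : Finset α) (a : {y // y ∈ V} → ℝ) :
    α → ℝ := fun x => if h : x ∈ V then a ⟨x, h⟩ else 0

lemma extV_add {α : Type} [DecidableEq α] (V : Finset α) (a b : {y // y ∈ V} → ℝ) (x : α) :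
    extV V (a + b) x = extV V a x + extV V b x := by
  unfold extV; split <;> simp

lemma extV_smul {α : Type} [DecidableEq α] (V : Finset α) (c : ℝ) (a : {y // y ∈ V} → ℝ) (x : α) :
    extV V (c • a) x = c * extV V a x := by
  unfold extV; split <;> simp

lemma extV_mem {α : Type} [DecidableEq α] (V : Finset α) (a : {y // y ∈ V} → ℝ) {x : α}
    (h : x ∈ V) : extV V a x = a ⟨x, h⟩ := dif_pos h

lemma sum_card_mul_le {α : Type} [DecidableEq α] {t : Finset α} (G : α → ℝ) {m : ℝ}
    (hm : ∀ x ∈ t, m ≤ G x) : (t.card : ℝ) * m ≤ ∑ y ∈ t, G y := by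
  calc (t.card : ℝ) * m = ∑ _y ∈ t, m := by rw [Finset.sum_const, nsmul_eq_mul]
  _ ≤ ∑ y ∈ t, G y := Finset.sum_le_sum hm

lemma sum_le_card_mul {α : Type} [DecidableEq α] {t : Finset α} (G : α → ℝ) {M : ℝ}
    (hM : ∀ x ∈ t, G x ≤ M) : ∑ y ∈ t, G y ≤ (t.card : ℝ) * M := by
  calc ∑ y ∈ t, G y ≤ ∑ _y ∈ t, M := Finset.sum_le_sum hM
  _ = (t.card : ℝ) * M := by rw [Finset.sum_const, nsmul_eq_mul]

lemma sum_sum_swap {α : Type} [DecidableEq α] (s : Finset (Finset α))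
    (g : Finset α → Finset α) (U : Finset α) (hsub : ∀ t ∈ s, g t ⊆ U)
    (H : α → Finset α → ℝ) :
    ∑ t ∈ s, ∑ w ∈ g t, H w t = ∑ w ∈ U, ∑ t ∈ s.filter (fun t => w ∈ g t), H w t := by
  have h1 : ∀ t ∈ s, ∑ w ∈ g t, H w t = ∑ w ∈ U, if w ∈ g t then H w t else 0 := by
    intro t ht
    rw [← Finset.sum_filter]
    apply Finset.sum_congr _ (fun _ _ => rfl)
    ext w
    simp only [Finset.mem_filter]
    exact ⟨fun h => ⟨hsub t ht h, h⟩, fun h => h.2⟩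
  rw [Finset.sum_congr rfl h1, Finset.sum_comm]
  exact Finset.sum_congr rfl fun w _ => (Finset.sum_filter _ _).symm

set_option maxHeartbeats 4000000 in
lemma base_case {α : Type} [DecidableEq α] {γ : ℝ} (hγ : 0 < γ) (V : Finset α)
    (E : Finset (Finset α)) (hn : 1 ≤ V.card)
    (hE : ∀ e ∈ E, e ⊆ V ∧ e.card = 2)
    (hdeg : ∀ S : Finset α, S ⊆ V → S.card = 1 →
      (1/2 + γ) * (V.card : ℝ) ≤ ((E.filter (fun e => S ⊆ e)).card : ℝ)) :
    ∃ x : Finset α → ℝ,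
      (∀ e ∈ E, 1 / ((4 + 1/γ) * (V.card : ℝ)) ≤ x e ∧ x e ≤ (4 + 1/γ) / (V.card : ℝ)) ∧
      (∀ v ∈ V, ∑ e ∈ E.filter (fun e => v ∈ e), x e = 1) := by
  have hVne : V.Nonempty := Finset.card_pos.mp hn
  have hn0 : (0 : ℝ) < V.card := by exact_mod_cast hn
  -- degrees
  have hdeg' : ∀ x ∈ V, (1/2 + γ) * (V.card : ℝ) ≤ ((E.filter (fun e => x ∈ e)).card : ℝ) := by
    intro x hx
    have h := hdeg {x} (by simpa using hx) (by simp)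
    simpa [Finset.singleton_subset_iff] using h
  -- neighborhood sets (as singletons)
  set N : α → Finset (Finset α) := fun x => (E.filter (fun e => x ∈ e)).image (fun e => e.erase x)
    with hN
  have hNcard : ∀ x, (N x).card = (E.filter (fun e => x ∈ e)).card := by
    intro x
    apply Finset.card_image_of_injOn
    intro e he e' he' hee
    simp only [Finset.coe_filter, Set.mem_setOf_eq] at he he'
    have hee' : e.erase x = e'.erase x := hee
    rw [← Finset.insert_erase he.2, hee', Finset.insert_erase he'.2]
  have hNmem : ∀ x, ∀ t ∈ N x, t ⊆ V ∧ t.card = 1 ∧ insert x t ∈ E ∧ x ∉ t := by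
    intro x t ht
    obtain ⟨e, he, rfl⟩ := Finset.mem_image.mp ht
    rw [Finset.mem_filter] at he
    refine ⟨(Finset.erase_subset _ _).trans (hE e he.1).1, ?_, ?_, Finset.notMem_erase _ _⟩
    · rw [Finset.card_erase_of_mem he.2, (hE e he.1).2]
    · rw [Finset.insert_erase he.2]; exact he.1
  have hNsub : ∀ x, N x ⊆ V.image (fun z => ({z} : Finset α)) := by
    intro x t ht
    obtain ⟨htV, htc, -, -⟩ := hNmem x t ht
    obtain ⟨z, rfl⟩ := Finset.card_eq_one.mp htc
    exact Finset.mem_image.mpr ⟨z, htV (Finset.mem_singleton_self z), rfl⟩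
  have hNn : ∀ x, ((N x).card : ℝ) ≤ (V.card : ℝ) := by
    intro x
    exact_mod_cast le_trans (Finset.card_le_card (hNsub x)) Finset.card_image_le
  have hcommon : ∀ x ∈ V, ∀ y ∈ V, (N x ∩ N y).Nonempty := by
    intro x hx y hy
    rw [← Finset.card_pos]
    by_contra hcon
    have h0 : (N x ∩ N y).card = 0 := by omega
    have hu := Finset.card_union_add_card_inter (N x) (N y)
    have hle : (N x ∪ N y).card ≤ V.card :=
      le_trans (Finset.card_le_card (Finset.union_subset (hNsub x) (hNsub y)))
        Finset.card_image_le
    have hsum : (N x).card + (N y).card ≤ V.card := by omega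
    have hsumR : ((E.filter (fun e => x ∈ e)).card : ℝ) + ((E.filter (fun e => y ∈ e)).card : ℝ)
        ≤ (V.card : ℝ) := by
      rw [← hNcard x, ← hNcard y]; exact_mod_cast hsum
    nlinarith [hdeg' x hx, hdeg' y hy]
  -- solving the linear system
  have key : ∃ a : {y // y ∈ V} → ℝ,
      ∀ u : {y // y ∈ V}, ∑ e ∈ E.filter (fun e => u.1 ∈ e), ∑ y ∈ e, extV V a y = 1 := by
    set T : ({y // y ∈ V} → ℝ) →ₗ[ℝ] ({y // y ∈ V} → ℝ) :=
      { toFun := fun a u => ∑ e ∈ E.filter (fun e => u.1 ∈ e), ∑ y ∈ e, extV V a y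
        map_add' := by
          intro a b; funext u
          simp only [extV_add, Finset.sum_add_distrib, Pi.add_apply]
        map_smul' := by
          intro c a; funext u
          simp only [extV_smul, ← Finset.mul_sum, RingHom.id_apply, Pi.smul_apply, smul_eq_mul] }
      with hT
    have hker : ∀ a, T a = 0 → a = 0 := by
      intro a ha0
      set G := extV V a with hG
      have hzero : ∀ e ∈ E, ∑ y ∈ e, G y = 0 := by
        have hswap : ∑ x ∈ V, G x * (∑ e ∈ E.filter (fun e => x ∈ e), ∑ y ∈ e, G y)
            = ∑ e ∈ E, (∑ y ∈ e, G y)^2 := by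
          calc ∑ x ∈ V, G x * (∑ e ∈ E.filter (fun e => x ∈ e), ∑ y ∈ e, G y)
              = ∑ x ∈ V, ∑ e ∈ E, (if x ∈ e then G x * ∑ y ∈ e, G y else 0) := by
                refine Finset.sum_congr rfl fun x _ => ?_
                rw [Finset.mul_sum, ← Finset.sum_filter]
            _ = ∑ e ∈ E, ∑ x ∈ V, (if x ∈ e then G x * ∑ y ∈ e, G y else 0) := Finset.sum_comm
            _ = ∑ e ∈ E, (∑ y ∈ e, G y)^2 := by
                refine Finset.sum_congr rfl fun e he => ?_
                rw [← Finset.sum_filter]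
                have hfe : V.filter (fun x => x ∈ e) = e := by
                  ext x
                  simp only [Finset.mem_filter]
                  exact ⟨And.right, fun h => ⟨(hE e he).1 h, h⟩⟩
                rw [hfe, ← Finset.sum_mul, sq]
        have hq : ∑ e ∈ E, (∑ y ∈ e, G y)^2 = 0 := by
          rw [← hswap]
          apply Finset.sum_eq_zero
          intro x hx
          have h1 : (∑ e ∈ E.filter (fun e => x ∈ e), ∑ y ∈ e, G y) = 0 := by
            have := congrFun ha0 ⟨x, hx⟩
            simpa [hT] using this
          rw [h1, mul_zero]
        intro e he
        have h2 := (Finset.sum_eq_zero_iff_of_nonneg (fun e _ => sq_nonneg _)).mp hq e he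
        exact pow_eq_zero_iff two_ne_zero |>.mp h2
      -- all values equal, then zero
      have hGval : ∀ x, ∀ t ∈ N x, ∀ z ∈ t, G x + G z = 0 := by
        intro x t ht z hz
        obtain ⟨htV, htc, hins, hxt⟩ := hNmem x t ht
        obtain ⟨w, rfl⟩ := Finset.card_eq_one.mp htc
        have := hzero _ hins
        rw [Finset.sum_insert hxt, Finset.sum_singleton] at this
        rw [Finset.mem_singleton] at hz
        rwa [hz]
      have hGconst : ∀ x ∈ V, ∀ y ∈ V, G x = G y := by
        intro x hx y hy
        obtain ⟨t, ht⟩ := hcommon x hx y hy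
        rw [Finset.mem_inter] at ht
        obtain ⟨-, htc, -, -⟩ := hNmem x t ht.1
        obtain ⟨z, rfl⟩ := Finset.card_eq_one.mp htc
        have h1 := hGval x _ ht.1 z (Finset.mem_singleton_self z)
        have h2 := hGval y _ ht.2 z (Finset.mem_singleton_self z)
        linarith
      have hGzero : ∀ x ∈ V, G x = 0 := by
        intro x hx
        have hdx := hdeg' x hx
        have hne : (E.filter (fun e => x ∈ e)).Nonempty := by
          rw [← Finset.card_pos]
          by_contra hcon
          have : (E.filter (fun e => x ∈ e)).card = 0 := by omega
          rw [this] at hdx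
          push_cast at hdx
          nlinarith
        obtain ⟨e, he⟩ := hne
        have hte : e.erase x ∈ N x := Finset.mem_image.mpr ⟨e, he, rfl⟩
        obtain ⟨htV, htc, -, -⟩ := hNmem x _ hte
        obtain ⟨z, hzt⟩ := Finset.card_eq_one.mp htc
        have h1 := hGval x _ hte z (by rw [hzt]; exact Finset.mem_singleton_self z)
        have hzV : z ∈ V := htV (by rw [hzt]; exact Finset.mem_singleton_self z)
        have h2 := hGconst x hx z hzV
        linarith
      funext u
      have := hGzero u.1 u.2
      rw [hG, extV_mem V a u.2] at this
      simpa using this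
    have hinj : Function.Injective T := by
      intro a b hab
      have h := hker (a - b) (by rw [map_sub, hab, sub_self])
      exact sub_eq_zero.mp h
    have hsurj := (LinearMap.injective_iff_surjective).mp hinj
    obtain ⟨a, ha⟩ := hsurj (fun _ => 1)
    exact ⟨a, fun u => congrFun ha u⟩
  obtain ⟨a, ha⟩ := key
  set G := extV V a with hG
  -- extremes
  obtain ⟨p, hpV, hpmax⟩ := Finset.exists_max_image V G hVne
  obtain ⟨q, hqV, hqmin⟩ := Finset.exists_min_image V G hVne
  set M := G p with hM
  set m := G q with hm
  have hbound : ∀ x ∈ V, m ≤ G x ∧ G x ≤ M := fun x hx => ⟨hqmin x hx, hpmax x hx⟩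
  -- per-vertex identity
  have hones : ∀ x ∈ V, ∑ e ∈ E.filter (fun e => x ∈ e), ∑ y ∈ e, G y = 1 :=
    fun x hx => ha ⟨x, hx⟩
  -- decomposition
  have hdecomp : ∀ x ∈ V,
      ((E.filter (fun e => x ∈ e)).card : ℝ) * G x
        + ∑ e ∈ E.filter (fun e => x ∈ e), ∑ y ∈ e.erase x, G y = 1 := by
    intro x hx
    have h1 : ∑ e ∈ E.filter (fun e => x ∈ e), ∑ y ∈ e, G y
        = ∑ e ∈ E.filter (fun e => x ∈ e), (G x + ∑ y ∈ e.erase x, G y) := by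
      refine Finset.sum_congr rfl fun e he => ?_
      exact (Finset.add_sum_erase e G (Finset.mem_filter.mp he).2).symm
    have h2 := hones x hx
    rw [h1, Finset.sum_add_distrib, Finset.sum_const, nsmul_eq_mul] at h2
    exact h2
  -- singleton-sum bounds
  have hsing : ∀ t : Finset α, t ⊆ V → t.card = 1 → m ≤ ∑ y ∈ t, G y ∧ ∑ y ∈ t, G y ≤ M := by
    intro t htV htc
    obtain ⟨z, rfl⟩ := Finset.card_eq_one.mp htc
    rw [Finset.sum_singleton]
    exact hbound z (htV (Finset.mem_singleton_self z))
  have herasesub : ∀ x : α, ∀ e ∈ E.filter (fun e => x ∈ e),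
      (e.erase x) ⊆ V ∧ (e.erase x).card = 1 := by
    intro x e he
    rw [Finset.mem_filter] at he
    exact ⟨(Finset.erase_subset _ _).trans (hE e he.1).1,
      by rw [Finset.card_erase_of_mem he.2, (hE e he.1).2]⟩
  have hNinj : ∀ x : α, ∀ e ∈ E.filter (fun e => x ∈ e), ∀ e' ∈ E.filter (fun e => x ∈ e),
      e.erase x = e'.erase x → e = e' := by
    intro x e he e' he' hee
    rw [Finset.mem_filter] at he he'
    rw [← Finset.insert_erase he.2, hee, Finset.insert_erase he'.2]
  set P : ℝ := ((E.filter (fun e => p ∈ e)).card : ℝ) with hP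
  set Q : ℝ := ((E.filter (fun e => q ∈ e)).card : ℝ) with hQ
  set Sp : ℝ := ∑ e ∈ E.filter (fun e => p ∈ e), ∑ y ∈ e.erase p, G y with hSp
  set Sq : ℝ := ∑ e ∈ E.filter (fun e => q ∈ e), ∑ y ∈ e.erase q, G y with hSq
  have hSp_lb : P * m ≤ Sp := by
    calc P * m = ∑ _e ∈ E.filter (fun e => p ∈ e), m := by
          rw [Finset.sum_const, nsmul_eq_mul]
    _ ≤ Sp := Finset.sum_le_sum
        (fun e he => (hsing _ (herasesub p e he).1 (herasesub p e he).2).1)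
  have hSq_ub : Sq ≤ Q * M := by
    calc Sq ≤ ∑ _e ∈ E.filter (fun e => q ∈ e), M := Finset.sum_le_sum
          (fun e he => (hsing _ (herasesub q e he).1 (herasesub q e he).2).2)
    _ = Q * M := by rw [Finset.sum_const, nsmul_eq_mul]
  have hdp : P * M + Sp = 1 := hdecomp p hpV
  have hdq : Q * m + Sq = 1 := hdecomp q hqV
  have hB1 : P * (M + m) ≤ 1 := by nlinarith [hSp_lb]
  have hB2 : 1 ≤ Q * (M + m) := by nlinarith [hSq_ub]
  have hSimg : ∀ x : α, ∑ e ∈ E.filter (fun e => x ∈ e), ∑ y ∈ e.erase x, G y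
      = ∑ t ∈ N x, ∑ y ∈ t, G y :=
    fun x => by
      rw [hN]
      exact (Finset.sum_image (f := fun t => ∑ y ∈ t, G y) (hNinj x)).symm
  have hpairsums : Q * m - P * M
      = (∑ t ∈ N p \ N q, ∑ y ∈ t, G y) - (∑ t ∈ N q \ N p, ∑ y ∈ t, G y) := by
    have h3 : Sp - Sq = (∑ t ∈ N p \ N q, ∑ y ∈ t, G y)
        - (∑ t ∈ N q \ N p, ∑ y ∈ t, G y) := by
      rw [hSp, hSq, hSimg p, hSimg q]
      have e1 := Finset.sum_inter_add_sum_sdiff (N p) (N q) (fun t => ∑ y ∈ t, G y)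
      have e2 := Finset.sum_inter_add_sum_sdiff (N q) (N p) (fun t => ∑ y ∈ t, G y)
      rw [Finset.inter_comm] at e2
      linarith
    linarith
  have hNtb : ∀ x : α, ∀ t ∈ N x, m ≤ ∑ y ∈ t, G y ∧ ∑ y ∈ t, G y ≤ M := by
    intro x t ht
    obtain ⟨htV, htc, -, -⟩ := hNmem x t ht
    exact hsing t htV htc
  set c : ℝ := ((N p ∩ N q).card : ℝ) with hc
  have hsd1 : ((N p \ N q).card : ℝ) = P - c := by
    have hcap : (N p ∩ N q).card + (N p \ N q).card = (E.filter (fun e => p ∈ e)).card := by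
      rw [Finset.card_inter_add_card_sdiff, hNcard]
    have := congrArg (Nat.cast : ℕ → ℝ) hcap
    push_cast at this
    linarith
  have hsd2 : ((N q \ N p).card : ℝ) = Q - c := by
    have hcap : (N q ∩ N p).card + (N q \ N p).card = (E.filter (fun e => q ∈ e)).card := by
      rw [Finset.card_inter_add_card_sdiff, hNcard]
    rw [Finset.inter_comm] at hcap
    have := congrArg (Nat.cast : ℕ → ℝ) hcap
    push_cast at this
    linarith
  have hcP : c ≤ P := by
    have h1 : (N p ∩ N q).card ≤ (N p).card := Finset.card_le_card Finset.inter_subset_left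
    rw [hNcard] at h1
    rw [hc, hP]
    exact_mod_cast h1
  have hcn : P + Q ≤ (V.card : ℝ) + c := by
    have h1 := Finset.card_union_add_card_inter (N p) (N q)
    have h2 : (N p ∪ N q).card ≤ V.card :=
      le_trans (Finset.card_le_card (Finset.union_subset (hNsub p) (hNsub q)))
        Finset.card_image_le
    have h3 : (N p).card + (N q).card ≤ V.card + (N p ∩ N q).card := by omega
    rw [hNcard, hNcard] at h3
    rw [hP, hQ, hc]
    exact_mod_cast h3
  have hd1 : (P - c) * m ≤ ∑ t ∈ N p \ N q, ∑ y ∈ t, G y := by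
    rw [← hsd1]
    calc ((N p \ N q).card : ℝ) * m = ∑ _t ∈ N p \ N q, m := by
          rw [Finset.sum_const, nsmul_eq_mul]
    _ ≤ _ := Finset.sum_le_sum (fun t ht => (hNtb p t (Finset.sdiff_subset ht)).1)
  have hd2 : ∑ t ∈ N q \ N p, ∑ y ∈ t, G y ≤ (Q - c) * M := by
    rw [← hsd2]
    calc ∑ t ∈ N q \ N p, ∑ y ∈ t, G y ≤ ∑ _t ∈ N q \ N p, M :=
          Finset.sum_le_sum (fun t ht => (hNtb q t (Finset.sdiff_subset ht)).2)
    _ = ((N q \ N p).card : ℝ) * M := by rw [Finset.sum_const, nsmul_eq_mul]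
  have h3 : (P - c) * m - (Q - c) * M ≤ Q * m - P * M := by
    rw [hpairsums]; linarith
  have hQ0 : (0:ℝ) ≤ Q := by rw [hQ]; exact Nat.cast_nonneg _
  have hQn : Q ≤ (V.card : ℝ) := by
    have := hNn q; rw [hNcard] at this; linarith
  have hmM : m ≤ M := hpmax q hqV
  clear_value G M m P Q c Sp Sq
  have hMm_pos : 0 < M + m := by
    by_contra hcon
    push_neg at hcon
    have : Q * (M + m) ≤ 0 := mul_nonpos_iff.mpr (Or.inl ⟨hQ0, hcon⟩)
    linarith
  have hPQle : P ≤ Q := by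
    by_contra hcon
    push_neg at hcon
    have := mul_lt_mul_of_pos_right hcon hMm_pos
    linarith
  have hPpos : 0 < P := by
    have h1 : (0:ℝ) < (1/2+γ) * (V.card:ℝ) := mul_pos (by linarith) hn0
    linarith [hdeg' p hpV]
  have hM2 : 1 ≤ 2*(V.card:ℝ)*M := by
    have k1 : Q*(M+m) ≤ (V.card:ℝ)*(M+m) := mul_le_mul_of_nonneg_right hQn hMm_pos.le
    have k2 : (V.card:ℝ)*(M+m) ≤ (V.card:ℝ)*(2*M) :=
      mul_le_mul_of_nonneg_left (by linarith) hn0.le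
    linarith
  have hMpos' : 0 < M := by
    by_contra hcon
    push_neg at hcon
    have : 2*(V.card:ℝ)*M ≤ 0 := mul_nonpos_iff.mpr (Or.inl ⟨by positivity, hcon⟩)
    linarith
  have h2γn : (0:ℝ) < 2*γ*(V.card:ℝ) := by positivity
  have hBlb : 2*γ*(V.card:ℝ) ≤ c + P - Q := by linarith [hcn, hdeg' p hpV]
  have hAub : c + Q - P ≤ (V.card:ℝ) := by linarith [hcP, hQn]
  have hApos : 0 < c + Q - P := by linarith [hBlb, hPQle]
  have h3' : M * (c + P - Q) ≤ m * (c + Q - P) := by linarith [h3]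
  have hmpos : 0 < m := by
    have k1 : M*(2*γ*(V.card:ℝ)) ≤ M*(c+P-Q) := mul_le_mul_of_nonneg_left hBlb hMpos'.le
    have k2 : 0 < M*(2*γ*(V.card:ℝ)) := mul_pos hMpos' h2γn
    have k3 : 0 < m * (c + Q - P) := by linarith
    rcases mul_pos_iff.mp k3 with ⟨h5, -⟩ | ⟨-, h6⟩
    · exact h5
    · linarith
  have hm_lb : γ/(V.card:ℝ) ≤ m := by
    rw [div_le_iff₀ hn0]
    have h6 : m * (c + Q - P) ≤ m * (V.card:ℝ) := mul_le_mul_of_nonneg_left hAub hmpos.le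
    have h7 : M * (2*γ*(V.card:ℝ)) ≤ M * (c+P-Q) := mul_le_mul_of_nonneg_left hBlb hMpos'.le
    have h8 : γ ≤ M * (2*γ*(V.card:ℝ)) := by
      have := mul_le_mul_of_nonneg_right hM2 hγ.le
      linarith
    linarith [h6, h7, h8, h3']
  have hM_ub : M * (V.card:ℝ) ≤ 2 := by
    have h9 : M * P ≤ 1 := by
      have : 0 ≤ P*m := mul_nonneg hPpos.le hmpos.le
      linarith
    have k4 : M*((1/2+γ)*(V.card:ℝ)) ≤ M*P := by
      rw [hP]
      exact mul_le_mul_of_nonneg_left (hdeg' p hpV) hMpos'.le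
    have k5 : 0 ≤ M*(V.card:ℝ)*γ := mul_nonneg (mul_nonneg hMpos'.le hn0.le) hγ.le
    linarith
  refine ⟨fun e => ∑ y ∈ e, G y, ?_, fun v hv => hones v hv⟩
  intro e he
  have heV := (hE e he).1
  have hec : (e.card : ℝ) = 2 := by rw [(hE e he).2]; norm_num
  have hlb : 2*m ≤ ∑ y ∈ e, G y := by
    have := sum_card_mul_le G (fun y hy => (hbound y (heV hy)).1)
    rwa [hec] at this
  have hub : ∑ y ∈ e, G y ≤ 2*M := by
    have := sum_le_card_mul G (fun y hy => (hbound y (heV hy)).2)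
    rwa [hec] at this
  have hγ' : (0:ℝ) < 1/γ := by positivity
  constructor
  · have hgn : 1/((4+1/γ)*(V.card:ℝ)) ≤ γ/(V.card:ℝ) := by
      rw [div_le_div_iff₀ (by positivity) hn0]
      have hfi : γ*((4+1/γ)*(V.card:ℝ)) = 4*γ*(V.card:ℝ) + (V.card:ℝ) := by
        field_simp
      rw [hfi]
      have : (0:ℝ) ≤ 4*γ*(V.card:ℝ) := by positivity
      linarith
    linarith [hgn, hm_lb, hmpos, hlb]
  · have hup : 2*M ≤ (4+1/γ)/(V.card:ℝ) := by
      rw [le_div_iff₀ hn0]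
      linarith [hM_ub, hγ']
    linarith [hub, hup]





set_option maxHeartbeats 2000000 in
lemma aux (γ : ℝ) (hγ : 0 < γ) :
    ∀ k : ℕ, 2 ≤ k →
    ∃ C : ℝ, 0 < C ∧ ∃ n₀ : ℕ, ∀ (α : Type) [DecidableEq α], ∀ (V : Finset α)
      (E : Finset (Finset α)),
      n₀ ≤ V.card →
      (∀ e ∈ E, e ⊆ V ∧ e.card = k) →
      (∀ S : Finset α, S ⊆ V → S.card = k - 1 →
        (1/2 + γ) * (V.card : ℝ) ≤ ((E.filter (fun e => S ⊆ e)).card : ℝ)) →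
      ∃ x : Finset α → ℝ,
        (∀ e ∈ E, 1 / (C * (V.card : ℝ) ^ (k-1)) ≤ x e ∧ x e ≤ C / (V.card : ℝ) ^ (k-1)) ∧
        (∀ v ∈ V, ∑ e ∈ E.filter (fun e => v ∈ e), x e = 1) := by
  intro k hk
  induction k, hk using Nat.le_induction with
  | base =>
    refine ⟨4 + 1/γ, by positivity, 1, ?_⟩
    intro α _ V E hn hE hdeg
    obtain ⟨x, hb, hp⟩ := base_case hγ V E hn hE (fun S h1 h2 => hdeg S h1 (by simpa using h2))
    refine ⟨x, fun e he => ?_, hp⟩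
    have h := hb e he
    norm_num at h ⊢
    exact h
  | succ k hk ih =>
    obtain ⟨C', hC', n₀', ihf⟩ := ih
    refine ⟨C' * (k+1) * 2^(k+1), by positivity, n₀' + k + 2, ?_⟩
    intro α _ V E hn hE hdeg
    have hn2 : 2 ≤ V.card := by omega
    have hcV : (2:ℝ) ≤ (V.card:ℝ) := by exact_mod_cast hn2
    have hn0 : (0:ℝ) < (V.card:ℝ) := by linarith
    have hnn1 : (0:ℝ) < (V.card:ℝ) - 1 := by linarith
    have hkpos : (0:ℝ) < (k:ℝ) := by exact_mod_cast (by omega : 0 < k)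
    have hVe : ∀ v ∈ V, ((V.erase v).card : ℝ) = (V.card:ℝ) - 1 := by
      intro v hv
      rw [Finset.card_erase_of_mem hv]
      have h1 : 1 ≤ V.card := by omega
      rw [Nat.cast_sub h1, Nat.cast_one]
    -- link fractional matchings
    have hlink : ∀ v ∈ V, ∃ y : Finset α → ℝ,
        (∀ e' ∈ (E.filter (fun e => v ∈ e)).image (fun e => e.erase v),
          1 / (C' * (((V.erase v).card : ℝ)) ^ (k-1)) ≤ y e' ∧
            y e' ≤ C' / (((V.erase v).card : ℝ)) ^ (k-1)) ∧
        (∀ u ∈ V.erase v,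
          ∑ e' ∈ ((E.filter (fun e => v ∈ e)).image (fun e => e.erase v)).filter
            (fun e' => u ∈ e'), y e' = 1) := by
      intro v hv
      refine ihf α (V.erase v) ((E.filter (fun e => v ∈ e)).image (fun e => e.erase v))
        ?_ ?_ ?_
      · rw [Finset.card_erase_of_mem hv]; omega
      · intro e' he'
        obtain ⟨e, he, rfl⟩ := Finset.mem_image.mp he'
        rw [Finset.mem_filter] at he
        refine ⟨Finset.erase_subset_erase v (hE e he.1).1, ?_⟩
        rw [Finset.card_erase_of_mem he.2, (hE e he.1).2]
        omega
      · intro S hS hScard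
        have hvS : v ∉ S := fun h => (Finset.mem_erase.mp (hS h)).1 rfl
        have hcard : (insert v S).card = (k+1) - 1 := by
          rw [Finset.card_insert_of_notMem hvS, hScard]
          omega
        have hsub : insert v S ⊆ V := by
          intro x hx
          rcases Finset.mem_insert.mp hx with rfl | hx'
          · exact hv
          · exact (Finset.erase_subset _ _) (hS hx')
        have hd := hdeg (insert v S) hsub hcard
        have hinj2 : ∀ e ∈ E.filter (fun e => insert v S ⊆ e),
            ∀ e' ∈ E.filter (fun e => insert v S ⊆ e), e.erase v = e'.erase v → e = e' := by
          intro e he e' he' h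
          rw [Finset.mem_filter] at he he'
          have h1 : v ∈ e := he.2 (Finset.mem_insert_self v S)
          have h2 : v ∈ e' := he'.2 (Finset.mem_insert_self v S)
          rw [← Finset.insert_erase h1, h, Finset.insert_erase h2]
        have himg : ((E.filter (fun e => v ∈ e)).image (fun e => e.erase v)).filter
            (fun e' => S ⊆ e')
            = (E.filter (fun e => insert v S ⊆ e)).image (fun e => e.erase v) := by
          ext e'
          simp only [Finset.mem_filter, Finset.mem_image]
          constructor
          · rintro ⟨⟨e, he, rfl⟩, hSe⟩
            exact ⟨e, ⟨he.1, Finset.insert_subset he.2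
              (hSe.trans (Finset.erase_subset _ _))⟩, rfl⟩
          · rintro ⟨e, he, rfl⟩
            have hv' : v ∈ e := he.2 (Finset.mem_insert_self v S)
            refine ⟨⟨e, ⟨he.1, hv'⟩, rfl⟩, ?_⟩
            intro x hx
            rw [Finset.mem_erase]
            exact ⟨fun hxv => hvS (hxv ▸ hx), he.2 (Finset.mem_insert_of_mem hx)⟩
        have hcardeq : (((E.filter (fun e => v ∈ e)).image (fun e => e.erase v)).filter
            (fun e' => S ⊆ e')).card = (E.filter (fun e => insert v S ⊆ e)).card := by
          rw [himg]
          exact Finset.card_image_of_injOn (fun e he e' he' h => hinj2 e he e' he' h)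
        rw [hcardeq]
        calc (1/2+γ) * ((V.erase v).card : ℝ) ≤ (1/2+γ) * (V.card:ℝ) := by
              have hle : ((V.erase v).card:ℝ) ≤ (V.card:ℝ) := by rw [hVe v hv]; linarith
              exact mul_le_mul_of_nonneg_left hle (by linarith)
        _ ≤ _ := hd
    -- choose the link matchings
    set Y : α → Finset α → ℝ := fun v => if h : v ∈ V then (hlink v h).choose else 0 with hY
    have hYb : ∀ (v : α) (hv : v ∈ V),
        ∀ e' ∈ (E.filter (fun e => v ∈ e)).image (fun e => e.erase v),
          1 / (C' * (((V.erase v).card : ℝ)) ^ (k-1)) ≤ Y v e' ∧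
            Y v e' ≤ C' / (((V.erase v).card : ℝ)) ^ (k-1) := by
      intro v hv
      have h : Y v = (hlink v hv).choose := dif_pos hv
      rw [h]
      exact (hlink v hv).choose_spec.1
    have hYp : ∀ (v : α) (hv : v ∈ V), ∀ u ∈ V.erase v,
        ∑ e' ∈ ((E.filter (fun e => v ∈ e)).image (fun e => e.erase v)).filter
          (fun e' => u ∈ e'), Y v e' = 1 := by
      intro v hv
      have h : Y v = (hlink v hv).choose := dif_pos hv
      rw [h]
      exact (hlink v hv).choose_spec.2
    refine ⟨fun e => (k:ℝ)/(((k:ℝ)+1)*((V.card:ℝ)-1)) * ∑ v ∈ e, Y v (e.erase v), ?_, ?_⟩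
    · -- bounds
      intro e he
      have heV := (hE e he).1
      have hlink_mem : ∀ v ∈ e,
          (e.erase v) ∈ (E.filter (fun e => v ∈ e)).image (fun e => e.erase v) :=
        fun v hv => Finset.mem_image.mpr ⟨e, Finset.mem_filter.mpr ⟨he, hv⟩, rfl⟩
      have hYlo : ∀ v ∈ e, 1/(C' * ((V.card:ℝ)-1) ^ (k-1)) ≤ Y v (e.erase v) := by
        intro v hv
        have h1 := (hYb v (heV hv) _ (hlink_mem v hv)).1
        rwa [hVe v (heV hv)] at h1
      have hYhi : ∀ v ∈ e, Y v (e.erase v) ≤ C' / ((V.card:ℝ)-1) ^ (k-1) := by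
        intro v hv
        have h1 := (hYb v (heV hv) _ (hlink_mem v hv)).2
        rwa [hVe v (heV hv)] at h1
      have hsum_lo := sum_card_mul_le (fun v => Y v (e.erase v)) hYlo
      have hsum_hi := sum_le_card_mul (fun v => Y v (e.erase v)) hYhi
      have hecard : ((e.card : ℕ) : ℝ) = (k:ℝ)+1 := by rw [(hE e he).2]; push_cast; ring
      rw [hecard] at hsum_lo hsum_hi
      have hpowpos : (0:ℝ) < ((V.card:ℝ)-1)^(k-1) := pow_pos hnn1 _
      have hcoefpos : (0:ℝ) < (k:ℝ)/(((k:ℝ)+1)*((V.card:ℝ)-1)) := by positivity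
      have hk1 : k - 1 + 1 = k := by omega
      have hpowk : ((V.card:ℝ)-1)^(k-1) * ((V.card:ℝ)-1) = ((V.card:ℝ)-1)^k := by
        rw [← pow_succ, hk1]
      have q1 : (1:ℝ) ≤ (k:ℝ) := by exact_mod_cast (by omega : 1 ≤ k)
      have q3 : (1:ℝ) ≤ (2:ℝ)^(k+1) := one_le_pow₀ (by norm_num)
      have hexp : k + 1 - 1 = k := by omega
      constructor
      · -- lower bound
        rw [hexp]
        have key2 : (k:ℝ)/(((k:ℝ)+1)*((V.card:ℝ)-1)) * (((k:ℝ)+1)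
            * (1/(C' * ((V.card:ℝ)-1) ^ (k-1)))) = (k:ℝ)/(C' * ((V.card:ℝ)-1)^k) := by
          rw [← hpowk]
          field_simp
        have key1 : 1/(C' * ((k:ℝ)+1) * 2^(k+1) * (V.card:ℝ)^k)
            ≤ (k:ℝ)/(C' * ((V.card:ℝ)-1)^k) := by
          rw [div_le_div_iff₀ (by positivity) (by positivity)]
          have p1 : ((V.card:ℝ)-1)^k ≤ (V.card:ℝ)^k :=
            pow_le_pow_left₀ hnn1.le (by linarith) k
          have p2 : (1:ℝ) ≤ (k:ℝ) * (((k:ℝ)+1) * (2:ℝ)^(k+1)) := by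
            have p3 : (1:ℝ) ≤ ((k:ℝ)+1) * (2:ℝ)^(k+1) := by nlinarith
            nlinarith
          have p4 : C' * ((V.card:ℝ)-1)^k ≤ C' * (V.card:ℝ)^k :=
            mul_le_mul_of_nonneg_left p1 hC'.le
          have p5 : C' * (V.card:ℝ)^k * 1 ≤ (C' * (V.card:ℝ)^k)
              * ((k:ℝ) * (((k:ℝ)+1) * (2:ℝ)^(k+1))) :=
            mul_le_mul_of_nonneg_left p2 (by positivity)
          nlinarith [p4, p5]
        have hfin : (k:ℝ)/(((k:ℝ)+1)*((V.card:ℝ)-1)) * (((k:ℝ)+1)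
            * (1/(C' * ((V.card:ℝ)-1) ^ (k-1))))
            ≤ (k:ℝ)/(((k:ℝ)+1)*((V.card:ℝ)-1)) * ∑ v ∈ e, Y v (e.erase v) :=
          mul_le_mul_of_nonneg_left hsum_lo hcoefpos.le
        calc 1/(C' * ((k:ℝ)+1) * 2^(k+1) * (V.card:ℝ)^k)
            ≤ (k:ℝ)/(C' * ((V.card:ℝ)-1)^k) := key1
        _ = _ := key2.symm
        _ ≤ _ := hfin
      · -- upper bound
        rw [hexp]
        have key2' : (k:ℝ)/(((k:ℝ)+1)*((V.card:ℝ)-1)) * (((k:ℝ)+1)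
            * (C'/ ((V.card:ℝ)-1) ^ (k-1))) = (k:ℝ)*C'/(((V.card:ℝ)-1)^k) := by
          rw [← hpowk]
          field_simp
        have key1' : (k:ℝ)*C'/(((V.card:ℝ)-1)^k)
            ≤ (C' * ((k:ℝ)+1) * 2^(k+1)) / (V.card:ℝ)^k := by
          rw [div_le_div_iff₀ (by positivity) (by positivity)]
          have hnle : (V.card:ℝ) ≤ 2*((V.card:ℝ)-1) := by linarith
          have hp2 : (V.card:ℝ)^k ≤ 2^k * ((V.card:ℝ)-1)^k := by
            calc (V.card:ℝ)^k ≤ (2*((V.card:ℝ)-1))^k := pow_le_pow_left₀ hn0.le hnle k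
            _ = 2^k * ((V.card:ℝ)-1)^k := mul_pow 2 _ k
          have hp3 : (k:ℝ)*C'*((V.card:ℝ)^k) ≤ (k:ℝ)*C'*(2^k * ((V.card:ℝ)-1)^k) :=
            mul_le_mul_of_nonneg_left hp2 (by positivity)
          have hp4 : (2:ℝ)^(k+1) = 2*2^k := by rw [pow_succ]; ring
          have hp5 : (k:ℝ)*C'*(2^k * ((V.card:ℝ)-1)^k)
              ≤ C' * ((k:ℝ)+1) * 2^(k+1) * ((V.card:ℝ)-1)^k := by
            rw [hp4]
            have hq : (0:ℝ) ≤ C' * (2^k * ((V.card:ℝ)-1)^k) := by positivity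
            nlinarith [hq]
          linarith
        have hfin' : (k:ℝ)/(((k:ℝ)+1)*((V.card:ℝ)-1)) * ∑ v ∈ e, Y v (e.erase v)
            ≤ (k:ℝ)/(((k:ℝ)+1)*((V.card:ℝ)-1)) * (((k:ℝ)+1)
              * (C'/ ((V.card:ℝ)-1) ^ (k-1))) :=
          mul_le_mul_of_nonneg_left hsum_hi hcoefpos.le
        calc (k:ℝ)/(((k:ℝ)+1)*((V.card:ℝ)-1)) * ∑ v ∈ e, Y v (e.erase v)
            ≤ (k:ℝ)*C'/(((V.card:ℝ)-1)^k) := by rw [← key2']; exact hfin'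
        _ ≤ _ := key1'
    · -- perfect fractional matching
      intro u hu
      have hT1inj : ∀ e ∈ E.filter (fun e => u ∈ e), ∀ e' ∈ E.filter (fun e => u ∈ e),
          e.erase u = e'.erase u → e = e' := by
        intro e he e' he' h
        rw [Finset.mem_filter] at he he'
        rw [← Finset.insert_erase he.2, h, Finset.insert_erase he'.2]
      have hsplit : ∑ e ∈ E.filter (fun e => u ∈ e), ∑ v ∈ e, Y v (e.erase v)
          = (∑ e ∈ E.filter (fun e => u ∈ e), Y u (e.erase u))
            + ∑ e ∈ E.filter (fun e => u ∈ e), ∑ v ∈ e.erase u, Y v (e.erase v) := by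
        rw [← Finset.sum_add_distrib]
        refine Finset.sum_congr rfl fun e he => ?_
        exact (Finset.add_sum_erase _ _ (Finset.mem_filter.mp he).2).symm
      -- T1
      have hT1img : ∑ e ∈ E.filter (fun e => u ∈ e), Y u (e.erase u)
          = ∑ e' ∈ (E.filter (fun e => u ∈ e)).image (fun e => e.erase u), Y u e' :=
        (Finset.sum_image (f := Y u) hT1inj).symm
      have hLsub : ∀ t ∈ (E.filter (fun e => u ∈ e)).image (fun e => e.erase u),
          t ⊆ V.erase u := by
        intro t ht
        obtain ⟨e, he, rfl⟩ := Finset.mem_image.mp ht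
        rw [Finset.mem_filter] at he
        exact Finset.erase_subset_erase u (hE e he.1).1
      have hswap1 : ∑ t ∈ (E.filter (fun e => u ∈ e)).image (fun e => e.erase u),
            ∑ _w ∈ t, Y u t
          = ∑ w ∈ V.erase u, ∑ t ∈ ((E.filter (fun e => u ∈ e)).image
              (fun e => e.erase u)).filter (fun t => w ∈ t), Y u t :=
        sum_sum_swap _ (fun t => t) _ hLsub (fun _ t => Y u t)
      have hLcard : ∀ t ∈ (E.filter (fun e => u ∈ e)).image (fun e => e.erase u),
          (t.card : ℝ) = (k:ℝ) := by
        intro t ht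
        obtain ⟨e, he, rfl⟩ := Finset.mem_image.mp ht
        rw [Finset.mem_filter] at he
        rw [Finset.card_erase_of_mem he.2, (hE e he.1).2]
        push_cast [Nat.add_sub_cancel]
        ring
      have hT1val : (k:ℝ) * (∑ e ∈ E.filter (fun e => u ∈ e), Y u (e.erase u))
          = (V.card:ℝ) - 1 := by
        rw [hT1img]
        calc (k:ℝ) * ∑ e' ∈ (E.filter (fun e => u ∈ e)).image (fun e => e.erase u), Y u e'
            = ∑ t ∈ (E.filter (fun e => u ∈ e)).image (fun e => e.erase u),
                ∑ _w ∈ t, Y u t := by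
              rw [Finset.mul_sum]
              refine Finset.sum_congr rfl fun t ht => ?_
              rw [Finset.sum_const, nsmul_eq_mul, hLcard t ht]
        _ = ∑ w ∈ V.erase u, ∑ t ∈ ((E.filter (fun e => u ∈ e)).image
              (fun e => e.erase u)).filter (fun t => w ∈ t), Y u t := hswap1
        _ = ∑ _w ∈ V.erase u, (1:ℝ) := Finset.sum_congr rfl fun w hw => hYp u hu w hw
        _ = ((V.erase u).card : ℝ) := by rw [Finset.sum_const, nsmul_eq_mul, mul_one]
        _ = (V.card:ℝ) - 1 := hVe u hu
      -- T2
      have hT2sub : ∀ e ∈ E.filter (fun e => u ∈ e), e.erase u ⊆ V.erase u :=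
        fun e he => Finset.erase_subset_erase u (hE e (Finset.mem_filter.mp he).1).1
      have hswap2 : ∑ e ∈ E.filter (fun e => u ∈ e), ∑ v ∈ e.erase u, Y v (e.erase v)
          = ∑ v ∈ V.erase u, ∑ e ∈ (E.filter (fun e => u ∈ e)).filter
              (fun e => v ∈ e.erase u), Y v (e.erase v) :=
        sum_sum_swap _ (fun e => e.erase u) _ hT2sub (fun v e => Y v (e.erase v))
      have hT2val : ∑ e ∈ E.filter (fun e => u ∈ e), ∑ v ∈ e.erase u, Y v (e.erase v)
          = (V.card:ℝ) - 1 := by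
        rw [hswap2]
        have hinner : ∀ v ∈ V.erase u,
            ∑ e ∈ (E.filter (fun e => u ∈ e)).filter (fun e => v ∈ e.erase u),
              Y v (e.erase v) = 1 := by
          intro v hv
          have hvV : v ∈ V := Finset.mem_of_mem_erase hv
          have hvu : v ≠ u := (Finset.mem_erase.mp hv).1
          have hseteq : (E.filter (fun e => u ∈ e)).filter (fun e => v ∈ e.erase u)
              = E.filter (fun e => v ∈ e ∧ u ∈ e) := by
            ext e
            simp only [Finset.mem_filter, Finset.mem_erase]
            tauto
          have hinj_v : ∀ e ∈ E.filter (fun e => v ∈ e ∧ u ∈ e),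
              ∀ e' ∈ E.filter (fun e => v ∈ e ∧ u ∈ e), e.erase v = e'.erase v → e = e' := by
            intro e he e' he' h
            rw [Finset.mem_filter] at he he'
            rw [← Finset.insert_erase he.2.1, h, Finset.insert_erase he'.2.1]
          have himg2 : ((E.filter (fun e => v ∈ e)).image (fun e => e.erase v)).filter
              (fun e' => u ∈ e')
              = (E.filter (fun e => v ∈ e ∧ u ∈ e)).image (fun e => e.erase v) := by
            ext e'
            simp only [Finset.mem_filter, Finset.mem_image]
            constructor
            · rintro ⟨⟨e, he, rfl⟩, hue⟩
              exact ⟨e, ⟨he.1, he.2, Finset.mem_of_mem_erase hue⟩, rfl⟩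
            · rintro ⟨e, he, rfl⟩
              exact ⟨⟨e, ⟨he.1, he.2.1⟩, rfl⟩,
                Finset.mem_erase.mpr ⟨hvu.symm, he.2.2⟩⟩
          have hperf := hYp v hvV u (Finset.mem_erase.mpr ⟨hvu.symm, hu⟩)
          rw [himg2] at hperf
          rw [hseteq, ← Finset.sum_image (f := Y v) hinj_v]
          exact hperf
        rw [Finset.sum_congr rfl hinner, Finset.sum_const, nsmul_eq_mul, mul_one, hVe u hu]
      -- assemble
      have hT1 : ∑ e ∈ E.filter (fun e => u ∈ e), Y u (e.erase u) = ((V.card:ℝ)-1)/(k:ℝ) := by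
        rw [eq_div_iff (ne_of_gt hkpos)]
        linarith [hT1val]
      calc ∑ e ∈ E.filter (fun e => u ∈ e),
            (k:ℝ)/(((k:ℝ)+1)*((V.card:ℝ)-1)) * ∑ v ∈ e, Y v (e.erase v)
          = (k:ℝ)/(((k:ℝ)+1)*((V.card:ℝ)-1))
            * ∑ e ∈ E.filter (fun e => u ∈ e), ∑ v ∈ e, Y v (e.erase v) := by
            rw [Finset.mul_sum]
      _ = (k:ℝ)/(((k:ℝ)+1)*((V.card:ℝ)-1)) * (((V.card:ℝ)-1)/(k:ℝ) + ((V.card:ℝ)-1)) := by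
            rw [hsplit, hT1, hT2val]
      _ = 1 := by
            field_simp
            ring

end Stmt7Aux

open scoped Classical

/-- Lemma 4.2: every `(n,k,γ)`-graph (for `n` large) admits a `C`-normal perfect
fractional matching, i.e. an edge weighting `x` with
`1/(C n^{k−1}) ≤ x(e) ≤ C/n^{k−1}` for every edge `e` and
`Σ_{e ∋ v} x(e) = 1` for every vertex `v`. -/
theorem stmt_7 :
    ∀ k : ℕ, 2 ≤ k → ∀ γ : ℝ, 0 < γ →
    ∃ C : ℝ, 0 < C ∧ ∃ n₀ : ℕ, ∀ n : ℕ, n₀ ≤ n →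
    ∀ E : Finset (Finset (Fin n)),
      (∀ e ∈ E, e.card = k) →
      (∀ S : Finset (Fin n), S.card = k - 1 →
        (1/2 + γ) * (n : ℝ) ≤ ((E.filter (fun e => S ⊆ e)).card : ℝ)) →
      ∃ x : Finset (Fin n) → ℝ,
        (∀ e ∈ E, 1 / (C * (n : ℝ) ^ (k - 1)) ≤ x e ∧ x e ≤ C / (n : ℝ) ^ (k - 1)) ∧
        (∀ v : Fin n, ∑ e ∈ E.filter (fun e => v ∈ e), x e = 1) := by
  intro k hk γ hγ
  obtain ⟨C, hC, n₀, h⟩ := Stmt7Aux.aux γ hγ k hk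
  refine ⟨C, hC, n₀, ?_⟩
  intro n hn E hEcard hdeg
  have hVcard : (Finset.univ : Finset (Fin n)).card = n := by simp
  obtain ⟨x, hb, hp⟩ := h (Fin n) Finset.univ E (by rw [hVcard]; exact hn)
    (fun e he => ⟨Finset.subset_univ e, hEcard e he⟩)
    (fun S _ hS => by rw [hVcard]; exact hdeg S hS)
  refine ⟨x, ?_, fun v => hp v (Finset.mem_univ v)⟩
  intro e he
  have hbe := hb e he
  rwa [hVcard] at hbe
end

section
/- Let k ≥ 2, let G be a k-graph, let M be an ordered (k−1)-tuple of distinct vertices of G, and let x: E(G) → ℝ⁺ be a positive r-upper-balanced edge weighting. Let X = (X_{−(k−2)},…) be the self-avoiding x-walk and Y = (Y_{−(k−2)},…) the simple x-walk on G, each with starting tuple M. Then for any positive integer q ≤ δ(G), the total variation distance between X_q and Y_q is at most q²r. -/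
open scoped Classical

set_option linter.unusedSectionVars false
set_option linter.unusedVariables false

noncomputable section

variable {V : Type*} [Fintype V] [DecidableEq V]

/-- An edge weighting extended by zero to non-edges. -/
def xw (E : Finset (Finset V)) (x : Finset V → ℝ) (e : Finset V) : ℝ :=
  if e ∈ E then x e else 0

/-- Unnormalised transition weight of an `x`-walk on the `k`-graph with edge set `E`:
the history `h` of the walk is stored most-recent-first, and the weight of moving to
`v` is `x` of the edge formed by the last `k−1` visited vertices together with `v`
(zero for non-edges); for the self-avoiding walk (`sa = true`) previously visited
vertices get weight zero. -/
def stepw (k : ℕ) (E : Finset (Finset V)) (x : Finset V → ℝ) (sa : Bool)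
    (h : List V) (v : V) : ℝ :=
  if sa = true ∧ v ∈ h then 0 else xw E x (insert v (h.take (k-1)).toFinset)

/-- Transition probability of the `x`-walk (zero if the walk has terminated). -/
def trp (k : ℕ) (E : Finset (Finset V)) (x : Finset V → ℝ) (sa : Bool)
    (h : List V) (v : V) : ℝ :=
  stepw k E x sa h v / ∑ w : V, stepw k E x sa h w

/-- The distribution of the history (most-recent-first) of the `x`-walk after `j`
steps, given the distribution `ν` of the initial history. -/
def walkDist (k : ℕ) (E : Finset (Finset V)) (x : Finset V → ℝ) (sa : Bool)
    (ν : List V → ℝ) : ℕ → List V → ℝ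
  | 0, l => ν l
  | _+1, [] => 0
  | j+1, v :: t => walkDist k E x sa ν j t * trp k E x sa t v

/-- The probability that the `x`-walk is at the vertex `v` at time `q`. -/
def headProb (k : ℕ) (E : Finset (Finset V)) (x : Finset V → ℝ) (sa : Bool)
    (ν : List V → ℝ) (q : ℕ) (v : V) : ℝ :=
  ∑ f : Fin (k - 1 + q) → V,
    if (List.ofFn f).head? = some v then walkDist k E x sa ν q (List.ofFn f) else 0

/-- The initial history (most-recent-first) determined by a starting
`(k−1)`-tuple `S`. -/
def startList {k : ℕ} (S : Fin (k-1) → V) : List V := (List.ofFn S).reverse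

/-- The initial history distribution concentrated on the starting tuple `S`. -/
def startDist {k : ℕ} (S : Fin (k-1) → V) : List V → ℝ :=
  fun l => if l = startList S then 1 else 0

/-- `x` is `r`-upper-balanced: every transition probability of an `x`-walk is at most
`r`. -/
def UpperBalanced (k : ℕ) (E : Finset (Finset V)) (x : Finset V → ℝ) (r : ℝ) : Prop :=
  ∀ S : Finset V, S.card = k - 1 → (∃ u, insert u S ∈ E) →
    ∀ v, insert v S ∈ E →
      x (insert v S) / (∑ v' : V, xw E x (insert v' S)) ≤ r

section Aux

variable {k : ℕ} {E : Finset (Finset V)} {x : Finset V → ℝ} {r : ℝ} {M : Fin (k-1) → V}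

private lemma xw_nonneg (hx : ∀ e ∈ E, 0 < x e) (e : Finset V) : 0 ≤ xw E x e := by
  unfold xw; split
  · exact (hx _ ‹_›).le
  · exact le_refl 0

private lemma stepw_nonneg (hx : ∀ e ∈ E, 0 < x e) (sa : Bool) (h : List V) (v : V) :
    0 ≤ stepw k E x sa h v := by
  unfold stepw; split
  · exact le_refl 0
  · exact xw_nonneg hx _

private lemma trp_nonneg (hx : ∀ e ∈ E, 0 < x e) (sa : Bool) (h : List V) (v : V) :
    0 ≤ trp k E x sa h v :=
  div_nonneg (stepw_nonneg hx sa h v) (Finset.sum_nonneg fun w _ => stepw_nonneg hx sa h w)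

private lemma sum_trp_le_one (hx : ∀ e ∈ E, 0 < x e) (sa : Bool) (h : List V) :
    ∑ v : V, trp k E x sa h v ≤ 1 := by
  unfold trp
  rw [← Finset.sum_div]
  rcases eq_or_ne (∑ w : V, stepw k E x sa h w) 0 with h0 | h0
  · simp [h0]
  · rw [div_self h0]

private lemma sum_trp_eq_one {sa : Bool} {h : List V}
    (hpos : 0 < ∑ w : V, stepw k E x sa h w) :
    ∑ v : V, trp k E x sa h v = 1 := by
  unfold trp
  rw [← Finset.sum_div, div_self hpos.ne']

private lemma walkDist_nonneg (hx : ∀ e ∈ E, 0 < x e) (sa : Bool) {ν : List V → ℝ}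
    (hν : ∀ l, 0 ≤ ν l) : ∀ (j : ℕ) (l : List V), 0 ≤ walkDist k E x sa ν j l := by
  intro j
  induction j with
  | zero => exact hν
  | succ j ih =>
    intro l
    match l with
    | [] => simp [walkDist]
    | v :: t =>
      simp only [walkDist]
      exact mul_nonneg (ih t) (trp_nonneg hx sa t v)

private lemma startDist_nonneg (M : Fin (k-1) → V) : ∀ l, 0 ≤ startDist M l := by
  intro l; unfold startDist; split <;> norm_num

private lemma startList_nodup (hM : Function.Injective M) : (startList M).Nodup := by
  simpa [startList, List.nodup_reverse] using List.nodup_ofFn.mpr hM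

private lemma nodup_walk_true (hM : Function.Injective M) :
    ∀ (j : ℕ) (l : List V), walkDist k E x true (startDist M) j l ≠ 0 → l.Nodup := by
  intro j
  induction j with
  | zero =>
    intro l hl
    have hl0 : l = startList M := by
      by_contra h
      exact hl (by simp [walkDist, startDist, h])
    rw [hl0]
    exact startList_nodup hM
  | succ j ih =>
    intro l hl
    match l with
    | [] => simp [walkDist] at hl
    | v :: t =>
      simp only [walkDist] at hl
      have h1 := ih t (left_ne_zero_of_mul hl)
      have h2 : trp k E x true t v ≠ 0 := right_ne_zero_of_mul hl
      have hv : v ∉ t := by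
        intro hv
        apply h2
        unfold trp stepw
        simp [hv]
      exact List.nodup_cons.mpr ⟨hv, h1⟩

private lemma trp_mono (hx : ∀ e ∈ E, 0 < x e) {h : List V} {v : V} (hv : v ∉ h) :
    trp k E x false h v ≤ trp k E x true h v := by
  have hnum : stepw k E x true h v = stepw k E x false h v := by
    simp [stepw, hv]
  have hterm : ∀ w : V, stepw k E x true h w ≤ stepw k E x false h w := by
    intro w
    unfold stepw
    rw [if_neg (by simp : ¬(false = true ∧ w ∈ h))]
    split
    · exact xw_nonneg hx _
    · exact le_refl _
  have hden : (∑ w : V, stepw k E x true h w) ≤ ∑ w : V, stepw k E x false h w :=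
    Finset.sum_le_sum fun w _ => hterm w
  unfold trp
  rw [hnum]
  rcases eq_or_lt_of_le (Finset.sum_nonneg fun w _ => stepw_nonneg hx true h w) with h0 | h0
  · have ha : stepw k E x false h v = 0 := by
      have h1 : stepw k E x true h v ≤ 0 := by
        rw [h0]
        exact Finset.single_le_sum (fun w _ => stepw_nonneg hx true h w) (Finset.mem_univ v)
      have := stepw_nonneg (k := k) hx true h v
      rw [← hnum]
      linarith
    rw [ha, zero_div, zero_div]
  · gcongr
    exact stepw_nonneg hx false h v

private lemma walk_mono (hx : ∀ e ∈ E, 0 < x e) (hM : Function.Injective M) :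
    ∀ (j : ℕ) (l : List V), l.Nodup →
      walkDist k E x false (startDist M) j l ≤ walkDist k E x true (startDist M) j l := by
  intro j
  induction j with
  | zero => intro l _; exact le_refl _
  | succ j ih =>
    intro l hl
    match l with
    | [] => simp [walkDist]
    | v :: t =>
      simp only [walkDist]
      obtain ⟨hv, ht⟩ := List.nodup_cons.mp hl
      exact mul_le_mul (ih t ht) (trp_mono hx hv) (trp_nonneg hx false t v)
        (walkDist_nonneg hx true (startDist_nonneg M) j t)

private lemma take_toFinset_card {l : List V} (hnd : l.Nodup) (hlen : k - 1 ≤ l.length) :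
    ((l.take (k-1)).toFinset).card = k - 1 := by
  have h1 : (l.take (k-1)).Nodup := (List.take_sublist _ _).nodup hnd
  rw [List.toFinset_card_of_nodup h1, List.length_take]
  omega

private lemma exists_insert_edge (hE : ∀ e ∈ E, e.card = k) (hk : 2 ≤ k) {q : ℕ}
    (hqδ : ∀ S : Finset V, S.card = k - 1 → q ≤ (E.filter (fun e => S ⊆ e)).card)
    (hq1 : 1 ≤ q) {S : Finset V} (hS : S.card = k - 1) :
    ∃ v, v ∉ S ∧ insert v S ∈ E := by
  have h1 : 0 < (E.filter (fun e => S ⊆ e)).card := lt_of_lt_of_le hq1 (hqδ S hS)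
  obtain ⟨e, he⟩ := Finset.card_pos.mp h1
  rw [Finset.mem_filter] at he
  have hcarde : e.card = k := hE e he.1
  have hss : S ⊂ e := Finset.ssubset_iff_subset_ne.mpr ⟨he.2, by
    intro h; rw [h, hcarde] at hS; omega⟩
  obtain ⟨v, hve, hvS⟩ := Finset.exists_of_ssubset hss
  have heq : insert v S = e := Finset.eq_of_subset_of_card_le
    (Finset.insert_subset hve he.2)
    (by rw [Finset.card_insert_of_notMem hvS, hS]; omega)
  exact ⟨v, hvS, heq ▸ he.1⟩

private lemma sum_ofFn_cons (m : ℕ) (g : List V → ℝ) :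
    ∑ f : Fin (m+1) → V, g (List.ofFn f) = ∑ v : V, ∑ t : Fin m → V, g (v :: List.ofFn t) := by
  calc ∑ f : Fin (m+1) → V, g (List.ofFn f)
      = ∑ p : V × (Fin m → V), g (p.1 :: List.ofFn p.2) := by
        refine Fintype.sum_equiv (Fin.consEquiv fun _ => V).symm _ _ fun f => ?_
        have h : List.ofFn f = f 0 :: List.ofFn fun i => f i.succ := List.ofFn_succ
        rw [h]
        rfl
    _ = ∑ v : V, ∑ t : Fin m → V, g (v :: List.ofFn t) := Fintype.sum_prod_type _

private lemma sum_indicator_start (hM : Function.Injective M) (g : List V → ℝ) :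
    ∑ f : Fin (k-1) → V, (if List.ofFn f = startList M then g (List.ofFn f) else 0)
      = g (startList M) := by
  have hlen : (startList M).length = k - 1 := by simp [startList]
  obtain ⟨f0, hf0⟩ : ∃ f0 : Fin (k-1) → V, List.ofFn f0 = startList M :=
    ⟨_, (List.ofFn_congr hlen (startList M).get).symm.trans (List.ofFn_get _)⟩
  have hiff : ∀ f : Fin (k-1) → V, (List.ofFn f = startList M) ↔ f = f0 := by
    intro f
    rw [← hf0, List.ofFn_inj]
  calc ∑ f : Fin (k-1) → V, (if List.ofFn f = startList M then g (List.ofFn f) else 0)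
      = ∑ f : Fin (k-1) → V, (if f = f0 then g (startList M) else 0) := by
        refine Finset.sum_congr rfl fun f _ => ?_
        by_cases h : List.ofFn f = startList M
        · rw [if_pos h, if_pos ((hiff f).mp h), h]
        · rw [if_neg h, if_neg (fun h' => h ((hiff f).mpr h'))]
    _ = g (startList M) := by
        rw [Finset.sum_ite_eq' Finset.univ f0 (fun _ => g (startList M))]
        simp

private lemma sum_walk_succ (ν : List V → ℝ) (sa : Bool) (j m : ℕ) :
    ∑ f : Fin (m+1) → V, walkDist k E x sa ν (j+1) (List.ofFn f)
      = ∑ t : Fin m → V,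
          walkDist k E x sa ν j (List.ofFn t) * ∑ v : V, trp k E x sa (List.ofFn t) v := by
  rw [sum_ofFn_cons, Finset.sum_comm]
  simp [walkDist, Finset.mul_sum]

private lemma trp_false_window_eq (l : List V) (v : V) :
    trp k E x false l v
      = xw E x (insert v (l.take (k-1)).toFinset)
        / ∑ w : V, xw E x (insert w (l.take (k-1)).toFinset) := by
  unfold trp
  simp [stepw]

private lemma trp_false_le_r (hbal : UpperBalanced k E x r) (hr0 : 0 ≤ r)
    {l : List V} (hnd : l.Nodup) (hlen : k - 1 ≤ l.length) (v : V) :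
    trp k E x false l v ≤ r := by
  have hcard : ((l.take (k-1)).toFinset).card = k - 1 := take_toFinset_card hnd hlen
  rw [trp_false_window_eq]
  by_cases he : insert v (l.take (k-1)).toFinset ∈ E
  · rw [show xw E x (insert v (l.take (k-1)).toFinset) = x (insert v (l.take (k-1)).toFinset)
      from if_pos he]
    exact hbal _ hcard ⟨v, he⟩ v he
  · rw [show xw E x (insert v (l.take (k-1)).toFinset) = 0 from if_neg he, zero_div]
    exact hr0

private lemma denom_false_pos (hE : ∀ e ∈ E, e.card = k) (hk : 2 ≤ k)
    (hxpos : ∀ e ∈ E, 0 < x e) {q : ℕ}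
    (hqδ : ∀ S : Finset V, S.card = k - 1 → q ≤ (E.filter (fun e => S ⊆ e)).card)
    (hq1 : 1 ≤ q) {l : List V} (hnd : l.Nodup) (hlen : k - 1 ≤ l.length) :
    0 < ∑ w : V, stepw k E x false l w := by
  have hcard : ((l.take (k-1)).toFinset).card = k - 1 := take_toFinset_card hnd hlen
  obtain ⟨v, _, he⟩ := exists_insert_edge hE hk hqδ hq1 hcard
  have hv : 0 < stepw k E x false l v := by
    unfold stepw
    rw [if_neg (by simp : ¬(false = true ∧ v ∈ l))]
    unfold xw
    rw [if_pos he]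
    exact hxpos _ he
  exact lt_of_lt_of_le hv
    (Finset.single_le_sum (fun w _ => stepw_nonneg hxpos false l w) (Finset.mem_univ v))

private lemma sum_trp_false_one (hE : ∀ e ∈ E, e.card = k) (hk : 2 ≤ k)
    (hxpos : ∀ e ∈ E, 0 < x e) {q : ℕ}
    (hqδ : ∀ S : Finset V, S.card = k - 1 → q ≤ (E.filter (fun e => S ⊆ e)).card)
    (hq1 : 1 ≤ q) {l : List V} (hnd : l.Nodup) (hlen : k - 1 ≤ l.length) :
    ∑ v : V, trp k E x false l v = 1 :=
  sum_trp_eq_one (denom_false_pos hE hk hxpos hqδ hq1 hnd hlen)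

private lemma sum_mem_trp_le (hE : ∀ e ∈ E, e.card = k) (hk : 2 ≤ k)
    (hxpos : ∀ e ∈ E, 0 < x e) (hbal : UpperBalanced k E x r) (hr0 : 0 ≤ r)
    {l : List V} (hnd : l.Nodup) {j : ℕ} (hlen : l.length = k - 1 + j) :
    ∑ v : V, (if v ∈ l then trp k E x false l v else 0) ≤ (j : ℝ) * r := by
  have hlen' : k - 1 ≤ l.length := by omega
  set S : Finset V := (l.take (k-1)).toFinset with hSdef
  have hcardS : S.card = k - 1 := take_toFinset_card hnd hlen'
  have hSsubA : S ⊆ l.toFinset := by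
    intro v hv
    rw [List.mem_toFinset] at hv ⊢
    exact (List.take_sublist _ _).subset hv
  have hcardA : l.toFinset.card = k - 1 + j := by
    rw [List.toFinset_card_of_nodup hnd, hlen]
  have hstep1 : ∑ v : V, (if v ∈ l then trp k E x false l v else 0)
      = ∑ v ∈ l.toFinset, trp k E x false l v := by
    have hv : ∀ v : V, (if v ∈ l then trp k E x false l v else 0)
        = (if v ∈ l.toFinset then trp k E x false l v else 0) := fun v => by
      simp [List.mem_toFinset]
    rw [Finset.sum_congr rfl fun v _ => hv v, Finset.sum_ite_mem, Finset.univ_inter]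
  rw [hstep1, ← Finset.sum_sdiff hSsubA]
  have hzero : ∑ v ∈ S, trp k E x false l v = 0 := by
    refine Finset.sum_eq_zero fun v hv => ?_
    rw [trp_false_window_eq]
    have : insert v S = S := Finset.insert_eq_self.mpr hv
    rw [← hSdef, this, show xw E x S = 0 from if_neg ?_, zero_div]
    intro hSE
    have := hE S hSE
    omega
  have hbound : ∑ v ∈ l.toFinset \ S, trp k E x false l v ≤ (j : ℝ) * r := by
    calc ∑ v ∈ l.toFinset \ S, trp k E x false l v
        ≤ ∑ _v ∈ l.toFinset \ S, r :=
          Finset.sum_le_sum fun v _ => trp_false_le_r hbal hr0 hnd hlen' v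
      _ = ((l.toFinset \ S).card : ℝ) * r := by rw [Finset.sum_const, nsmul_eq_mul]
      _ = (j : ℝ) * r := by
          rw [Finset.card_sdiff_of_subset hSsubA, hcardA, hcardS]
          congr 2
          omega
  rw [hzero] at *
  linarith

private lemma exists_fresh (hE : ∀ e ∈ E, e.card = k) (hk : 2 ≤ k) {q : ℕ}
    (hqδ : ∀ S : Finset V, S.card = k - 1 → q ≤ (E.filter (fun e => S ⊆ e)).card)
    {l : List V} (hnd : l.Nodup) {j : ℕ} (hlen : l.length = k - 1 + j) (hj : j < q) :
    ∃ v, v ∉ l ∧ insert v (l.take (k-1)).toFinset ∈ E := by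
  set S : Finset V := (l.take (k-1)).toFinset with hSdef
  have hlen' : k - 1 ≤ l.length := by omega
  have hcardS : S.card = k - 1 := take_toFinset_card hnd hlen'
  set N : Finset V := Finset.univ.filter (fun v => v ∉ S ∧ insert v S ∈ E) with hNdef
  have himg : E.filter (fun e => S ⊆ e) ⊆ N.image (fun v => insert v S) := by
    intro e he
    rw [Finset.mem_filter] at he
    obtain ⟨heE, hSe⟩ := he
    have hcarde : e.card = k := hE e heE
    have hss : S ⊂ e := Finset.ssubset_iff_subset_ne.mpr ⟨hSe, by
      intro h; rw [h, hcarde] at hcardS; omega⟩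
    obtain ⟨v, hve, hvS⟩ := Finset.exists_of_ssubset hss
    have heq : insert v S = e := Finset.eq_of_subset_of_card_le
      (Finset.insert_subset hve hSe)
      (by rw [Finset.card_insert_of_notMem hvS, hcardS]; omega)
    exact Finset.mem_image.mpr
      ⟨v, Finset.mem_filter.mpr ⟨Finset.mem_univ v, hvS, heq ▸ heE⟩, heq⟩
  have hqN : q ≤ N.card :=
    le_trans (hqδ S hcardS) (le_trans (Finset.card_le_card himg) Finset.card_image_le)
  have hSsubA : S ⊆ l.toFinset := by
    intro v hv
    rw [List.mem_toFinset] at hv ⊢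
    exact (List.take_sublist _ _).subset hv
  have hcardA : l.toFinset.card = k - 1 + j := by
    rw [List.toFinset_card_of_nodup hnd, hlen]
  have hinter : N ∩ l.toFinset ⊆ l.toFinset \ S := by
    intro v hv
    rw [Finset.mem_inter] at hv
    rw [Finset.mem_sdiff]
    exact ⟨hv.2, (Finset.mem_filter.mp hv.1).2.1⟩
  have h1 : (N ∩ l.toFinset).card ≤ j := by
    calc (N ∩ l.toFinset).card ≤ (l.toFinset \ S).card := Finset.card_le_card hinter
      _ = j := by rw [Finset.card_sdiff_of_subset hSsubA, hcardA, hcardS]; omega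
  have h2 : 0 < (N \ l.toFinset).card := by
    have := Finset.card_inter_add_card_sdiff N l.toFinset
    omega
  obtain ⟨v, hv⟩ := Finset.card_pos.mp h2
  rw [Finset.mem_sdiff] at hv
  have hvN := Finset.mem_filter.mp hv.1
  refine ⟨v, ?_, hvN.2.2⟩
  rw [← List.mem_toFinset]
  exact hv.2

private lemma r_nonneg (hE : ∀ e ∈ E, e.card = k) (hk : 2 ≤ k)
    (hxpos : ∀ e ∈ E, 0 < x e) (hbal : UpperBalanced k E x r)
    (hM : Function.Injective M) {q : ℕ}
    (hqδ : ∀ S : Finset V, S.card = k - 1 → q ≤ (E.filter (fun e => S ⊆ e)).card)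
    (hq1 : 1 ≤ q) : 0 ≤ r := by
  have hS : ((List.ofFn M).toFinset).card = k - 1 := by
    rw [List.toFinset_card_of_nodup (List.nodup_ofFn.mpr hM), List.length_ofFn]
  obtain ⟨v, hvS, he⟩ := exists_insert_edge hE hk hqδ hq1 hS
  have hxe : 0 < x (insert v (List.ofFn M).toFinset) := hxpos _ he
  have hden : 0 < ∑ v' : V, xw E x (insert v' (List.ofFn M).toFinset) := by
    refine lt_of_lt_of_le ?_
      (Finset.single_le_sum (fun w _ => xw_nonneg hxpos _) (Finset.mem_univ v))
    unfold xw
    rw [if_pos he]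
    exact hxe
  exact le_trans (div_pos hxe hden).le (hbal _ hS ⟨v, he⟩ v he)

private lemma TS_eq_one (hE : ∀ e ∈ E, e.card = k) (hk : 2 ≤ k)
    (hxpos : ∀ e ∈ E, 0 < x e) (hM : Function.Injective M) {q : ℕ}
    (hqδ : ∀ S : Finset V, S.card = k - 1 → q ≤ (E.filter (fun e => S ⊆ e)).card) :
    ∀ j, j ≤ q →
      ∑ f : Fin (k-1+j) → V, walkDist k E x true (startDist M) j (List.ofFn f) = 1 := by
  intro j
  induction j with
  | zero =>
    intro _
    exact sum_indicator_start hM (fun _ => (1:ℝ))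
  | succ j ih =>
    intro hj
    have key : ∀ t : Fin (k-1+j) → V,
        walkDist k E x true (startDist M) j (List.ofFn t)
            * (∑ v : V, trp k E x true (List.ofFn t) v)
          = walkDist k E x true (startDist M) j (List.ofFn t) := by
      intro t
      by_cases h0 : walkDist k E x true (startDist M) j (List.ofFn t) = 0
      · rw [h0, zero_mul]
      · have hnd := nodup_walk_true hM j _ h0
        have hlen : (List.ofFn t).length = k - 1 + j := by simp
        obtain ⟨v, hvl, hve⟩ := exists_fresh hE hk hqδ hnd hlen (by omega)
        have hpos : 0 < ∑ w : V, stepw k E x true (List.ofFn t) w := by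
          refine lt_of_lt_of_le ?_
            (Finset.single_le_sum (fun w _ => stepw_nonneg hxpos true _ w) (Finset.mem_univ v))
          unfold stepw
          rw [if_neg (by simp [hvl])]
          unfold xw
          rw [if_pos hve]
          exact hxpos _ hve
        rw [sum_trp_eq_one hpos, mul_one]
    calc (∑ f : Fin (k-1+(j+1)) → V, walkDist k E x true (startDist M) (j+1) (List.ofFn f))
        = ∑ t : Fin (k-1+j) → V, walkDist k E x true (startDist M) j (List.ofFn t)
            * ∑ v : V, trp k E x true (List.ofFn t) v :=
          sum_walk_succ (startDist M) true j (k-1+j)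
      _ = ∑ t : Fin (k-1+j) → V, walkDist k E x true (startDist M) j (List.ofFn t) :=
          Finset.sum_congr rfl fun t _ => key t
      _ = 1 := ih (by omega)

private lemma AS_le_one (hxpos : ∀ e ∈ E, 0 < x e) (hM : Function.Injective M) :
    ∀ j, ∑ f : Fin (k-1+j) → V, walkDist k E x false (startDist M) j (List.ofFn f) ≤ 1 := by
  intro j
  induction j with
  | zero => exact le_of_eq (sum_indicator_start hM (fun _ => (1:ℝ)))
  | succ j ih =>
    calc (∑ f : Fin (k-1+(j+1)) → V, walkDist k E x false (startDist M) (j+1) (List.ofFn f))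
        = ∑ t : Fin (k-1+j) → V, walkDist k E x false (startDist M) j (List.ofFn t)
            * ∑ v : V, trp k E x false (List.ofFn t) v :=
          sum_walk_succ (startDist M) false j (k-1+j)
      _ ≤ ∑ t : Fin (k-1+j) → V, walkDist k E x false (startDist M) j (List.ofFn t) :=
          Finset.sum_le_sum fun t _ =>
            mul_le_of_le_one_right
              (walkDist_nonneg hxpos false (startDist_nonneg M) j _)
              (sum_trp_le_one hxpos false _)
      _ ≤ 1 := ih

private lemma NS_le_AS (hxpos : ∀ e ∈ E, 0 < x e) (hM : Function.Injective M) (j : ℕ) :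
    (∑ f : Fin (k-1+j) → V,
        (if (List.ofFn f).Nodup then walkDist k E x false (startDist M) j (List.ofFn f) else 0))
      ≤ ∑ f : Fin (k-1+j) → V, walkDist k E x false (startDist M) j (List.ofFn f) :=
  Finset.sum_le_sum fun f _ => by
    split
    · exact le_refl _
    · exact walkDist_nonneg hxpos false (startDist_nonneg M) j _

private lemma NS_ge (hE : ∀ e ∈ E, e.card = k) (hk : 2 ≤ k)
    (hxpos : ∀ e ∈ E, 0 < x e) (hbal : UpperBalanced k E x r) (hr0 : 0 ≤ r)
    (hM : Function.Injective M) {q : ℕ}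
    (hqδ : ∀ S : Finset V, S.card = k - 1 → q ≤ (E.filter (fun e => S ⊆ e)).card)
    (hq1 : 1 ≤ q) :
    ∀ j : ℕ, 1 - (j : ℝ) * (j : ℝ) * r
      ≤ ∑ f : Fin (k-1+j) → V,
          (if (List.ofFn f).Nodup then walkDist k E x false (startDist M) j (List.ofFn f) else 0) := by
  intro j
  induction j with
  | zero =>
    have heq : (∑ f : Fin (k-1+0) → V,
        (if (List.ofFn f).Nodup then walkDist k E x false (startDist M) 0 (List.ofFn f) else 0))
        = 1 := by
      have hpt : ∀ f : Fin (k-1) → V,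
          (if (List.ofFn f).Nodup then walkDist k E x false (startDist M) 0 (List.ofFn f) else 0)
            = (if List.ofFn f = startList M then (1:ℝ) else 0) := by
        intro f
        show (if (List.ofFn f).Nodup then startDist M (List.ofFn f) else 0)
          = (if List.ofFn f = startList M then (1:ℝ) else 0)
        by_cases heq : List.ofFn f = startList M
        · rw [if_pos heq, if_pos (heq ▸ startList_nodup hM)]
          unfold startDist
          rw [if_pos heq]
        · rw [if_neg heq]
          unfold startDist
          rw [if_neg heq, ite_self]
      calc (∑ f : Fin (k-1+0) → V,
          (if (List.ofFn f).Nodup then walkDist k E x false (startDist M) 0 (List.ofFn f) else 0))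
          = ∑ f : Fin (k-1) → V, (if List.ofFn f = startList M then (1:ℝ) else 0) :=
            Finset.sum_congr rfl fun f _ => hpt f
        _ = 1 := sum_indicator_start hM (fun _ => (1:ℝ))
    rw [heq]
    simp
  | succ j ih =>
    have e1 : (∑ f : Fin (k-1+j+1) → V,
          (if (List.ofFn f).Nodup then walkDist k E x false (startDist M) (j+1) (List.ofFn f) else 0))
        = ∑ t : Fin (k-1+j) → V, ∑ v : V,
            (if (v :: List.ofFn t).Nodup then
              walkDist k E x false (startDist M) j (List.ofFn t) * trp k E x false (List.ofFn t) v
             else 0) := by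
      have e0 := sum_ofFn_cons (V := V) (k-1+j)
        (fun l => if l.Nodup then walkDist k E x false (startDist M) (j+1) l else 0)
      rw [e0, Finset.sum_comm]
      simp only [walkDist]
    have inner : ∀ t : Fin (k-1+j) → V,
        (if (List.ofFn t).Nodup then walkDist k E x false (startDist M) j (List.ofFn t) else 0)
            * (1 - (j:ℝ)*r)
          ≤ ∑ v : V, (if (v :: List.ofFn t).Nodup then
              walkDist k E x false (startDist M) j (List.ofFn t) * trp k E x false (List.ofFn t) v
             else 0) := by
      intro t
      by_cases hnd : (List.ofFn t).Nodup
      · rw [if_pos hnd]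
        set l := List.ofFn t with hl
        set w := walkDist k E x false (startDist M) j l with hw
        have hlen : l.length = k - 1 + j := by simp [hl]
        have hlen' : k - 1 ≤ l.length := by omega
        have hterm : ∀ v : V, (if (v :: l).Nodup then w * trp k E x false l v else 0)
            = w * (trp k E x false l v - (if v ∈ l then trp k E x false l v else 0)) := by
          intro v
          by_cases hvl : v ∈ l
          · rw [if_neg (by simp [List.nodup_cons, hvl]), if_pos hvl]
            ring
          · rw [if_pos (List.nodup_cons.mpr ⟨hvl, hnd⟩), if_neg hvl]
            ring
        rw [Finset.sum_congr rfl fun v _ => hterm v, ← Finset.mul_sum,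
          Finset.sum_sub_distrib, sum_trp_false_one hE hk hxpos hqδ hq1 hnd hlen']
        have hwn : 0 ≤ w := walkDist_nonneg hxpos false (startDist_nonneg M) j l
        have hmem := sum_mem_trp_le hE hk hxpos hbal hr0 hnd hlen
        have h2 : (1 : ℝ) - (j:ℝ)*r
            ≤ 1 - ∑ v : V, (if v ∈ l then trp k E x false l v else 0) := by linarith
        exact mul_le_mul_of_nonneg_left h2 hwn
      · rw [if_neg hnd, zero_mul]
        refine Finset.sum_nonneg fun v _ => ?_
        rw [if_neg (fun hc => hnd (List.nodup_cons.mp hc).2)]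
    set NSj := (∑ f : Fin (k-1+j) → V,
        (if (List.ofFn f).Nodup then walkDist k E x false (startDist M) j (List.ofFn f) else 0))
      with hNSj
    have hNS1 : NSj ≤ 1 := le_trans (NS_le_AS hxpos hM j) (AS_le_one hxpos hM j)
    have hsum : NSj * (1 - (j:ℝ)*r)
        ≤ ∑ t : Fin (k-1+j) → V, ∑ v : V,
            (if (v :: List.ofFn t).Nodup then
              walkDist k E x false (startDist M) j (List.ofFn t) * trp k E x false (List.ofFn t) v
             else 0) := by
      rw [hNSj, Finset.sum_mul]
      exact Finset.sum_le_sum fun t _ => inner t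
    refine le_trans ?_ (le_of_eq e1.symm)
    have hjr : (0:ℝ) ≤ (j:ℝ)*r := mul_nonneg (Nat.cast_nonneg j) hr0
    have hmul : NSj * ((j:ℝ)*r) ≤ (j:ℝ)*r := by
      calc NSj * ((j:ℝ)*r) ≤ 1 * ((j:ℝ)*r) := mul_le_mul_of_nonneg_right hNS1 hjr
        _ = (j:ℝ)*r := one_mul _
    have hcast : ((j+1 : ℕ) : ℝ) = (j:ℝ) + 1 := by push_cast; ring
    have hjn : (0:ℝ) ≤ (j:ℝ) := Nat.cast_nonneg j
    calc 1 - ((j+1 : ℕ):ℝ) * ((j+1 : ℕ):ℝ) * r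
        ≤ 1 - (j:ℝ)*(j:ℝ)*r - (j:ℝ)*r := by rw [hcast]; nlinarith
      _ ≤ NSj - (j:ℝ)*r := by linarith
      _ ≤ NSj - NSj * ((j:ℝ)*r) := by linarith
      _ = NSj * (1 - (j:ℝ)*r) := by ring
      _ ≤ _ := hsum

end Aux

/-- Lemma 5.2: coupling the self-avoiding and the simple `x`-walk. If `x` is a positive
`r`-upper-balanced edge weighting of a `k`-graph `G` and `q ≤ δ(G)` is a positive
integer, then the total variation distance between the time-`q` positions `X_q` and
`Y_q` of the self-avoiding and the simple `x`-walk started at the same tuple `M` is at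
most `q² r`; total variation distance is expressed as the supremum over vertex sets
`T` of the difference of the probabilities of being in `T`. -/
theorem stmt_9 (k : ℕ) (hk : 2 ≤ k) (E : Finset (Finset V))
    (hE : ∀ e ∈ E, e.card = k)
    (x : Finset V → ℝ) (hxpos : ∀ e ∈ E, 0 < x e)
    (r : ℝ) (hbal : UpperBalanced k E x r)
    (M : Fin (k-1) → V) (hM : Function.Injective M)
    (q : ℕ) (hq1 : 1 ≤ q)
    (hqδ : ∀ S : Finset V, S.card = k - 1 → q ≤ (E.filter (fun e => S ⊆ e)).card) :
    ∀ T : Finset V,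
      |(∑ v ∈ T, headProb k E x true (startDist M) q v) -
       (∑ v ∈ T, headProb k E x false (startDist M) q v)| ≤ (q : ℝ)^2 * r := by
  intro T
  have hr0 : 0 ≤ r := r_nonneg hE hk hxpos hbal hM hqδ hq1
  have hsum_head : ∀ (l : List V) (w : ℝ),
      (∑ v ∈ T, if l.head? = some v then w else 0)
        = (if l.head? ∈ T.image some then w else 0) := by
    intro l w
    cases hl : l.head? with
    | none => simp
    | some u =>
      simp only [Option.some.injEq]
      rw [Finset.sum_ite_eq]
      by_cases hu : u ∈ T <;> simp [hu]
  have hP : ∀ sa : Bool, (∑ v ∈ T, headProb k E x sa (startDist M) q v)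
      = ∑ f : Fin (k-1+q) → V,
          (if (List.ofFn f).head? ∈ T.image some
            then walkDist k E x sa (startDist M) q (List.ofFn f) else 0) := by
    intro sa
    unfold headProb
    rw [Finset.sum_comm]
    exact Finset.sum_congr rfl fun f _ => hsum_head _ _
  rw [hP true, hP false]
  have hTS : (∑ f : Fin (k-1+q) → V,
      walkDist k E x true (startDist M) q (List.ofFn f)) = 1 :=
    TS_eq_one hE hk hxpos hM hqδ q le_rfl
  have hAS : (∑ f : Fin (k-1+q) → V,
      walkDist k E x false (startDist M) q (List.ofFn f)) ≤ 1 :=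
    AS_le_one hxpos hM q
  have hNS : 1 - (q : ℝ) * (q : ℝ) * r
      ≤ ∑ f : Fin (k-1+q) → V,
          (if (List.ofFn f).Nodup
            then walkDist k E x false (startDist M) q (List.ofFn f) else 0) :=
    NS_ge hE hk hxpos hbal hr0 hM hqδ hq1 q
  have hGle_t : ∀ f : Fin (k-1+q) → V,
      (if (List.ofFn f).Nodup
        then walkDist k E x false (startDist M) q (List.ofFn f) else 0)
        ≤ walkDist k E x true (startDist M) q (List.ofFn f) := by
    intro f
    split
    · exact walk_mono hxpos hM q _ ‹_›
    · exact walkDist_nonneg hxpos true (startDist_nonneg M) q _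
  have hGle_f : ∀ f : Fin (k-1+q) → V,
      (if (List.ofFn f).Nodup
        then walkDist k E x false (startDist M) q (List.ofFn f) else 0)
        ≤ walkDist k E x false (startDist M) q (List.ofFn f) := by
    intro f
    split
    · exact le_refl _
    · exact walkDist_nonneg hxpos false (startDist_nonneg M) q _
  have hG0 : ∀ f : Fin (k-1+q) → V,
      0 ≤ (if (List.ofFn f).Nodup
        then walkDist k E x false (startDist M) q (List.ofFn f) else 0) := by
    intro f
    split
    · exact walkDist_nonneg hxpos false (startDist_nonneg M) q _
    · exact le_refl _
  have hA : (∑ f : Fin (k-1+q) → V,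
        (if (List.ofFn f).head? ∈ T.image some
          then walkDist k E x true (startDist M) q (List.ofFn f) else 0))
      - (∑ f : Fin (k-1+q) → V,
        (if (List.ofFn f).head? ∈ T.image some
          then walkDist k E x false (startDist M) q (List.ofFn f) else 0))
      ≤ 1 - ∑ f : Fin (k-1+q) → V,
          (if (List.ofFn f).Nodup
            then walkDist k E x false (startDist M) q (List.ofFn f) else 0) := by
    have h1 : (∑ f : Fin (k-1+q) → V,
        (if (List.ofFn f).head? ∈ T.image some then (if (List.ofFn f).Nodup
          then walkDist k E x false (startDist M) q (List.ofFn f) else 0) else 0))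
        ≤ ∑ f : Fin (k-1+q) → V,
          (if (List.ofFn f).head? ∈ T.image some
            then walkDist k E x false (startDist M) q (List.ofFn f) else 0) := by
      refine Finset.sum_le_sum fun f _ => ?_
      by_cases hft : (List.ofFn f).head? ∈ T.image some
      · rw [if_pos hft, if_pos hft]
        exact hGle_f f
      · rw [if_neg hft, if_neg hft]
    have h2 : (∑ f : Fin (k-1+q) → V,
        (if (List.ofFn f).head? ∈ T.image some
          then walkDist k E x true (startDist M) q (List.ofFn f) else 0))
        - (∑ f : Fin (k-1+q) → V,
          (if (List.ofFn f).head? ∈ T.image some then (if (List.ofFn f).Nodup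
            then walkDist k E x false (startDist M) q (List.ofFn f) else 0) else 0))
        ≤ (∑ f : Fin (k-1+q) → V,
            walkDist k E x true (startDist M) q (List.ofFn f))
          - ∑ f : Fin (k-1+q) → V,
            (if (List.ofFn f).Nodup
              then walkDist k E x false (startDist M) q (List.ofFn f) else 0) := by
      rw [← Finset.sum_sub_distrib, ← Finset.sum_sub_distrib]
      refine Finset.sum_le_sum fun f _ => ?_
      by_cases hft : (List.ofFn f).head? ∈ T.image some
      · rw [if_pos hft, if_pos hft]
      · rw [if_neg hft, if_neg hft, sub_zero]
        have := hGle_t f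
        have := hG0 f
        have := walkDist_nonneg (k := k) hxpos true (startDist_nonneg M) q (List.ofFn f)
        linarith
    rw [hTS] at h2
    linarith
  have hB : (∑ f : Fin (k-1+q) → V,
        (if (List.ofFn f).head? ∈ T.image some
          then walkDist k E x false (startDist M) q (List.ofFn f) else 0))
      - (∑ f : Fin (k-1+q) → V,
        (if (List.ofFn f).head? ∈ T.image some
          then walkDist k E x true (startDist M) q (List.ofFn f) else 0))
      ≤ 1 - ∑ f : Fin (k-1+q) → V,
          (if (List.ofFn f).Nodup
            then walkDist k E x false (startDist M) q (List.ofFn f) else 0) := by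
    have h1 : (∑ f : Fin (k-1+q) → V,
        (if (List.ofFn f).head? ∈ T.image some then (if (List.ofFn f).Nodup
          then walkDist k E x false (startDist M) q (List.ofFn f) else 0) else 0))
        ≤ ∑ f : Fin (k-1+q) → V,
          (if (List.ofFn f).head? ∈ T.image some
            then walkDist k E x true (startDist M) q (List.ofFn f) else 0) := by
      refine Finset.sum_le_sum fun f _ => ?_
      by_cases hft : (List.ofFn f).head? ∈ T.image some
      · rw [if_pos hft, if_pos hft]
        exact hGle_t f
      · rw [if_neg hft, if_neg hft]
    have h2 : (∑ f : Fin (k-1+q) → V,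
        (if (List.ofFn f).head? ∈ T.image some
          then walkDist k E x false (startDist M) q (List.ofFn f) else 0))
        - (∑ f : Fin (k-1+q) → V,
          (if (List.ofFn f).head? ∈ T.image some then (if (List.ofFn f).Nodup
            then walkDist k E x false (startDist M) q (List.ofFn f) else 0) else 0))
        ≤ (∑ f : Fin (k-1+q) → V,
            walkDist k E x false (startDist M) q (List.ofFn f))
          - ∑ f : Fin (k-1+q) → V,
            (if (List.ofFn f).Nodup
              then walkDist k E x false (startDist M) q (List.ofFn f) else 0) := by
      rw [← Finset.sum_sub_distrib, ← Finset.sum_sub_distrib]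
      refine Finset.sum_le_sum fun f _ => ?_
      by_cases hft : (List.ofFn f).head? ∈ T.image some
      · rw [if_pos hft, if_pos hft]
      · rw [if_neg hft, if_neg hft, sub_zero]
        have := hGle_f f
        have := hG0 f
        have := walkDist_nonneg (k := k) hxpos false (startDist_nonneg M) q (List.ofFn f)
        linarith
    linarith
  have hfin : (1 : ℝ) - (∑ f : Fin (k-1+q) → V,
      (if (List.ofFn f).Nodup
        then walkDist k E x false (startDist M) q (List.ofFn f) else 0))
      ≤ (q : ℝ)^2 * r := by
    rw [pow_two]
    linarith
  rw [abs_sub_le_iff]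
  constructor
  · linarith
  · linarith
end
end

section
/- For every integer k ≥ 2 and every constant γ ∈ (0, 1/k] there exists n₀ ∈ ℕ such that for all n ≥ n₀ the following holds. Let G be an (n,k,γ)-graph and let x: E(G) → ℝ⁺ be any positive edge weighting. Define, for each ordered (k−1)-tuple M of distinct vertices, π(M) := (Σ_{v∈V} x(M ∪ {v})) / (Σ_B Σ_{v∈V} x(B ∪ {v})), where the outer sum in the denominator is over all ordered (k−1)-tuples B of distinct vertices and x(S) := 0 for non-edges S. Then π is the unique stationary distribution of the simple x-walk Markov chain on ordered (k−1)-tuples of G. -/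
open scoped Classical

noncomputable section

variable {V : Type*} [Fintype V] [DecidableEq V]

/-- One-step transition probability of the simple `x`-walk viewed as a Markov chain on
ordered `(k−1)`-tuples: from the tuple `S` the chain moves to the tuple obtained by
shifting `S` one place and appending a new vertex `v`, with probability
`x(S ∪ {v}) / Σ_w x(S ∪ {w})` (where `x` is zero on non-edges). -/
def chainP (k : ℕ) (E : Finset (Finset V)) (x : Finset V → ℝ)
    (S T : Fin (k-1) → V) : ℝ :=
  ∑ v : V,
    (if T = (fun i : Fin (k-1) =>
        if h : (i : ℕ) + 1 < k - 1 then S ⟨(i : ℕ) + 1, h⟩ else v) then (1 : ℝ) else 0) *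
      (xw E x (insert v (Finset.image S Finset.univ)) /
        ∑ w : V, xw E x (insert w (Finset.image S Finset.univ)))

/-- `π` is a stationary distribution of the simple `x`-walk Markov chain on ordered
`(k−1)`-tuples of distinct vertices: it is a probability distribution supported on
injective tuples and satisfies `π P = π`. -/
def IsStationaryDist (k : ℕ) (E : Finset (Finset V)) (x : Finset V → ℝ)
    (π : (Fin (k-1) → V) → ℝ) : Prop :=
  (∀ S, 0 ≤ π S) ∧ (∀ S, ¬ Function.Injective S → π S = 0) ∧
    (∑ S : Fin (k-1) → V, π S = 1) ∧
    (∀ T : Fin (k-1) → V, ∑ S : Fin (k-1) → V, π S * chainP k E x S T = π T)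

/-- The initial history distribution (histories most-recent-first) induced by a
distribution `μ` on ordered starting `(k−1)`-tuples. -/
def tupleInit (k : ℕ) (μ : (Fin (k-1) → V) → ℝ) : List V → ℝ :=
  fun l => ∑ S : Fin (k-1) → V, if l = (List.ofFn S).reverse then μ S else 0

/-- The explicit stationary distribution of Proposition 5.6:
`π(M) = (Σ_v x(M ∪ {v})) / (Σ_B Σ_v x(B ∪ {v}))`, the outer sum over all ordered
`(k−1)`-tuples `B` of distinct vertices (and `x` zero on non-edges). -/
def explicitPi (k : ℕ) {n : ℕ} (E : Finset (Finset (Fin n))) (x : Finset (Fin n) → ℝ)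
    (M : Fin (k-1) → Fin n) : ℝ :=
  (∑ v : Fin n, xw E x (insert v (Finset.image M Finset.univ))) /
    ∑ B : Fin (k-1) → Fin n,
      if Function.Injective B then
        ∑ v : Fin n, xw E x (insert v (Finset.image B Finset.univ))
      else 0

namespace Stmt13Aux

variable {n k : ℕ}

/-- The sum of weights of extensions of the tuple `S`. -/
def dS (k : ℕ) {n : ℕ} (E : Finset (Finset (Fin n))) (x : Finset (Fin n) → ℝ)
    (S : Fin (k-1) → Fin n) : ℝ :=
  ∑ w : Fin n, xw E x (insert w (Finset.image S Finset.univ))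

def shiftF (k : ℕ) {n : ℕ} (S : Fin (k-1) → Fin n) (v : Fin n) : Fin (k-1) → Fin n :=
  fun i : Fin (k-1) => if h : (i : ℕ) + 1 < k - 1 then S ⟨(i : ℕ) + 1, h⟩ else v

def prep (k : ℕ) {n : ℕ} (u : Fin n) (T : Fin (k-1) → Fin n) : Fin (k-1) → Fin n :=
  fun i => if (i : ℕ) = 0 then u else T ⟨(i : ℕ) - 1, lt_of_le_of_lt (Nat.sub_le _ _) i.isLt⟩

lemma prep_zero (hk : 2 ≤ k) (u : Fin n) (T : Fin (k-1) → Fin n) :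
    prep k u T ⟨0, by omega⟩ = u := by simp [prep]

lemma prep_succ (u : Fin n) (T : Fin (k-1) → Fin n) (i : ℕ) (h : i + 1 < k - 1) :
    prep k u T ⟨i + 1, h⟩ = T ⟨i, by omega⟩ := by
  simp only [prep]
  rw [if_neg (by omega)]
  congr 1

lemma prep_cond (hk : 2 ≤ k) (u : Fin n) (T : Fin (k-1) → Fin n) :
    ∀ (i : Fin (k-1)) (h : (i:ℕ)+1 < k-1), prep k u T ⟨(i:ℕ)+1, h⟩ = T i := by
  intro i h
  rw [prep_succ u T i h]

lemma insert_last_img_prep (hk : 2 ≤ k) (u : Fin n) (T : Fin (k-1) → Fin n) :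
    insert (T ⟨k-2, by omega⟩) (Finset.image (prep k u T) Finset.univ)
      = insert u (Finset.image T Finset.univ) := by
  ext z
  simp only [Finset.mem_insert, Finset.mem_image, Finset.mem_univ, true_and]
  constructor
  · rintro (rfl | ⟨i, hi⟩)
    · exact Or.inr ⟨⟨k-2, by omega⟩, rfl⟩
    · by_cases h0 : (i : ℕ) = 0
      · left; rw [← hi]; simp [prep, h0]
      · right
        refine ⟨⟨(i : ℕ) - 1, lt_of_le_of_lt (Nat.sub_le _ _) i.isLt⟩, ?_⟩
        rw [← hi]; simp only [prep, if_neg h0]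
  · rintro (rfl | ⟨i, rfl⟩)
    · exact Or.inr ⟨⟨0, by omega⟩, by simp [prep]⟩
    · by_cases hl : (i : ℕ) = k - 2
      · left; congr 1; exact Fin.ext hl
      · right
        have hlt : (i : ℕ) + 1 < k - 1 := by have := i.isLt; omega
        exact ⟨⟨(i : ℕ) + 1, hlt⟩, prep_succ u T i hlt ▸ (by congr 1)⟩

lemma eq_shift_iff (hk : 2 ≤ k) (S T : Fin (k-1) → Fin n) (v : Fin n) :
    T = shiftF k S v ↔
      ((∀ (i : Fin (k-1)) (h : (i:ℕ)+1 < k-1), S ⟨(i:ℕ)+1, h⟩ = T i) ∧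
        T ⟨k-2, by omega⟩ = v) := by
  constructor
  · rintro rfl
    refine ⟨fun i h => ?_, ?_⟩
    · simp only [shiftF, dif_pos h]
    · simp only [shiftF]
      rw [dif_neg (by omega : ¬(k-2+1 < k-1))]
  · rintro ⟨h1, h2⟩
    funext i
    by_cases h : (i : ℕ) + 1 < k - 1
    · rw [shiftF]; rw [dif_pos h]; exact (h1 i h).symm
    · rw [shiftF]; rw [dif_neg h]
      have hi : i = ⟨k-2, by omega⟩ := Fin.ext (show (i:ℕ) = k-2 by have := i.isLt; omega)
      rw [hi]; exact h2

lemma cond_to_prep (hk : 2 ≤ k) (S T : Fin (k-1) → Fin n)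
    (hc : ∀ (i : Fin (k-1)) (h : (i:ℕ)+1 < k-1), S ⟨(i:ℕ)+1, h⟩ = T i) :
    S = prep k (S ⟨0, by omega⟩) T := by
  funext i
  simp only [prep]
  by_cases h0 : (i : ℕ) = 0
  · rw [if_pos h0]; congr 1; exact Fin.ext h0
  · rw [if_neg h0]
    have hlt : ((i:ℕ) - 1) + 1 < k - 1 := by have := i.isLt; omega
    have := hc ⟨(i:ℕ)-1, lt_of_le_of_lt (Nat.sub_le _ _) i.isLt⟩ hlt
    rw [← this]; congr 1; exact Fin.ext (by simp; omega)


lemma chainP_eq (hk : 2 ≤ k) (E : Finset (Finset (Fin n))) (x : Finset (Fin n) → ℝ)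
    (S T : Fin (k-1) → Fin n) :
    chainP k E x S T =
      (if ∀ (i : Fin (k-1)) (h : (i:ℕ)+1 < k-1), S ⟨(i:ℕ)+1, h⟩ = T i then (1:ℝ) else 0) *
        (xw E x (insert (T ⟨k-2, by omega⟩) (Finset.image S Finset.univ)) /
          ∑ w : Fin n, xw E x (insert w (Finset.image S Finset.univ))) := by
  rw [chainP]
  have hrw : ∀ v : Fin n,
      (if T = (fun i : Fin (k-1) =>
          if h : (i : ℕ) + 1 < k - 1 then S ⟨(i : ℕ) + 1, h⟩ else v) then (1:ℝ) else 0) *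
        (xw E x (insert v (Finset.image S Finset.univ)) /
          ∑ w : Fin n, xw E x (insert w (Finset.image S Finset.univ)))
      = if v = T ⟨k-2, by omega⟩ then
          (if ∀ (i : Fin (k-1)) (h : (i:ℕ)+1 < k-1), S ⟨(i:ℕ)+1, h⟩ = T i then (1:ℝ) else 0) *
            (xw E x (insert (T ⟨k-2, by omega⟩) (Finset.image S Finset.univ)) /
              ∑ w : Fin n, xw E x (insert w (Finset.image S Finset.univ)))
        else 0 := by
    intro v
    have hsh : (fun i : Fin (k-1) =>
        if h : (i : ℕ) + 1 < k - 1 then S ⟨(i : ℕ) + 1, h⟩ else v) = shiftF k S v := rfl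
    rw [hsh]
    by_cases hv : v = T ⟨k-2, by omega⟩
    · rw [if_pos hv]
      by_cases hc : ∀ (i : Fin (k-1)) (h : (i:ℕ)+1 < k-1), S ⟨(i:ℕ)+1, h⟩ = T i
      · rw [if_pos hc, if_pos (((eq_shift_iff hk S T v).2 ⟨hc, hv.symm⟩)), ← hv]
      · rw [if_neg hc, if_neg, zero_mul, zero_mul]
        intro hT
        exact hc ((eq_shift_iff hk S T v).1 hT).1
    · rw [if_neg hv, if_neg, zero_mul]
      intro hT
      exact hv ((eq_shift_iff hk S T v).1 hT).2.symm
  rw [Finset.sum_congr rfl (fun v _ => hrw v)]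
  rw [Finset.sum_ite_eq' Finset.univ]
  rw [if_pos (Finset.mem_univ _)]

lemma key_sum (hk : 2 ≤ k) (E : Finset (Finset (Fin n))) (x : Finset (Fin n) → ℝ)
    (p : (Fin (k-1) → Fin n) → ℝ) (T : Fin (k-1) → Fin n) :
    ∑ S : Fin (k-1) → Fin n, p S * chainP k E x S T
      = ∑ u : Fin n, p (prep k u T) *
          (xw E x (insert u (Finset.image T Finset.univ)) / dS k E x (prep k u T)) := by
  have hinj : Function.Injective (fun u : Fin n => prep k u T) := by
    intro a b hab
    have := congrFun hab ⟨0, by omega⟩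
    simpa [prep] using this
  have hzero : ∀ S ∈ Finset.univ,
      S ∉ Finset.image (fun u : Fin n => prep k u T) Finset.univ →
      p S * chainP k E x S T = 0 := by
    intro S _ hS
    rw [chainP_eq hk, if_neg, zero_mul, mul_zero]
    intro hc
    exact hS (Finset.mem_image.2 ⟨S ⟨0, by omega⟩, Finset.mem_univ _,
      (cond_to_prep hk S T hc).symm⟩)
  rw [← Finset.sum_subset (Finset.subset_univ _) hzero, Finset.sum_image
    (fun a _ b _ hab => hinj hab)]
  refine Finset.sum_congr rfl (fun u _ => ?_)
  rw [chainP_eq hk, if_pos (prep_cond hk u T), one_mul,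
    insert_last_img_prep hk u T]
  rfl


lemma xw_nonneg (E : Finset (Finset (Fin n))) (x : Finset (Fin n) → ℝ)
    (hx : ∀ e ∈ E, 0 < x e) (e : Finset (Fin n)) : 0 ≤ xw E x e := by
  rw [xw]; split
  · exact (hx _ ‹_›).le
  · exact le_refl 0

lemma dS_nonneg (E : Finset (Finset (Fin n))) (x : Finset (Fin n) → ℝ)
    (hx : ∀ e ∈ E, 0 < x e) (S : Fin (k-1) → Fin n) : 0 ≤ dS k E x S :=
  Finset.sum_nonneg fun w _ => xw_nonneg E x hx _

lemma xw_zero_card (E : Finset (Finset (Fin n))) (x : Finset (Fin n) → ℝ)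
    (hcard : ∀ e ∈ E, e.card = k) (e : Finset (Fin n)) (he : e.card ≠ k) :
    xw E x e = 0 := by
  rw [xw]; split
  · exact absurd (hcard _ ‹_›) he
  · rfl

lemma img_card_of_inj {S : Fin (k-1) → Fin n} (hS : Function.Injective S) :
    (Finset.image S Finset.univ).card = k - 1 := by
  rw [Finset.card_image_of_injective _ hS, Finset.card_univ, Fintype.card_fin]

lemma img_card_lt_of_not_inj {S : Fin (k-1) → Fin n} (hS : ¬ Function.Injective S) :
    (Finset.image S Finset.univ).card < k - 1 := by
  have hle : (Finset.image S Finset.univ).card ≤ k - 1 := by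
    calc (Finset.image S Finset.univ).card ≤ Finset.univ.card := Finset.card_image_le
    _ = k - 1 := by rw [Finset.card_univ, Fintype.card_fin]
  rcases lt_or_eq_of_le hle with h | h
  · exact h
  · exfalso
    apply hS
    rw [← Set.injOn_univ, ← Finset.coe_univ]
    refine Finset.card_image_iff.1 ?_
    rw [h, Finset.card_univ, Fintype.card_fin]

lemma dS_zero_of_not_inj (hk : 2 ≤ k) (E : Finset (Finset (Fin n)))
    (x : Finset (Fin n) → ℝ) (hcard : ∀ e ∈ E, e.card = k)
    {S : Fin (k-1) → Fin n} (hS : ¬ Function.Injective S) : dS k E x S = 0 := by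
  refine Finset.sum_eq_zero fun w _ => ?_
  refine xw_zero_card E x hcard _ (Nat.ne_of_lt ?_)
  calc (insert w (Finset.image S Finset.univ)).card
      ≤ (Finset.image S Finset.univ).card + 1 := Finset.card_insert_le _ _
    _ < (k - 1) + 1 := by have := img_card_lt_of_not_inj (k := k) hS; omega
    _ ≤ k := by omega

lemma exists_extension (hk : 2 ≤ k) (E : Finset (Finset (Fin n))) (hcard : ∀ e ∈ E, e.card = k)
    {Q : Finset (Fin n)} (hQ : Q.card = k - 1) {e : Finset (Fin n)}
    (heE : e ∈ E) (hsub : Q ⊆ e) : ∃ v, v ∉ Q ∧ e = insert v Q := by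
  have hcard' : (e \ Q).card = 1 := by
    rw [Finset.card_sdiff_of_subset hsub, hcard e heE, hQ]
    omega
  obtain ⟨v, hv⟩ := Finset.card_eq_one.1 hcard'
  refine ⟨v, ?_, ?_⟩
  · have : v ∈ e \ Q := by rw [hv]; exact Finset.mem_singleton_self v
    exact (Finset.mem_sdiff.1 this).2
  · rw [Finset.insert_eq, Finset.union_comm, ← hv, Finset.union_sdiff_of_subset hsub]

lemma dS_pos (hk : 2 ≤ k) {γ : ℝ} (hγ0 : 0 < γ) (hn : 0 < n)
    (E : Finset (Finset (Fin n))) (x : Finset (Fin n) → ℝ)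
    (hcard : ∀ e ∈ E, e.card = k)
    (hdeg : ∀ S : Finset (Fin n), S.card = k - 1 →
      (1/2 + γ) * (n : ℝ) ≤ ((E.filter (fun e => S ⊆ e)).card : ℝ))
    (hx : ∀ e ∈ E, 0 < x e)
    {S : Fin (k-1) → Fin n} (hS : Function.Injective S) : 0 < dS k E x S := by
  set Q := Finset.image S Finset.univ with hQdef
  have hQ : Q.card = k - 1 := img_card_of_inj hS
  have hpos : (0:ℝ) < ((E.filter (fun e => Q ⊆ e)).card : ℝ) := by
    refine lt_of_lt_of_le ?_ (hdeg Q hQ)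
    have : (0:ℝ) < (n:ℝ) := by exact_mod_cast hn
    positivity
  have hne : (E.filter (fun e => Q ⊆ e)).Nonempty := by
    rw [← Finset.card_pos]
    exact_mod_cast hpos
  obtain ⟨e, he⟩ := hne
  rw [Finset.mem_filter] at he
  obtain ⟨v, hvQ, hv⟩ := exists_extension hk E hcard hQ he.1 he.2
  refine Finset.sum_pos' (fun w _ => xw_nonneg E x hx _) ⟨v, Finset.mem_univ v, ?_⟩
  rw [← hQdef, ← hv, xw, if_pos he.1]
  exact hx _ he.1

lemma deg_vertex (hk : 2 ≤ k) {γ : ℝ} (E : Finset (Finset (Fin n)))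
    (hcard : ∀ e ∈ E, e.card = k)
    (hdeg : ∀ S : Finset (Fin n), S.card = k - 1 →
      (1/2 + γ) * (n : ℝ) ≤ ((E.filter (fun e => S ⊆ e)).card : ℝ))
    {Q : Finset (Fin n)} (hQ : Q.card = k - 1) :
    (1/2 + γ) * (n : ℝ) ≤
      ((Finset.univ.filter (fun v : Fin n => insert v Q ∈ E)).card : ℝ) := by
  refine le_trans (hdeg Q hQ) ?_
  have : (E.filter (fun e => Q ⊆ e)).card ≤
      (Finset.univ.filter (fun v : Fin n => insert v Q ∈ E)).card := by
    refine Finset.card_le_card_of_surjOn (fun v => insert v Q) ?_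
    intro e he
    simp only [Finset.coe_filter, Set.mem_setOf_eq] at he ⊢
    obtain ⟨v, hvQ, hv⟩ := exists_extension hk E hcard hQ he.1 he.2
    exact ⟨v, ⟨Finset.mem_univ v, by rw [← hv]; exact he.1⟩, hv.symm⟩
  exact_mod_cast this


lemma common_vertex (hk : 2 ≤ k) {γ : ℝ} (hγ0 : 0 < γ)
    (E : Finset (Finset (Fin n))) (hcard : ∀ e ∈ E, e.card = k)
    (hdeg : ∀ S : Finset (Fin n), S.card = k - 1 →
      (1/2 + γ) * (n : ℝ) ≤ ((E.filter (fun e => S ⊆ e)).card : ℝ))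
    (hn2 : 2 * (k:ℝ) ≤ γ * n)
    {T1 T2 : Fin (k-1) → Fin n} (h1 : Function.Injective T1)
    (h2 : Function.Injective T2) :
    ∃ u : Fin n, u ∉ Finset.image T1 Finset.univ ∧ u ∉ Finset.image T2 Finset.univ ∧
      insert u (Finset.image T1 Finset.univ) ∈ E ∧
      insert u (Finset.image T2 Finset.univ) ∈ E := by
  set Q1 := Finset.image T1 Finset.univ with hQ1def
  set Q2 := Finset.image T2 Finset.univ with hQ2def
  set A := Finset.univ.filter (fun v : Fin n => insert v Q1 ∈ E) with hAdef
  set B := Finset.univ.filter (fun v : Fin n => insert v Q2 ∈ E) with hBdef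
  have hA : (1/2 + γ) * (n : ℝ) ≤ (A.card : ℝ) :=
    deg_vertex hk E hcard hdeg (img_card_of_inj h1)
  have hB : (1/2 + γ) * (n : ℝ) ≤ (B.card : ℝ) :=
    deg_vertex hk E hcard hdeg (img_card_of_inj h2)
  have hunion : ((A ∪ B).card : ℝ) ≤ (n : ℝ) := by
    have := Finset.card_le_univ (A ∪ B)
    have h' : (A ∪ B).card ≤ n := by simpa using this
    exact_mod_cast h'
  have hinter : 2 * γ * (n : ℝ) ≤ ((A ∩ B).card : ℝ) := by
    have hsum := Finset.card_union_add_card_inter A B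
    have hsum' : ((A ∪ B).card : ℝ) + ((A ∩ B).card : ℝ)
        = (A.card : ℝ) + (B.card : ℝ) := by exact_mod_cast congrArg Nat.cast hsum
    nlinarith
  have hU : ((Q1 ∪ Q2).card : ℝ) ≤ 2 * ((k:ℝ) - 1) := by
    have := Finset.card_union_le Q1 Q2
    have h1c := img_card_of_inj h1
    have h2c := img_card_of_inj h2
    rw [← hQ1def] at h1c
    rw [← hQ2def] at h2c
    have hk1 : (1:ℝ) ≤ (k:ℝ) := by exact_mod_cast (by omega : 1 ≤ k)
    have : (Q1 ∪ Q2).card ≤ (k-1) + (k-1) := by omega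
    have hcast : ((Q1 ∪ Q2).card : ℝ) ≤ ((k-1 : ℕ) : ℝ) + ((k-1 : ℕ) : ℝ) := by
      exact_mod_cast this
    have : ((k-1 : ℕ) : ℝ) = (k:ℝ) - 1 := by
      have : (1:ℕ) ≤ k := by omega
      push_cast [this]
      ring
    linarith [hcast, this]
  have hlt : (Q1 ∪ Q2).card < (A ∩ B).card := by
    have : ((Q1 ∪ Q2).card : ℝ) < ((A ∩ B).card : ℝ) := by nlinarith
    exact_mod_cast this
  have : ¬ (A ∩ B ⊆ Q1 ∪ Q2) := fun hsub => absurd (Finset.card_le_card hsub) (by omega)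
  obtain ⟨u, huAB, huU⟩ := Finset.not_subset.1 this
  rw [Finset.mem_inter, hAdef, hBdef, Finset.mem_filter, Finset.mem_filter] at huAB
  rw [Finset.mem_union] at huU
  push_neg at huU
  exact ⟨u, huU.1, huU.2, huAB.1.2, huAB.2.2⟩

/-- One step of the `x`-walk on tuples along an edge. -/
def StepR (k : ℕ) {n : ℕ} (E : Finset (Finset (Fin n)))
    (S T : Fin (k-1) → Fin n) : Prop :=
  ∃ v, insert v (Finset.image S Finset.univ) ∈ E ∧ T = shiftF k S v

lemma StepR_src_inj (hk : 2 ≤ k) {E : Finset (Finset (Fin n))}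
    (hcard : ∀ e ∈ E, e.card = k) {S T : Fin (k-1) → Fin n}
    (h : StepR k E S T) : Function.Injective S := by
  obtain ⟨v, he, -⟩ := h
  by_contra hS
  have h1 : (insert v (Finset.image S Finset.univ)).card < k := by
    calc (insert v (Finset.image S Finset.univ)).card
        ≤ (Finset.image S Finset.univ).card + 1 := Finset.card_insert_le _ _
      _ < (k-1) + 1 := by have := img_card_lt_of_not_inj (k := k) hS; omega
      _ ≤ k := by omega
  exact absurd (hcard _ he) (by omega)

lemma prep_injective (hk : 2 ≤ k) {u : Fin n} {T : Fin (k-1) → Fin n}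
    (hT : Function.Injective T) (hu : u ∉ Finset.image T Finset.univ) :
    Function.Injective (prep k u T) := by
  intro i j hij
  simp only [prep] at hij
  split_ifs at hij with hi hj hj
  · exact Fin.ext (by omega)
  · exact absurd (Finset.mem_image.2 ⟨_, Finset.mem_univ _, hij.symm⟩) hu
  · exact absurd (Finset.mem_image.2 ⟨_, Finset.mem_univ _, hij⟩) hu
  · have := hT hij
    have hval : (i:ℕ) - 1 = (j:ℕ) - 1 := congrArg Fin.val this
    exact Fin.ext (by omega)

lemma edge_not_mem (hk : 2 ≤ k) {E : Finset (Finset (Fin n))}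
    (hcard : ∀ e ∈ E, e.card = k) {u : Fin n} {T : Fin (k-1) → Fin n}
    (hT : Function.Injective T)
    (he : insert u (Finset.image T Finset.univ) ∈ E) :
    u ∉ Finset.image T Finset.univ := by
  intro hu
  have : (insert u (Finset.image T Finset.univ)).card = k - 1 := by
    rw [Finset.insert_eq_self.2 hu]
    exact img_card_of_inj hT
  have := hcard _ he
  omega

lemma step_prep (hk : 2 ≤ k) {E : Finset (Finset (Fin n))} {u : Fin n}
    {T : Fin (k-1) → Fin n} (he : insert u (Finset.image T Finset.univ) ∈ E) :
    StepR k E (prep k u T) T := by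
  refine ⟨T ⟨k-2, by omega⟩, ?_, ?_⟩
  · rw [insert_last_img_prep hk u T]; exact he
  · rw [eq_shift_iff hk]
    exact ⟨prep_cond hk u T, rfl⟩

lemma connect_aux (hk : 2 ≤ k) {γ : ℝ} (hγ0 : 0 < γ)
    (E : Finset (Finset (Fin n))) (hcard : ∀ e ∈ E, e.card = k)
    (hdeg : ∀ S : Finset (Fin n), S.card = k - 1 →
      (1/2 + γ) * (n : ℝ) ≤ ((E.filter (fun e => S ⊆ e)).card : ℝ))
    (hn2 : 2 * (k:ℝ) ≤ γ * n) :
    ∀ d : ℕ, ∀ T1 T2 : Fin (k-1) → Fin n, Function.Injective T1 →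
      Function.Injective T2 →
      (∀ i : Fin (k-1), (i:ℕ) + d < k - 1 → T1 i = T2 i) →
      ∃ S, Relation.ReflTransGen (StepR k E) S T1 ∧
        Relation.ReflTransGen (StepR k E) S T2 := by
  intro d
  induction d with
  | zero =>
    intro T1 T2 h1 h2 hagree
    have : T1 = T2 := funext fun i => hagree i (by simpa using i.isLt)
    exact ⟨T1, Relation.ReflTransGen.refl, this ▸ Relation.ReflTransGen.refl⟩
  | succ d ih =>
    intro T1 T2 h1 h2 hagree
    obtain ⟨u, hu1, hu2, he1, he2⟩ := common_vertex hk hγ0 E hcard hdeg hn2 h1 h2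
    have h1' : Function.Injective (prep k u T1) := prep_injective hk h1 hu1
    have h2' : Function.Injective (prep k u T2) := prep_injective hk h2 hu2
    have hagree' : ∀ i : Fin (k-1), (i:ℕ) + d < k - 1 →
        prep k u T1 i = prep k u T2 i := by
      intro i hi
      simp only [prep]
      by_cases h0 : (i:ℕ) = 0
      · rw [if_pos h0, if_pos h0]
      · rw [if_neg h0, if_neg h0]
        exact hagree _ (by simp only [Fin.val_mk]; omega)
    obtain ⟨S, hS1, hS2⟩ := ih (prep k u T1) (prep k u T2) h1' h2' hagree'
    exact ⟨S, hS1.tail (step_prep hk he1), hS2.tail (step_prep hk he2)⟩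


lemma max_step (hk : 2 ≤ k) {γ : ℝ} (hγ0 : 0 < γ) (hn : 0 < n)
    (E : Finset (Finset (Fin n))) (x : Finset (Fin n) → ℝ)
    (hcard : ∀ e ∈ E, e.card = k)
    (hdeg : ∀ S : Finset (Fin n), S.card = k - 1 →
      (1/2 + γ) * (n : ℝ) ≤ ((E.filter (fun e => S ⊆ e)).card : ℝ))
    (hx : ∀ e ∈ E, 0 < x e)
    (π' : (Fin (k-1) → Fin n) → ℝ)
    (hstat : ∀ T : Fin (k-1) → Fin n,
      ∑ S : Fin (k-1) → Fin n, π' S * chainP k E x S T = π' T)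
    (M : ℝ)
    (hM : ∀ T' : Fin (k-1) → Fin n, Function.Injective T' → π' T' / dS k E x T' ≤ M)
    {T : Fin (k-1) → Fin n} (hT : Function.Injective T)
    (hTM : π' T / dS k E x T = M)
    {u : Fin n} (hu : insert u (Finset.image T Finset.univ) ∈ E) :
    π' (prep k u T) / dS k E x (prep k u T) = M := by
  have hdT : 0 < dS k E x T := dS_pos hk hγ0 hn E x hcard hdeg hx hT
  have hkey : ∑ v : Fin n, π' (prep k v T) *
      (xw E x (insert v (Finset.image T Finset.univ)) / dS k E x (prep k v T))
      = π' T := by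
    rw [← key_sum hk E x π' T]; exact hstat T
  have hle : ∀ v ∈ Finset.univ, π' (prep k v T) *
      (xw E x (insert v (Finset.image T Finset.univ)) / dS k E x (prep k v T))
      ≤ M * xw E x (insert v (Finset.image T Finset.univ)) := by
    intro v _
    by_cases hA : insert v (Finset.image T Finset.univ) ∈ E
    · have hv : v ∉ Finset.image T Finset.univ := edge_not_mem hk hcard hT hA
      have hPinj : Function.Injective (prep k v T) := prep_injective hk hT hv
      have hdP : 0 < dS k E x (prep k v T) :=
        dS_pos hk hγ0 hn E x hcard hdeg hx hPinj
      have hxw : 0 ≤ xw E x (insert v (Finset.image T Finset.univ)) :=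
        xw_nonneg E x hx _
      calc π' (prep k v T) *
          (xw E x (insert v (Finset.image T Finset.univ)) / dS k E x (prep k v T))
          = (π' (prep k v T) / dS k E x (prep k v T)) *
            xw E x (insert v (Finset.image T Finset.univ)) := by ring
        _ ≤ M * xw E x (insert v (Finset.image T Finset.univ)) :=
            mul_le_mul_of_nonneg_right (hM _ hPinj) hxw
    · rw [xw, if_neg hA]
      simp
  have hsum2 : ∑ v : Fin n, M * xw E x (insert v (Finset.image T Finset.univ))
      = π' T := by
    rw [← Finset.mul_sum]
    have : ∑ v : Fin n, xw E x (insert v (Finset.image T Finset.univ))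
        = dS k E x T := rfl
    rw [this, ← hTM, div_mul_cancel₀ _ (ne_of_gt hdT)]
  have heq := (Finset.sum_eq_sum_iff_of_le hle).1 (hkey.trans hsum2.symm)
  have hequ := heq u (Finset.mem_univ u)
  have hv : u ∉ Finset.image T Finset.univ := edge_not_mem hk hcard hT hu
  have hPinj : Function.Injective (prep k u T) := prep_injective hk hT hv
  have hdP : 0 < dS k E x (prep k u T) :=
    dS_pos hk hγ0 hn E x hcard hdeg hx hPinj
  have hxwpos : 0 < xw E x (insert u (Finset.image T Finset.univ)) := by
    rw [xw, if_pos hu]; exact hx _ hu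
  have hequ' : (π' (prep k u T) / dS k E x (prep k u T)) *
      xw E x (insert u (Finset.image T Finset.univ))
      = M * xw E x (insert u (Finset.image T Finset.univ)) := by
    rw [← hequ]; ring
  exact mul_right_cancel₀ (ne_of_gt hxwpos) hequ'

lemma min_step (hk : 2 ≤ k) {γ : ℝ} (hγ0 : 0 < γ) (hn : 0 < n)
    (E : Finset (Finset (Fin n))) (x : Finset (Fin n) → ℝ)
    (hcard : ∀ e ∈ E, e.card = k)
    (hdeg : ∀ S : Finset (Fin n), S.card = k - 1 →
      (1/2 + γ) * (n : ℝ) ≤ ((E.filter (fun e => S ⊆ e)).card : ℝ))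
    (hx : ∀ e ∈ E, 0 < x e)
    (π' : (Fin (k-1) → Fin n) → ℝ)
    (hstat : ∀ T : Fin (k-1) → Fin n,
      ∑ S : Fin (k-1) → Fin n, π' S * chainP k E x S T = π' T)
    (M : ℝ)
    (hM : ∀ T' : Fin (k-1) → Fin n, Function.Injective T' → M ≤ π' T' / dS k E x T')
    {T : Fin (k-1) → Fin n} (hT : Function.Injective T)
    (hTM : π' T / dS k E x T = M)
    {u : Fin n} (hu : insert u (Finset.image T Finset.univ) ∈ E) :
    π' (prep k u T) / dS k E x (prep k u T) = M := by
  have hdT : 0 < dS k E x T := dS_pos hk hγ0 hn E x hcard hdeg hx hT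
  have hkey : ∑ v : Fin n, π' (prep k v T) *
      (xw E x (insert v (Finset.image T Finset.univ)) / dS k E x (prep k v T))
      = π' T := by
    rw [← key_sum hk E x π' T]; exact hstat T
  have hle : ∀ v ∈ Finset.univ, M * xw E x (insert v (Finset.image T Finset.univ))
      ≤ π' (prep k v T) *
        (xw E x (insert v (Finset.image T Finset.univ)) / dS k E x (prep k v T)) := by
    intro v _
    by_cases hA : insert v (Finset.image T Finset.univ) ∈ E
    · have hv : v ∉ Finset.image T Finset.univ := edge_not_mem hk hcard hT hA
      have hPinj : Function.Injective (prep k v T) := prep_injective hk hT hv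
      have hdP : 0 < dS k E x (prep k v T) :=
        dS_pos hk hγ0 hn E x hcard hdeg hx hPinj
      have hxw : 0 ≤ xw E x (insert v (Finset.image T Finset.univ)) :=
        xw_nonneg E x hx _
      calc M * xw E x (insert v (Finset.image T Finset.univ))
          ≤ (π' (prep k v T) / dS k E x (prep k v T)) *
            xw E x (insert v (Finset.image T Finset.univ)) :=
            mul_le_mul_of_nonneg_right (hM _ hPinj) hxw
        _ = π' (prep k v T) *
            (xw E x (insert v (Finset.image T Finset.univ)) / dS k E x (prep k v T)) := by
            ring
    · rw [xw, if_neg hA]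
      simp
  have hsum2 : ∑ v : Fin n, M * xw E x (insert v (Finset.image T Finset.univ))
      = π' T := by
    rw [← Finset.mul_sum]
    have : ∑ v : Fin n, xw E x (insert v (Finset.image T Finset.univ))
        = dS k E x T := rfl
    rw [this, ← hTM, div_mul_cancel₀ _ (ne_of_gt hdT)]
  have heq := (Finset.sum_eq_sum_iff_of_le hle).1 (hsum2.trans hkey.symm)
  have hequ := (heq u (Finset.mem_univ u)).symm
  have hv : u ∉ Finset.image T Finset.univ := edge_not_mem hk hcard hT hu
  have hPinj : Function.Injective (prep k u T) := prep_injective hk hT hv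
  have hxwpos : 0 < xw E x (insert u (Finset.image T Finset.univ)) := by
    rw [xw, if_pos hu]; exact hx _ hu
  have hequ' : (π' (prep k u T) / dS k E x (prep k u T)) *
      xw E x (insert u (Finset.image T Finset.univ))
      = M * xw E x (insert u (Finset.image T Finset.univ)) := by
    rw [← hequ]; ring
  exact mul_right_cancel₀ (ne_of_gt hxwpos) hequ'


lemma step_reconstruct (hk : 2 ≤ k) {E : Finset (Finset (Fin n))}
    {a c : Fin (k-1) → Fin n} (h : StepR k E a c) :
    prep k (a ⟨0, by omega⟩) c = a ∧
      insert (a ⟨0, by omega⟩) (Finset.image c Finset.univ) ∈ E := by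
  obtain ⟨v, he, hc⟩ := h
  have hprep : prep k (a ⟨0, by omega⟩) c = a := by
    funext i
    simp only [prep]
    by_cases h0 : (i:ℕ) = 0
    · rw [if_pos h0]; congr 1; exact Fin.ext h0.symm
    · rw [if_neg h0, hc]
      simp only [shiftF]
      have hlt : ((i:ℕ) - 1) + 1 < k - 1 := by have := i.isLt; omega
      rw [dif_pos hlt]
      congr 1; exact Fin.ext (by simp only [Fin.val_mk]; omega)
  refine ⟨hprep, ?_⟩
  have hlast : c ⟨k-2, by omega⟩ = v := by
    rw [hc]; simp only [shiftF]
    rw [dif_neg (by omega : ¬(k-2+1 < k-1))]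
  have := insert_last_img_prep hk (a ⟨0, by omega⟩) c
  rw [hprep, hlast] at this
  rw [← this]
  exact he

lemma reach_max (hk : 2 ≤ k) {γ : ℝ} (hγ0 : 0 < γ) (hn : 0 < n)
    (E : Finset (Finset (Fin n))) (x : Finset (Fin n) → ℝ)
    (hcard : ∀ e ∈ E, e.card = k)
    (hdeg : ∀ S : Finset (Fin n), S.card = k - 1 →
      (1/2 + γ) * (n : ℝ) ≤ ((E.filter (fun e => S ⊆ e)).card : ℝ))
    (hx : ∀ e ∈ E, 0 < x e)
    (π' : (Fin (k-1) → Fin n) → ℝ)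
    (hstat : ∀ T : Fin (k-1) → Fin n,
      ∑ S : Fin (k-1) → Fin n, π' S * chainP k E x S T = π' T)
    (M : ℝ)
    (hM : ∀ T' : Fin (k-1) → Fin n, Function.Injective T' → π' T' / dS k E x T' ≤ M)
    {S T : Fin (k-1) → Fin n} (hre : Relation.ReflTransGen (StepR k E) S T)
    (hT : Function.Injective T) (hTM : π' T / dS k E x T = M) :
    Function.Injective S ∧ π' S / dS k E x S = M := by
  induction hre using Relation.ReflTransGen.head_induction_on with
  | refl => exact ⟨hT, hTM⟩
  | head hstep hrest ih =>
    obtain ⟨hcinj, hcM⟩ := ih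
    rename_i a c
    have hainj : Function.Injective a := StepR_src_inj hk hcard hstep
    obtain ⟨hprep, hedge⟩ := step_reconstruct hk hstep
    have := max_step hk hγ0 hn E x hcard hdeg hx π' hstat M hM hcinj hcM hedge
    rw [hprep] at this
    exact ⟨hainj, this⟩

lemma reach_min (hk : 2 ≤ k) {γ : ℝ} (hγ0 : 0 < γ) (hn : 0 < n)
    (E : Finset (Finset (Fin n))) (x : Finset (Fin n) → ℝ)
    (hcard : ∀ e ∈ E, e.card = k)
    (hdeg : ∀ S : Finset (Fin n), S.card = k - 1 →
      (1/2 + γ) * (n : ℝ) ≤ ((E.filter (fun e => S ⊆ e)).card : ℝ))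
    (hx : ∀ e ∈ E, 0 < x e)
    (π' : (Fin (k-1) → Fin n) → ℝ)
    (hstat : ∀ T : Fin (k-1) → Fin n,
      ∑ S : Fin (k-1) → Fin n, π' S * chainP k E x S T = π' T)
    (M : ℝ)
    (hM : ∀ T' : Fin (k-1) → Fin n, Function.Injective T' → M ≤ π' T' / dS k E x T')
    {S T : Fin (k-1) → Fin n} (hre : Relation.ReflTransGen (StepR k E) S T)
    (hT : Function.Injective T) (hTM : π' T / dS k E x T = M) :
    Function.Injective S ∧ π' S / dS k E x S = M := by
  induction hre using Relation.ReflTransGen.head_induction_on with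
  | refl => exact ⟨hT, hTM⟩
  | head hstep hrest ih =>
    obtain ⟨hcinj, hcM⟩ := ih
    rename_i a c
    have hainj : Function.Injective a := StepR_src_inj hk hcard hstep
    obtain ⟨hprep, hedge⟩ := step_reconstruct hk hstep
    have := min_step hk hγ0 hn E x hcard hdeg hx π' hstat M hM hcinj hcM hedge
    rw [hprep] at this
    exact ⟨hainj, this⟩

end Stmt13Aux

/-- Proposition 5.6: for an `(n,k,γ)`-graph `G` (with `0 < γ ≤ 1/k` and `n` large) and
any positive edge weighting `x`, the distribution `explicitPi` is the unique stationary
distribution of the simple `x`-walk Markov chain on ordered `(k−1)`-tuples. -/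
theorem stmt_13 (k : ℕ) (hk : 2 ≤ k) (γ : ℝ) (hγ0 : 0 < γ) (hγk : γ ≤ 1 / (k : ℝ)) :
    ∃ n₀ : ℕ, ∀ n : ℕ, n₀ ≤ n →
    ∀ E : Finset (Finset (Fin n)),
      (∀ e ∈ E, e.card = k) →
      (∀ S : Finset (Fin n), S.card = k - 1 →
        (1/2 + γ) * (n : ℝ) ≤ ((E.filter (fun e => S ⊆ e)).card : ℝ)) →
    ∀ x : Finset (Fin n) → ℝ, (∀ e ∈ E, 0 < x e) →
      IsStationaryDist k E x (explicitPi k E x) ∧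
      ∀ π' : (Fin (k-1) → Fin n) → ℝ,
        IsStationaryDist k E x π' → π' = explicitPi k E x := by
  classical
  refine ⟨k + Nat.ceil ((2*(k:ℝ))/γ), fun n hn E hcard hdeg x hx => ?_⟩
  have hnk : k ≤ n := le_trans (Nat.le_add_right _ _) hn
  have hn0 : 0 < n := by omega
  have hn2 : 2 * (k:ℝ) ≤ γ * n := by
    have h1 : ((2*(k:ℝ))/γ) ≤ (Nat.ceil ((2*(k:ℝ))/γ) : ℝ) := Nat.le_ceil _
    have h2 : (Nat.ceil ((2*(k:ℝ))/γ) : ℝ) ≤ (n:ℝ) := by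
      have : Nat.ceil ((2*(k:ℝ))/γ) ≤ n := by omega
      exact_mod_cast this
    have h3 := le_trans h1 h2
    rw [div_le_iff₀ hγ0] at h3
    linarith
  open Stmt13Aux in
  set D := ∑ B : Fin (k-1) → Fin n,
      if Function.Injective B then Stmt13Aux.dS k E x B else 0 with hDdef
  have hpi : ∀ M, explicitPi k E x M = Stmt13Aux.dS k E x M / D := fun M => rfl
  have hB0inj : Function.Injective
      (fun i : Fin (k-1) => (⟨(i:ℕ), by have := i.isLt; omega⟩ : Fin n)) := by
    intro a b hab
    simpa [Fin.ext_iff] using hab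
  have hD : 0 < D := by
    rw [hDdef]
    refine Finset.sum_pos' (fun B _ => ?_) ?_
    · split
      · exact Stmt13Aux.dS_nonneg E x hx B
      · exact le_refl 0
    · refine ⟨_, Finset.mem_univ (fun i : Fin (k-1) =>
        (⟨(i:ℕ), by have := i.isLt; omega⟩ : Fin n)), ?_⟩
      rw [if_pos hB0inj]
      exact Stmt13Aux.dS_pos hk hγ0 hn0 E x hcard hdeg hx hB0inj
  have hsumD : ∑ S : Fin (k-1) → Fin n, Stmt13Aux.dS k E x S = D := by
    rw [hDdef]
    refine Finset.sum_congr rfl (fun S _ => ?_)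
    by_cases hS : Function.Injective S
    · rw [if_pos hS]
    · rw [if_neg hS, Stmt13Aux.dS_zero_of_not_inj hk E x hcard hS]
  have hstat : IsStationaryDist k E x (explicitPi k E x) := by
    refine ⟨fun S => ?_, fun S hS => ?_, ?_, fun T => ?_⟩
    · rw [hpi S]
      exact div_nonneg (Stmt13Aux.dS_nonneg E x hx S) hD.le
    · rw [hpi S, Stmt13Aux.dS_zero_of_not_inj hk E x hcard hS, zero_div]
    · calc ∑ S : Fin (k-1) → Fin n, explicitPi k E x S
          = (∑ S : Fin (k-1) → Fin n, Stmt13Aux.dS k E x S) / D := by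
            rw [Finset.sum_div]
            exact Finset.sum_congr rfl (fun S _ => hpi S)
        _ = 1 := by rw [hsumD]; exact div_self hD.ne'
    · rw [Stmt13Aux.key_sum hk E x (explicitPi k E x) T]
      have hterm : ∀ u ∈ Finset.univ, explicitPi k E x (Stmt13Aux.prep k u T) *
          (xw E x (insert u (Finset.image T Finset.univ)) /
            Stmt13Aux.dS k E x (Stmt13Aux.prep k u T))
          = xw E x (insert u (Finset.image T Finset.univ)) / D := by
        intro u _
        rw [hpi]
        by_cases hP : Stmt13Aux.dS k E x (Stmt13Aux.prep k u T) = 0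
        · have hxw0 : xw E x (insert u (Finset.image T Finset.univ)) = 0 := by
            have hterm := (Finset.sum_eq_zero_iff_of_nonneg
              (fun w _ => Stmt13Aux.xw_nonneg E x hx _)).1 hP
              (T ⟨k-2, by omega⟩) (Finset.mem_univ _)
            rwa [Stmt13Aux.insert_last_img_prep hk u T] at hterm
          rw [hP, hxw0]
          simp
        · have hrw : Stmt13Aux.dS k E x (Stmt13Aux.prep k u T) / D *
              (xw E x (insert u (Finset.image T Finset.univ)) /
                Stmt13Aux.dS k E x (Stmt13Aux.prep k u T))
              = (xw E x (insert u (Finset.image T Finset.univ)) / D) *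
                (Stmt13Aux.dS k E x (Stmt13Aux.prep k u T) /
                  Stmt13Aux.dS k E x (Stmt13Aux.prep k u T)) := by ring
          rw [hrw, div_self hP, mul_one]
      rw [Finset.sum_congr rfl hterm, ← Finset.sum_div, hpi T]
      rfl
  refine ⟨hstat, fun π' hπ' => ?_⟩
  obtain ⟨h0, h1, h2, h3⟩ := hπ'
  have hInjNe : (Finset.univ.filter
      (fun S : Fin (k-1) → Fin n => Function.Injective S)).Nonempty :=
    ⟨_, Finset.mem_filter.2 ⟨Finset.mem_univ (fun i : Fin (k-1) =>
      (⟨(i:ℕ), by have := i.isLt; omega⟩ : Fin n)), hB0inj⟩⟩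
  obtain ⟨T₀, hT₀mem, hT₀max⟩ := Finset.exists_max_image _
    (fun S => π' S / Stmt13Aux.dS k E x S) hInjNe
  obtain ⟨T₁, hT₁mem, hT₁min⟩ := Finset.exists_min_image _
    (fun S => π' S / Stmt13Aux.dS k E x S) hInjNe
  have hT₀inj : Function.Injective T₀ := (Finset.mem_filter.1 hT₀mem).2
  have hT₁inj : Function.Injective T₁ := (Finset.mem_filter.1 hT₁mem).2
  have hMle : ∀ T' : Fin (k-1) → Fin n, Function.Injective T' →
      π' T' / Stmt13Aux.dS k E x T' ≤ π' T₀ / Stmt13Aux.dS k E x T₀ :=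
    fun T' h => hT₀max T' (Finset.mem_filter.2 ⟨Finset.mem_univ _, h⟩)
  have hmge : ∀ T' : Fin (k-1) → Fin n, Function.Injective T' →
      π' T₁ / Stmt13Aux.dS k E x T₁ ≤ π' T' / Stmt13Aux.dS k E x T' :=
    fun T' h => hT₁min T' (Finset.mem_filter.2 ⟨Finset.mem_univ _, h⟩)
  obtain ⟨S, hS0, hS1⟩ := Stmt13Aux.connect_aux hk hγ0 E hcard hdeg hn2 (k-1)
    T₀ T₁ hT₀inj hT₁inj (fun i hi => absurd hi (by have := i.isLt; omega))
  have hmax := Stmt13Aux.reach_max hk hγ0 hn0 E x hcard hdeg hx π' h3 _ hMle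
    hS0 hT₀inj rfl
  have hmin := Stmt13Aux.reach_min hk hγ0 hn0 E x hcard hdeg hx π' h3 _ hmge
    hS1 hT₁inj rfl
  have hMm : π' T₀ / Stmt13Aux.dS k E x T₀ = π' T₁ / Stmt13Aux.dS k E x T₁ := by
    rw [← hmax.2, ← hmin.2]
  set c := π' T₀ / Stmt13Aux.dS k E x T₀ with hcdef
  have hconst : ∀ T' : Fin (k-1) → Fin n, Function.Injective T' →
      π' T' / Stmt13Aux.dS k E x T' = c := by
    intro T' h
    exact le_antisymm (hMle T' h) (hMm.trans_le (hmge T' h))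
  have hval : ∀ T' : Fin (k-1) → Fin n, Function.Injective T' →
      π' T' = c * Stmt13Aux.dS k E x T' := by
    intro T' h
    have hdT' : Stmt13Aux.dS k E x T' ≠ 0 :=
      (Stmt13Aux.dS_pos hk hγ0 hn0 E x hcard hdeg hx h).ne'
    have := hconst T' h
    rw [div_eq_iff hdT'] at this
    linarith [this]
  have hcD : c * D = 1 := by
    have : ∑ T : Fin (k-1) → Fin n, π' T
        = ∑ T : Fin (k-1) → Fin n,
          (if Function.Injective T then c * Stmt13Aux.dS k E x T else 0) := by
      refine Finset.sum_congr rfl (fun T _ => ?_)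
      by_cases hT : Function.Injective T
      · rw [if_pos hT]; exact hval T hT
      · rw [if_neg hT]; exact h1 T hT
    rw [h2] at this
    rw [hDdef, Finset.mul_sum]
    rw [this]
    refine Finset.sum_congr rfl (fun T _ => ?_)
    by_cases hT : Function.Injective T
    · rw [if_pos hT, if_pos hT]
    · rw [if_neg hT, if_neg hT, mul_zero]
  have hc : c = 1 / D := by
    rw [eq_div_iff hD.ne']
    exact hcD
  funext T
  by_cases hT : Function.Injective T
  · rw [hval T hT, hpi T, hc]
    ring
  · rw [h1 T hT, hpi T, Stmt13Aux.dS_zero_of_not_inj hk E x hcard hT, zero_div]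
end
end
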